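/- arXiv:1603.03109 — 5 statements merged into one kernel-verified Lean document; each statement's English description precedes it below -/
import Mathlib

section
/- Every component of the subgraph of G induced by D(G) is factor-critical, where D(G) is the set of vertices missed by at least one maximum matching of G. -/
open Polynomial SimpleGraph

open scoped Classical in
/-- The permanental polynomial `per(xI - A(G))` of a graph. -/
noncomputable def permPoly {V : Type*} [Fintype V] (G : SimpleGraph V) : Polynomial ℤ :=
  Matrix.permanent
    ((Polynomial.X : ℤ[X]) • (1 : Matrix V V ℤ[X]) -
      Matrix.of fun i j => if G.Adj i j then (1 : ℤ[X]) else 0)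

/-- The permanental nullity: multiplicity of 0 as a root of the permanental polynomial. -/
noncomputable def perNullity {V : Type*} [Fintype V] (G : SimpleGraph V) : ℕ :=
  (permPoly G).rootMultiplicity 0

/-- Degree of a vertex in a subgraph. -/
noncomputable def subDeg {V : Type*} {G : SimpleGraph V} (H : G.Subgraph) (v : V) : ℕ :=
  (H.neighborSet v).ncard

/-- A Sachs subgraph: every component is a single edge or a cycle. -/
def IsSachs {V : Type*} {G : SimpleGraph V} (H : G.Subgraph) : Prop :=
  (∀ v ∈ H.verts, subDeg H v = 1 ∨ subDeg H v = 2) ∧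
    ∀ u v, H.Adj u v → subDeg H u = 1 → subDeg H v ≠ 2

/-- Number of cycle components of a Sachs subgraph. -/
noncomputable def cyclesCount {V : Type*} {G : SimpleGraph V} (H : G.Subgraph) : ℕ :=
  H.edgeSet.ncard + Nat.card H.coe.ConnectedComponent - H.verts.ncard

/-- Matching number. -/
noncomputable def matchingNumber {V : Type*} [Fintype V] (G : SimpleGraph V) : ℕ :=
  sSup {n | ∃ M : G.Subgraph, M.IsMatching ∧ M.edgeSet.ncard = n}

/-- A maximum matching. -/
def IsMaximumMatching {V : Type*} {G : SimpleGraph V} (M : G.Subgraph) : Prop :=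
  M.IsMatching ∧ ∀ N : G.Subgraph, N.IsMatching → N.edgeSet.ncard ≤ M.edgeSet.ncard

/-- `D(G)`: vertices missed by at least one maximum matching. -/
def DSet {V : Type*} (G : SimpleGraph V) : Set V :=
  {v | ∃ M : G.Subgraph, IsMaximumMatching M ∧ v ∉ M.verts}

/-- `B(G)`: vertices outside `D(G)` adjacent to `D(G)`. -/
def BSet {V : Type*} (G : SimpleGraph V) : Set V :=
  {v | v ∉ DSet G ∧ ∃ u ∈ DSet G, G.Adj v u}

/-- `C(G)`. -/
def CSet {V : Type*} (G : SimpleGraph V) : Set V :=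
  (DSet G ∪ BSet G)ᶜ

/-- Factor-critical graph. -/
def IsFactorCritical {W : Type*} (H : SimpleGraph W) : Prop :=
  ∀ v : W, ∃ M : (H.induce ({v}ᶜ : Set W)).Subgraph, M.IsPerfectMatching


namespace GEProof

variable {V : Type*} {G : SimpleGraph V}

lemma mem_verts_iff {M : G.Subgraph} (hM : M.IsMatching) {v : V} :
    v ∈ M.verts ↔ ∃ w, M.Adj v w := by
  rw [← hM.support_eq_verts, Subgraph.mem_support]

lemma matching_unique {M : G.Subgraph} (hM : M.IsMatching) {a b c : V}
    (h1 : M.Adj a b) (h2 : M.Adj a c) : b = c := by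
  obtain ⟨w, -, hw⟩ := hM (M.edge_vert h1)
  rw [hw b h1, hw c h2]

lemma deletePair_matching {M : G.Subgraph} (hM : M.IsMatching) {a b : V}
    (hab : M.Adj a b) : (M.deleteVerts {a, b}).IsMatching := by
  intro v hv
  rw [Subgraph.deleteVerts_verts, Set.mem_diff] at hv
  obtain ⟨hv1, hv2⟩ := hv
  obtain ⟨w, hw, hwu⟩ := hM hv1
  refine ⟨w, ?_, ?_⟩
  · show (M.deleteVerts {a,b}).Adj v w
    rw [Subgraph.deleteVerts_adj]
    refine ⟨hv1, hv2, M.edge_vert hw.symm, ?_, hw⟩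
    intro hmem
    rcases hmem with rfl | rfl
    · exact hv2 (by simp [matching_unique hM hw.symm hab])
    · exact hv2 (by simp [matching_unique hM hw.symm hab.symm])
  · intro y hy
    have hy' : (M.deleteVerts {a,b}).Adj v y := hy
    rw [Subgraph.deleteVerts_adj] at hy'
    exact hwu y hy'.2.2.2.2

lemma deletePair_verts {M : G.Subgraph} {a b : V} :
    (M.deleteVerts {a, b}).verts = M.verts \ {a, b} :=
  Subgraph.deleteVerts_verts

lemma deletePair_edgeSet {M : G.Subgraph} (hM : M.IsMatching) {a b : V}
    (hab : M.Adj a b) :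
    (M.deleteVerts {a, b}).edgeSet = M.edgeSet \ {s(a, b)} := by
  ext e
  refine e.ind (fun x y => ?_)
  simp only [Subgraph.mem_edgeSet, Subgraph.deleteVerts_adj, Set.mem_diff,
    Set.mem_singleton_iff, Sym2.eq_iff, Set.mem_insert_iff, Set.mem_singleton_iff]
  constructor
  · rintro ⟨hx, hxs, hy, hys, hadj⟩
    refine ⟨hadj, ?_⟩
    rintro (⟨rfl, rfl⟩ | ⟨rfl, rfl⟩)
    · exact hxs (Or.inl rfl)
    · exact hys (Or.inl rfl)
  · rintro ⟨hadj, hne⟩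
    have key : ∀ u w, M.Adj u w → ¬(u = a ∧ w = b ∨ u = b ∧ w = a) → u ≠ a ∧ u ≠ b := by
      intro u w huw hne'
      constructor
      · rintro rfl
        exact hne' (Or.inl ⟨rfl, matching_unique hM huw hab⟩)
      · rintro rfl
        exact hne' (Or.inr ⟨rfl, matching_unique hM huw hab.symm⟩)
    have hx := key x y hadj hne
    have hy := key y x hadj.symm (fun h => hne (by tauto))
    exact ⟨M.edge_vert hadj, by simp [hx.1, hx.2], M.edge_vert hadj.symm,
      by simp [hy.1, hy.2], hadj⟩

lemma supEdge_matching {M : G.Subgraph} (hM : M.IsMatching) {a b : V}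
    (h : G.Adj a b) (ha : a ∉ M.verts) (hb : b ∉ M.verts) :
    (M ⊔ G.subgraphOfAdj h).IsMatching := by
  refine hM.sup (SimpleGraph.Subgraph.IsMatching.subgraphOfAdj h) ?_
  rw [hM.support_eq_verts, SimpleGraph.support_subgraphOfAdj]
  rw [Set.disjoint_iff]
  rintro x ⟨hx1, hx2⟩
  rcases hx2 with rfl | rfl
  · exact ha hx1
  · exact hb hx1

lemma supEdge_verts {M : G.Subgraph} {a b : V} (h : G.Adj a b) :
    (M ⊔ G.subgraphOfAdj h).verts = M.verts ∪ {a, b} := by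
  rw [Subgraph.verts_sup]; rfl

lemma supEdge_edgeSet {M : G.Subgraph} {a b : V} (h : G.Adj a b) :
    (M ⊔ G.subgraphOfAdj h).edgeSet = M.edgeSet ∪ {s(a, b)} := by
  rw [Subgraph.edgeSet_sup, SimpleGraph.edgeSet_subgraphOfAdj]

lemma matching_edge_of_mem {M : G.Subgraph} (hM : M.IsMatching) {a b : V} {e : Sym2 V}
    (he : e ∈ M.edgeSet) (hab : M.Adj a b) (hae : a ∈ e) : e = s(a, b) := by
  induction e with
  | _ x y =>
    rw [Subgraph.mem_edgeSet] at he
    rw [Sym2.mem_iff] at hae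
    rw [Sym2.eq_iff]
    rcases hae with rfl | rfl
    · exact Or.inl ⟨rfl, matching_unique hM he hab⟩
    · exact Or.inr ⟨matching_unique hM he.symm hab, rfl⟩

lemma verts_nonempty_edge {M : G.Subgraph} (hM : M.IsMatching) {v : V}
    (hv : v ∈ M.verts) : M.edgeSet.Nonempty := by
  obtain ⟨w, hw⟩ := (mem_verts_iff hM).1 hv
  exact ⟨s(v, w), hw⟩



section SetIds
variable {α : Type*} {A B : Set α} {x₁ x₂ y u : α}

private lemma set_id1 (hx₁ : x₁ ∈ A) (hx₂ : x₂ ∈ A) (hyx₁ : y ≠ x₁) (hyx₂ : y ≠ x₂) :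
    (((A \ {x₁, x₂}) \ {y}) ∪ {x₂}) ∪ {u, x₁} = (A \ {y}) ∪ {u} := by
  ext z
  simp only [Set.mem_union, Set.mem_diff, Set.mem_insert_iff, Set.mem_singleton_iff]
  by_cases h1 : z = x₁ <;> by_cases h2 : z = x₂ <;> by_cases h3 : z = y <;>
    by_cases h4 : z = u <;> simp_all <;> tauto

private lemma set_id2 (hx₁ : x₁ ∈ B) (hx₂ : x₂ ∈ B) (hu₁ : x₁ ≠ u) (hu₂ : x₂ ≠ u) :
    (((B \ {u, x₁}) \ {x₂}) ∪ {y}) ∪ {x₁, x₂} = (B \ {u}) ∪ {y} := by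
  ext z
  simp only [Set.mem_union, Set.mem_diff, Set.mem_insert_iff, Set.mem_singleton_iff]
  by_cases h1 : z = x₁ <;> by_cases h2 : z = x₂ <;> by_cases h3 : z = y <;>
    by_cases h4 : z = u <;> simp_all <;> tauto

private lemma set_id3 (hx₁ : x₁ ∈ A) (hx₂ : x₂ ∈ A) :
    ((A \ {x₁, x₂}) ∪ {x₂, y}) ∪ {u, x₁} = A ∪ {u, y} := by
  ext z
  simp only [Set.mem_union, Set.mem_diff, Set.mem_insert_iff, Set.mem_singleton_iff]
  by_cases h1 : z = x₁ <;> by_cases h2 : z = x₂ <;> by_cases h3 : z = y <;>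
    by_cases h4 : z = u <;> simp_all <;> tauto

private lemma set_id4 (hx₁ : x₁ ∈ B) (hx₂ : x₂ ∈ B) (hu₁ : x₁ ≠ u) (hu₂ : x₂ ≠ u)
    (hyx₁ : y ≠ x₁) (hyx₂ : y ≠ x₂) :
    ((B \ {u, x₁}) \ {x₂, y}) ∪ {x₁, x₂} = B \ {u, y} := by
  ext z
  simp only [Set.mem_union, Set.mem_diff, Set.mem_insert_iff, Set.mem_singleton_iff]
  by_cases h1 : z = x₁ <;> by_cases h2 : z = x₂ <;> by_cases h3 : z = y <;>
    by_cases h4 : z = u <;> simp_all <;> tauto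

private lemma set_id5 (hx₁ : x₁ ∈ A) (h12 : x₁ ≠ x₂) :
    (A \ {x₁, x₂}) ∪ {u, x₁} = (A \ {x₂}) ∪ {u} := by
  ext z
  simp only [Set.mem_union, Set.mem_diff, Set.mem_insert_iff, Set.mem_singleton_iff]
  by_cases h1 : z = x₁ <;> by_cases h2 : z = x₂ <;> by_cases h4 : z = u <;>
    simp_all <;> tauto

private lemma set_id6 (hx₁ : x₁ ∈ B) (hu₁ : x₁ ≠ u) :
    (B \ {u, x₁}) ∪ {x₁, x₂} = (B \ {u}) ∪ {x₂} := by
  ext z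
  simp only [Set.mem_union, Set.mem_diff, Set.mem_insert_iff, Set.mem_singleton_iff]
  by_cases h1 : z = x₁ <;> by_cases h2 : z = x₂ <;> by_cases h4 : z = u <;>
    simp_all <;> tauto

end SetIds

section Exchange
variable [Fintype V]

lemma edge_not_mem_of_not_vert {M : G.Subgraph} {a b : V} (ha : a ∉ M.verts) :
    s(a, b) ∉ M.edgeSet := fun h => ha (M.edge_vert (Subgraph.mem_edgeSet.1 h))

lemma exchange_aux :
    ∀ n (M N : G.Subgraph), M.edgeSet.ncard = n → M.IsMatching → N.IsMatching →
      ∀ u, u ∉ M.verts → u ∈ N.verts →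
      ∃ (y : V) (M₁ N₁ : G.Subgraph), y ≠ u ∧ M₁.IsMatching ∧ N₁.IsMatching ∧
        M₁.edgeSet ⊆ M.edgeSet ∪ N.edgeSet ∧ N₁.edgeSet ⊆ M.edgeSet ∪ N.edgeSet ∧
        M.edgeSet ∩ N.edgeSet ⊆ M₁.edgeSet ∧ M.edgeSet ∩ N.edgeSet ⊆ N₁.edgeSet ∧
        ((y ∈ M.verts ∧ y ∉ N.verts ∧
          M₁.verts = (M.verts \ {y}) ∪ {u} ∧ M₁.edgeSet.ncard = M.edgeSet.ncard ∧
          N₁.verts = (N.verts \ {u}) ∪ {y} ∧ N₁.edgeSet.ncard = N.edgeSet.ncard ∧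
          ∃ e, e ∈ M.edgeSet ∩ N₁.edgeSet ∧ e ∉ N.edgeSet) ∨
         (y ∉ M.verts ∧ y ∈ N.verts ∧
          M₁.verts = M.verts ∪ {u, y} ∧ M₁.edgeSet.ncard = M.edgeSet.ncard + 1 ∧
          N₁.verts = N.verts \ {u, y} ∧ N₁.edgeSet.ncard + 1 = N.edgeSet.ncard)) := by
  intro n
  induction n using Nat.strong_induction_on with
  | _ n IH =>
  intro M N hn hM hN u hu hun
  obtain ⟨x₁, hux₁⟩ := (mem_verts_iff hN).1 hun
  have hGux₁ : G.Adj u x₁ := N.adj_sub hux₁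
  have hx₁u : x₁ ≠ u := hGux₁.ne'
  have hux₁_notM : s(u, x₁) ∉ M.edgeSet := edge_not_mem_of_not_vert hu
  by_cases hx₁M : x₁ ∈ M.verts
  · -- x₁ is M-covered: get its partner and recurse or stop
    obtain ⟨x₂, hx₁x₂⟩ := (mem_verts_iff hM).1 hx₁M
    have hGx₁x₂ : G.Adj x₁ x₂ := M.adj_sub hx₁x₂
    have hx₂x₁ : x₂ ≠ x₁ := hGx₁x₂.ne'
    have hx₂u : x₂ ≠ u := fun h => hu (h ▸ M.edge_vert hx₁x₂.symm)
    have hx₂M : x₂ ∈ M.verts := M.edge_vert hx₁x₂.symm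
    have hx₁x₂_notN : s(x₁, x₂) ∉ N.edgeSet := by
      intro h
      exact hx₂u (matching_unique hN (Subgraph.mem_edgeSet.1 h) hux₁.symm)
    set M' := M.deleteVerts {x₁, x₂} with hM'def
    set N' := N.deleteVerts {u, x₁} with hN'def
    have hM' : M'.IsMatching := deletePair_matching hM hx₁x₂
    have hN' : N'.IsMatching := deletePair_matching hN hux₁
    have hM'v : M'.verts = M.verts \ {x₁, x₂} := Subgraph.deleteVerts_verts
    have hN'v : N'.verts = N.verts \ {u, x₁} := Subgraph.deleteVerts_verts
    have hM'e : M'.edgeSet = M.edgeSet \ {s(x₁, x₂)} := deletePair_edgeSet hM hx₁x₂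
    have hN'e : N'.edgeSet = N.edgeSet \ {s(u, x₁)} := deletePair_edgeSet hN hux₁
    have hx₂M' : x₂ ∉ M'.verts := by rw [hM'v]; simp
    have hx₁N' : x₁ ∉ N'.verts := by rw [hN'v]; simp
    have huM' : u ∉ M'.verts := by rw [hM'v]; exact fun h => hu h.1
    have hcapM' : M.edgeSet ∩ N.edgeSet ⊆ M'.edgeSet := by
      rintro e ⟨heM, heN⟩
      rw [hM'e]
      exact ⟨heM, fun h => hx₁x₂_notN (h ▸ heN)⟩
    have hcapN' : M.edgeSet ∩ N.edgeSet ⊆ N'.edgeSet := by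
      rintro e ⟨heM, heN⟩
      rw [hN'e]
      exact ⟨heN, fun h => hux₁_notM (h ▸ heM)⟩
    have hsubM' : M'.edgeSet ⊆ M.edgeSet := by rw [hM'e]; exact Set.diff_subset
    have hsubN' : N'.edgeSet ⊆ N.edgeSet := by rw [hN'e]; exact Set.diff_subset
    have hM'card : M'.edgeSet.ncard + 1 = M.edgeSet.ncard := by
      rw [hM'e]
      exact Set.ncard_diff_singleton_add_one hx₁x₂ M.edgeSet.toFinite
    have hN'card : N'.edgeSet.ncard + 1 = N.edgeSet.ncard := by
      rw [hN'e]
      exact Set.ncard_diff_singleton_add_one hux₁ N.edgeSet.toFinite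
    by_cases hx₂N : x₂ ∈ N.verts
    · -- recurse
      have hx₂N' : x₂ ∈ N'.verts := by
        rw [hN'v]
        exact ⟨hx₂N, by simp [hx₂u, hx₂x₁]⟩
      have hlt : M'.edgeSet.ncard < n := by omega
      obtain ⟨y, M₁', N₁', hyx₂, hM₁', hN₁', hsub1, hsub2, hcap1, hcap2, hcase⟩ :=
        IH _ hlt M' N' rfl hM' hN' x₂ hx₂M' hx₂N'
      have hx₁M' : x₁ ∉ M'.verts := by rw [hM'v]; simp
      have hx₁N : x₁ ∈ N.verts := N.edge_vert hux₁.symm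
      have hM₁edge : ∀ (K : G.Subgraph), (K ⊔ G.subgraphOfAdj hGux₁).edgeSet
          = K.edgeSet ∪ {s(u, x₁)} := fun K => supEdge_edgeSet _
      have hN₁edge : ∀ (K : G.Subgraph), (K ⊔ G.subgraphOfAdj hGx₁x₂).edgeSet
          = K.edgeSet ∪ {s(x₁, x₂)} := fun K => supEdge_edgeSet _
      rcases hcase with ⟨hyM', hyN', hv1, hc1, hv2, hc2, -⟩ |
        ⟨hyM', hyN', hv1, hc1, hv2, hc2⟩
      · -- IH case (a)
        have hyMd : y ∈ M.verts \ ({x₁, x₂} : Set V) := by rw [← hM'v]; exact hyM'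
        have hyM : y ∈ M.verts := hyMd.1
        have hyx₁ : y ≠ x₁ := fun h => hyMd.2 (by simp [h])
        have hyu : y ≠ u := fun h => hu (h ▸ hyM)
        have hyN : y ∉ N.verts := by
          intro h
          apply hyN'
          rw [hN'v]
          exact ⟨h, by simp [hyu, hyx₁]⟩
        have huM₁' : u ∉ M₁'.verts := by
          intro h
          rw [hv1] at h
          rcases h with ⟨h, -⟩ | h
          · exact huM' h
          · exact hx₂u (Set.mem_singleton_iff.1 h).symm
        have hx₁M₁' : x₁ ∉ M₁'.verts := by
          intro h
          rw [hv1] at h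
          rcases h with ⟨h, -⟩ | h
          · exact hx₁M' h
          · exact hx₂x₁ (Set.mem_singleton_iff.1 h).symm
        have hx₁N₁' : x₁ ∉ N₁'.verts := by
          intro h
          rw [hv2] at h
          rcases h with ⟨h, -⟩ | h
          · exact hx₁N' h
          · exact hyx₁ (Set.mem_singleton_iff.1 h).symm
        have hx₂N₁' : x₂ ∉ N₁'.verts := by
          intro h
          rw [hv2] at h
          rcases h with ⟨-, h⟩ | h
          · exact h rfl
          · exact hyx₂ (Set.mem_singleton_iff.1 h).symm
        refine ⟨y, M₁' ⊔ G.subgraphOfAdj hGux₁, N₁' ⊔ G.subgraphOfAdj hGx₁x₂, hyu,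
          supEdge_matching hM₁' hGux₁ huM₁' hx₁M₁',
          supEdge_matching hN₁' hGx₁x₂ hx₁N₁' hx₂N₁', ?_, ?_, ?_, ?_,
          Or.inl ⟨hyM, hyN, ?_, ?_, ?_, ?_, ?_⟩⟩
        · rw [hM₁edge]
          rintro e (he | he)
          · rcases hsub1 he with h | h
            · exact Or.inl (hsubM' h)
            · exact Or.inr (hsubN' h)
          · exact Or.inr (Set.mem_singleton_iff.1 he ▸ hux₁)
        · rw [hN₁edge]
          rintro e (he | he)
          · rcases hsub2 he with h | h
            · exact Or.inl (hsubM' h)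
            · exact Or.inr (hsubN' h)
          · exact Or.inl (Set.mem_singleton_iff.1 he ▸ hx₁x₂)
        · rw [hM₁edge]
          exact fun e he => Or.inl (hcap1 ⟨hcapM' he, hcapN' he⟩)
        · rw [hN₁edge]
          exact fun e he => Or.inl (hcap2 ⟨hcapM' he, hcapN' he⟩)
        · rw [supEdge_verts, hv1, hM'v]
          exact set_id1 hx₁M hx₂M hyx₁ hyx₂
        · rw [hM₁edge, Set.union_singleton,
            Set.ncard_insert_of_notMem (edge_not_mem_of_not_vert huM₁') M₁'.edgeSet.toFinite]
          omega
        · rw [supEdge_verts, hv2, hN'v]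
          exact set_id2 hx₁N hx₂N hx₁u hx₂u
        · rw [hN₁edge, Set.union_singleton,
            Set.ncard_insert_of_notMem (edge_not_mem_of_not_vert hx₁N₁') N₁'.edgeSet.toFinite]
          omega
        · refine ⟨s(x₁, x₂), ⟨hx₁x₂, ?_⟩, hx₁x₂_notN⟩
          rw [hN₁edge]
          exact Or.inr rfl
      · -- IH case (b)
        have hyNd : y ∈ N.verts \ ({u, x₁} : Set V) := by rw [← hN'v]; exact hyN'
        have hyN : y ∈ N.verts := hyNd.1
        have hyu : y ≠ u := fun h => hyNd.2 (by simp [h])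
        have hyx₁ : y ≠ x₁ := fun h => hyNd.2 (by simp [h])
        have hyM : y ∉ M.verts := by
          intro h
          apply hyM'
          rw [hM'v]
          exact ⟨h, by simp [hyx₁, hyx₂]⟩
        have huM₁' : u ∉ M₁'.verts := by
          intro h
          rw [hv1] at h
          rcases h with h | h
          · exact huM' h
          · rcases h with h | h
            · exact hx₂u h.symm
            · exact hyu (Set.mem_singleton_iff.1 h).symm
        have hx₁M₁' : x₁ ∉ M₁'.verts := by
          intro h
          rw [hv1] at h
          rcases h with h | h
          · exact hx₁M' h
          · rcases h with h | h
            · exact hx₂x₁ h.symm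
            · exact hyx₁ (Set.mem_singleton_iff.1 h).symm
        have hx₁N₁' : x₁ ∉ N₁'.verts := by
          intro h
          rw [hv2] at h
          exact hx₁N' h.1
        have hx₂N₁' : x₂ ∉ N₁'.verts := by
          intro h
          rw [hv2] at h
          exact h.2 (Or.inl rfl)
        refine ⟨y, M₁' ⊔ G.subgraphOfAdj hGux₁, N₁' ⊔ G.subgraphOfAdj hGx₁x₂, hyu,
          supEdge_matching hM₁' hGux₁ huM₁' hx₁M₁',
          supEdge_matching hN₁' hGx₁x₂ hx₁N₁' hx₂N₁', ?_, ?_, ?_, ?_,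
          Or.inr ⟨hyM, hyN, ?_, ?_, ?_, ?_⟩⟩
        · rw [hM₁edge]
          rintro e (he | he)
          · rcases hsub1 he with h | h
            · exact Or.inl (hsubM' h)
            · exact Or.inr (hsubN' h)
          · exact Or.inr (Set.mem_singleton_iff.1 he ▸ hux₁)
        · rw [hN₁edge]
          rintro e (he | he)
          · rcases hsub2 he with h | h
            · exact Or.inl (hsubM' h)
            · exact Or.inr (hsubN' h)
          · exact Or.inl (Set.mem_singleton_iff.1 he ▸ hx₁x₂)
        · rw [hM₁edge]
          exact fun e he => Or.inl (hcap1 ⟨hcapM' he, hcapN' he⟩)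
        · rw [hN₁edge]
          exact fun e he => Or.inl (hcap2 ⟨hcapM' he, hcapN' he⟩)
        · rw [supEdge_verts, hv1, hM'v]
          exact set_id3 hx₁M hx₂M
        · rw [hM₁edge, Set.union_singleton,
            Set.ncard_insert_of_notMem (edge_not_mem_of_not_vert huM₁') M₁'.edgeSet.toFinite]
          omega
        · rw [supEdge_verts, hv2, hN'v]
          exact set_id4 hx₁N hx₂N hx₁u hx₂u hyx₁ hyx₂
        · rw [hN₁edge, Set.union_singleton,
            Set.ncard_insert_of_notMem (edge_not_mem_of_not_vert hx₁N₁') N₁'.edgeSet.toFinite]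
          omega
    · -- stop: y = x₂, case (a) directly
      have hx₁M' : x₁ ∉ M'.verts := by rw [hM'v]; simp
      have hx₁N : x₁ ∈ N.verts := N.edge_vert hux₁.symm
      have hx₂N' : x₂ ∉ N'.verts := by
        intro h
        rw [hN'v] at h
        exact hx₂N h.1
      refine ⟨x₂, M' ⊔ G.subgraphOfAdj hGux₁, N' ⊔ G.subgraphOfAdj hGx₁x₂, hx₂u,
        supEdge_matching hM' hGux₁ huM' hx₁M',
        supEdge_matching hN' hGx₁x₂ hx₁N' hx₂N', ?_, ?_, ?_, ?_,
        Or.inl ⟨hx₂M, hx₂N, ?_, ?_, ?_, ?_, ?_⟩⟩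
      · rw [supEdge_edgeSet]
        rintro e (he | he)
        · exact Or.inl (hsubM' he)
        · exact Or.inr (Set.mem_singleton_iff.1 he ▸ hux₁)
      · rw [supEdge_edgeSet]
        rintro e (he | he)
        · exact Or.inr (hsubN' he)
        · exact Or.inl (Set.mem_singleton_iff.1 he ▸ hx₁x₂)
      · rw [supEdge_edgeSet]
        exact fun e he => Or.inl (hcapM' he)
      · rw [supEdge_edgeSet]
        exact fun e he => Or.inl (hcapN' he)
      · rw [supEdge_verts, hM'v]
        exact set_id5 hx₁M hx₂x₁.symm
      · rw [supEdge_edgeSet, Set.union_singleton,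
          Set.ncard_insert_of_notMem (edge_not_mem_of_not_vert huM') M'.edgeSet.toFinite]
        omega
      · rw [supEdge_verts, hN'v]
        exact set_id6 hx₁N hx₁u
      · rw [supEdge_edgeSet, Set.union_singleton,
          Set.ncard_insert_of_notMem (edge_not_mem_of_not_vert hx₁N') N'.edgeSet.toFinite]
        omega
      · refine ⟨s(x₁, x₂), ⟨hx₁x₂, ?_⟩, hx₁x₂_notN⟩
        rw [supEdge_edgeSet]
        exact Or.inr rfl
  · -- base: y = x₁, case (b) directly
    have hx₁N : x₁ ∈ N.verts := N.edge_vert hux₁.symm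
    refine ⟨x₁, M ⊔ G.subgraphOfAdj hGux₁, N.deleteVerts {u, x₁}, hx₁u,
      supEdge_matching hM hGux₁ hu hx₁M, deletePair_matching hN hux₁, ?_, ?_, ?_, ?_,
      Or.inr ⟨hx₁M, hx₁N, ?_, ?_, ?_, ?_⟩⟩
    · rw [supEdge_edgeSet]
      rintro e (he | he)
      · exact Or.inl he
      · exact Or.inr (Set.mem_singleton_iff.1 he ▸ hux₁)
    · rw [deletePair_edgeSet hN hux₁]
      exact fun e he => Or.inr he.1
    · rw [supEdge_edgeSet]
      exact fun e he => Or.inl he.1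
    · rw [deletePair_edgeSet hN hux₁]
      exact fun e he => ⟨he.2, fun h => hux₁_notM (h ▸ he.1)⟩
    · rw [supEdge_verts]
    · rw [supEdge_edgeSet, Set.union_singleton,
        Set.ncard_insert_of_notMem hux₁_notM M.edgeSet.toFinite]
    · rw [deletePair_verts]
    · rw [deletePair_edgeSet hN hux₁]
      exact Set.ncard_diff_singleton_add_one hux₁ N.edgeSet.toFinite

end Exchange

section MaxM
variable [Fintype V] {G : SimpleGraph V}

lemma argmax (P : G.Subgraph → Prop) (f : G.Subgraph → ℕ) (C : ℕ)
    (hbd : ∀ N, P N → f N ≤ C) (hne : ∃ N, P N) :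
    ∃ N, P N ∧ ∀ N', P N' → f N' ≤ f N := by
  have hSne : {k | ∃ N, P N ∧ f N = k}.Nonempty :=
    ⟨f hne.choose, hne.choose, hne.choose_spec, rfl⟩
  have hSb : BddAbove {k | ∃ N, P N ∧ f N = k} := by
    refine ⟨C, ?_⟩
    rintro k ⟨N, hN, rfl⟩
    exact hbd N hN
  obtain ⟨N, hN, hfN⟩ := Nat.sSup_mem hSne hSb
  refine ⟨N, hN, fun N' hN' => ?_⟩
  rw [hfN]
  exact le_csSup hSb ⟨N', hN', rfl⟩

lemma edge_bound (N : G.Subgraph) : N.edgeSet.ncard ≤ (Set.univ : Set (Sym2 V)).ncard :=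
  Set.ncard_le_ncard (Set.subset_univ _) (Set.toFinite _)

lemma exists_maximum_matching : ∃ M : G.Subgraph, IsMaximumMatching M := by
  have hbot : (⊥ : G.Subgraph).IsMatching := by
    intro v hv
    simp only [Subgraph.verts_bot, Set.mem_empty_iff_false] at hv
  obtain ⟨M, hM, hmax⟩ := argmax (fun N => N.IsMatching) (fun N => N.edgeSet.ncard)
    ((Set.univ : Set (Sym2 V)).ncard) (fun N _ => edge_bound N) ⟨⊥, hbot⟩
  exact ⟨M, hM, hmax⟩

lemma not_adj_exposed {M : G.Subgraph} (hM : IsMaximumMatching M) {u w : V}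
    (h : G.Adj u w) (hu : u ∉ M.verts) (hw : w ∉ M.verts) : False := by
  have h1 : (M ⊔ G.subgraphOfAdj h).IsMatching := supEdge_matching hM.1 h hu hw
  have h2 := hM.2 _ h1
  rw [supEdge_edgeSet, Set.union_singleton,
    Set.ncard_insert_of_notMem (edge_not_mem_of_not_vert hu) M.edgeSet.toFinite] at h2
  omega

lemma claimA :
    ∀ d (M : G.Subgraph), IsMaximumMatching M → ∀ (u v : V) (hud : u ∈ DSet G)
      (hvd : v ∈ DSet G), u ∉ M.verts → v ∉ M.verts → u ≠ v →
      ∀ (w : (G.induce (DSet G)).Walk ⟨u, hud⟩ ⟨v, hvd⟩), w.length ≤ d → False := by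
  intro d
  induction d with
  | zero =>
    intro M hM u v hud hvd hu hv huv w hlen
    have := SimpleGraph.Walk.eq_of_length_eq_zero (Nat.le_zero.1 hlen)
    exact huv (congrArg Subtype.val this)
  | succ d IH =>
    intro M hM u v hud hvd hu hv huv w hlen
    cases w with
    | nil => exact huv rfl
    | @cons _ t' _ hadj p =>
      have hGut : G.Adj u t'.1 := hadj
      have htu : t'.1 ≠ u := hGut.ne'
      by_cases htv : t'.1 = v
      · exact not_adj_exposed hM (htv ▸ hGut) hu hv
      have hplen : p.length ≤ d := by
        simp only [SimpleGraph.Walk.length_cons] at hlen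
        omega
      have hp1 : 1 ≤ p.length := by
        cases p with
        | nil => exact absurd rfl htv
        | cons h q => simp
      by_cases htM : t'.1 ∈ M.verts
      · obtain ⟨N0, hN0, hN0t⟩ := t'.2
        obtain ⟨N, ⟨hNmax, hNt⟩, hNopt⟩ := argmax
          (fun N => IsMaximumMatching N ∧ t'.1 ∉ N.verts)
          (fun N => (M.edgeSet ∩ N.edgeSet).ncard)
          ((Set.univ : Set (Sym2 V)).ncard)
          (fun N _ => Set.ncard_le_ncard (Set.subset_univ _) (Set.toFinite _))
          ⟨N0, hN0, hN0t⟩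
        by_cases huN : u ∈ N.verts
        · by_cases hvN : v ∈ N.verts
          · obtain ⟨y, M₁, N₁, hyu, hM₁m, hN₁m, -, -, -, hcapN₁, hcase⟩ :=
              exchange_aux _ M N rfl hM.1 hNmax.1 u hu huN
            rcases hcase with ⟨hyM, hyN, hv1, hc1, hv2, hc2, e, heMN₁, heN⟩ |
              ⟨-, -, -, hc1, -, -⟩
            · by_cases hyt : y = t'.1
              · have htM₁ : t'.1 ∉ M₁.verts := by
                  rw [hv1]
                  rintro (⟨h, hne⟩ | h)
                  · exact hne (by simp [hyt])
                  · exact htu (Set.mem_singleton_iff.1 h)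
                have hvM₁ : v ∉ M₁.verts := by
                  rw [hv1]
                  rintro (⟨h, -⟩ | h)
                  · exact hv h
                  · exact huv (Set.mem_singleton_iff.1 h).symm
                have hM₁max : IsMaximumMatching M₁ :=
                  ⟨hM₁m, fun N' hN' => by rw [hc1]; exact hM.2 N' hN'⟩
                exact IH M₁ hM₁max t'.1 v t'.2 hvd htM₁ hvM₁ htv p hplen
              · have htN₁ : t'.1 ∉ N₁.verts := by
                  rw [hv2]
                  rintro (⟨h, -⟩ | h)
                  · exact hNt h
                  · exact hyt (Set.mem_singleton_iff.1 h).symm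
                have hN₁max : IsMaximumMatching N₁ :=
                  ⟨hN₁m, fun N' hN' => by rw [hc2]; exact hNmax.2 N' hN'⟩
                have hle := hNopt N₁ ⟨hN₁max, htN₁⟩
                have heNM : e ∉ M.edgeSet ∩ N.edgeSet := fun h => heN h.2
                have hsub : insert e (M.edgeSet ∩ N.edgeSet) ⊆ M.edgeSet ∩ N₁.edgeSet := by
                  rw [Set.insert_subset_iff]
                  exact ⟨heMN₁, fun e' he' => ⟨he'.1, hcapN₁ he'⟩⟩
                have h1 := Set.ncard_insert_of_notMem heNM (Set.toFinite _)
                have h2 := Set.ncard_le_ncard hsub (Set.toFinite _)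
                omega
            · have := hM.2 M₁ hM₁m
              omega
          · exact IH N hNmax t'.1 v t'.2 hvd hNt hvN htv p hplen
        · exact IH N hNmax u t'.1 hud t'.2 huN hNt (fun h => htu h.symm)
            (SimpleGraph.Walk.cons hadj SimpleGraph.Walk.nil)
            (by simpa using le_trans hp1 hplen)
      · exact IH M hM t'.1 v t'.2 hvd htM hv htv p hplen

lemma claimA' {M : G.Subgraph} (hM : IsMaximumMatching M) {u v : V}
    (hud : u ∈ DSet G) (hvd : v ∈ DSet G) (hu : u ∉ M.verts) (hv : v ∉ M.verts)
    (huv : u ≠ v) (hreach : (G.induce (DSet G)).Reachable ⟨u, hud⟩ ⟨v, hvd⟩) : False := by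
  obtain ⟨w⟩ := hreach
  exact claimA w.length M hM u v hud hvd hu hv huv w le_rfl

end MaxM

section Stab
variable {G : SimpleGraph V}

/-- Remove all edges incident to `s` (keeping vertices). -/
def rem (G : SimpleGraph V) (s : Set V) : SimpleGraph V where
  Adj x y := G.Adj x y ∧ x ∉ s ∧ y ∉ s
  symm := by
    constructor
    rintro x y ⟨h, ha, hb⟩
    exact ⟨h.symm, hb, ha⟩
  loopless := ⟨fun x h => G.loopless.irrefl x h.1⟩

lemma rem_adj {s : Set V} {x y : V} : (rem G s).Adj x y ↔ G.Adj x y ∧ x ∉ s ∧ y ∉ s :=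
  Iff.rfl

lemma rem_empty : rem G (∅ : Set V) = G := by
  ext x y
  simp [rem_adj]

lemma rem_rem {s t : Set V} : rem (rem G s) t = rem G (s ∪ t) := by
  ext x y
  simp only [rem_adj, Set.mem_union]
  tauto

/-- Copy a subgraph to another ambient graph containing its edges. -/
def copyS {G₁ G₂ : SimpleGraph V} (M : G₁.Subgraph)
    (h : ∀ x y, M.Adj x y → G₂.Adj x y) : G₂.Subgraph :=
  ⟨M.verts, M.Adj, fun hxy => h _ _ hxy, fun hxy => M.edge_vert hxy, M.symm⟩

lemma copyS_verts {G₁ G₂ : SimpleGraph V} (M : G₁.Subgraph)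
    (h : ∀ x y, M.Adj x y → G₂.Adj x y) : (copyS M h).verts = M.verts := rfl

lemma copyS_adj {G₁ G₂ : SimpleGraph V} (M : G₁.Subgraph)
    (h : ∀ x y, M.Adj x y → G₂.Adj x y) {x y : V} :
    (copyS M h).Adj x y ↔ M.Adj x y := Iff.rfl

lemma copyS_edgeSet {G₁ G₂ : SimpleGraph V} (M : G₁.Subgraph)
    (h : ∀ x y, M.Adj x y → G₂.Adj x y) : (copyS M h).edgeSet = M.edgeSet := by
  ext e
  refine e.ind (fun x y => ?_)
  simp only [Subgraph.mem_edgeSet]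
  exact copyS_adj M h

lemma copyS_matching {G₁ G₂ : SimpleGraph V} {M : G₁.Subgraph}
    (h : ∀ x y, M.Adj x y → G₂.Adj x y) (hM : M.IsMatching) :
    (copyS M h).IsMatching := hM

variable [Fintype V]

lemma rem_matching_avoids {s : Set V} {W : (rem G s).Subgraph} (hW : W.IsMatching)
    {x : V} (hx : x ∈ s) : x ∉ W.verts := by
  intro hmem
  obtain ⟨w, hw⟩ := (mem_verts_iff hW).1 hmem
  exact (W.adj_sub hw).2.1 hx

lemma stab_single (b : V) (hb : b ∈ BSet G) : DSet (rem G {b}) = DSet G ∪ {b} := by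
  classical
  obtain ⟨hbD, d0, hd0D, hbd0⟩ := hb
  obtain ⟨Ms, hMs⟩ := exists_maximum_matching (G := G)
  set n := Ms.edgeSet.ncard with hn
  -- transfer matchings from `rem G {b}` to `G`
  have key2 : ∀ W : (rem G {b}).Subgraph, ∀ x y, W.Adj x y → G.Adj x y :=
    fun W x y h => (W.adj_sub h).1
  have key1 : ∀ W : (rem G {b}).Subgraph, W.IsMatching → b ∉ W.verts :=
    fun W hW => rem_matching_avoids hW rfl
  have key3 : ∀ W : (rem G {b}).Subgraph, W.IsMatching → W.edgeSet.ncard + 1 ≤ n := by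
    intro W hW
    have h1 : (copyS W (key2 W)).edgeSet.ncard ≤ n := hMs.2 _ (copyS_matching _ hW)
    rw [copyS_edgeSet] at h1
    rcases Nat.lt_or_ge W.edgeSet.ncard n with h | h
    · omega
    have heq : W.edgeSet.ncard = n := le_antisymm h1 h
    exfalso
    apply hbD
    refine ⟨copyS W (key2 W), ⟨copyS_matching _ hW, fun N' hN' => ?_⟩, ?_⟩
    · rw [copyS_edgeSet, heq]
      exact hMs.2 N' hN'
    · rw [copyS_verts]
      exact key1 W hW
  -- transfer matchings avoiding b from G to `rem G {b}`
  have key4 : ∀ M : G.Subgraph, M.IsMatching → b ∉ M.verts →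
      ∃ W : (rem G {b}).Subgraph, W.IsMatching ∧ W.verts = M.verts ∧
        W.edgeSet = M.edgeSet := by
    intro M hM hbM
    have hadj : ∀ x y, M.Adj x y → (rem G {b}).Adj x y := by
      intro x y h
      refine ⟨M.adj_sub h, ?_, ?_⟩
      · intro hxb
        exact hbM ((Set.mem_singleton_iff.1 hxb) ▸ M.edge_vert h)
      · intro hyb
        exact hbM ((Set.mem_singleton_iff.1 hyb) ▸ M.edge_vert h.symm)
    exact ⟨copyS M hadj, copyS_matching _ hM, rfl, copyS_edgeSet _ _⟩
  have hbMs : b ∈ Ms.verts := by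
    by_contra h
    exact hbD ⟨Ms, hMs, h⟩
  -- a maximum-size matching of `rem G {b}`, of size n - 1
  obtain ⟨p, hbp⟩ := (mem_verts_iff hMs.1).1 hbMs
  have key5 : ∃ W : (rem G {b}).Subgraph, W.IsMatching ∧ W.edgeSet.ncard + 1 = n ∧
      W.verts = Ms.verts \ {b, p} := by
    obtain ⟨W, hWm, hWv, hWe⟩ := key4 (Ms.deleteVerts {b, p})
      (deletePair_matching hMs.1 hbp) (by rw [deletePair_verts]; simp)
    refine ⟨W, hWm, ?_, by rw [hWv, deletePair_verts]⟩
    rw [hWe, deletePair_edgeSet hMs.1 hbp]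
    exact Set.ncard_diff_singleton_add_one hbp Ms.edgeSet.toFinite
  obtain ⟨W0, hW0m, hW0card, hW0v⟩ := key5
  apply Set.eq_of_subset_of_subset
  · -- hard direction
    intro w hw
    by_cases hwb : w = b
    · exact Or.inr hwb
    left
    by_contra hwD
    obtain ⟨Wr, hWrmax, hwWr⟩ := hw
    set M₀ : G.Subgraph := copyS Wr (key2 Wr) with hM₀def
    have hM₀m : M₀.IsMatching := copyS_matching _ hWrmax.1
    have hbM₀ : b ∉ M₀.verts := key1 Wr hWrmax.1
    have hwM₀ : w ∉ M₀.verts := hwWr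
    have hM₀card : M₀.edgeSet.ncard + 1 = n := by
      have h1 : M₀.edgeSet.ncard + 1 ≤ n := by
        rw [hM₀def, copyS_edgeSet]
        exact key3 Wr hWrmax.1
      have h2 : W0.edgeSet.ncard ≤ Wr.edgeSet.ncard := hWrmax.2 W0 hW0m
      have heq : M₀.edgeSet.ncard = Wr.edgeSet.ncard := by rw [hM₀def, copyS_edgeSet]
      omega
    obtain ⟨N, hNmax, hd0N⟩ := id hd0D
    have hNcard : N.edgeSet.ncard = n := le_antisymm (hMs.2 N hNmax.1) (hNmax.2 Ms hMs.1)
    have hwN : w ∈ N.verts := by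
      by_contra h
      exact hwD ⟨N, hNmax, h⟩
    obtain ⟨y, M₁, N₁, hyw, hM₁m, hN₁m, -, -, -, -, hcase⟩ :=
      exchange_aux _ M₀ N rfl hM₀m hNmax.1 w hwM₀ hwN
    rcases hcase with ⟨hyM₀, hyN, hv1, hc1, hv2, hc2, -⟩ |
      ⟨hyM₀, hyN, hv1, hc1, hv2, hc2⟩
    · -- case (a): N₁ is a maximum matching of G missing w
      apply hwD
      refine ⟨N₁, ⟨hN₁m, fun N' hN' => ?_⟩, ?_⟩
      · rw [hc2, hNcard, hn]
        exact hMs.2 N' hN'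
      · rw [hv2]
        rintro (⟨-, h⟩ | h)
        · exact h rfl
        · exact hyw (Set.mem_singleton_iff.1 h).symm
    · -- case (b)
      have hM₁card : M₁.edgeSet.ncard = n := by omega
      by_cases hyb : y = b
      · -- path reached b : flip N and add edge b-d0
        have hbN₁ : b ∉ N₁.verts := by
          rw [hv2]
          rintro ⟨-, h⟩
          exact h (Or.inr (Set.mem_singleton_iff.2 hyb.symm))
        have hd0N₁ : d0 ∉ N₁.verts := by
          rw [hv2]
          rintro ⟨h, -⟩
          exact hd0N h
        have hN₂m : (N₁ ⊔ G.subgraphOfAdj hbd0).IsMatching :=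
          supEdge_matching hN₁m hbd0 hbN₁ hd0N₁
        apply hwD
        refine ⟨N₁ ⊔ G.subgraphOfAdj hbd0, ⟨hN₂m, fun N' hN' => ?_⟩, ?_⟩
        · rw [supEdge_edgeSet, Set.union_singleton,
            Set.ncard_insert_of_notMem (edge_not_mem_of_not_vert hbN₁)
              N₁.edgeSet.toFinite]
          have h1 := hMs.2 N' hN'
          omega
        · rw [supEdge_verts, hv2]
          rintro (⟨-, h⟩ | h)
          · exact h (Or.inl rfl)
          · rcases h with h | h
            · exact hwb h
            · apply hwD
              rw [Set.mem_singleton_iff.1 h]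
              exact hd0D
      · -- b is not on the path: M₁ is a maximum matching of G missing b
        apply hbD
        refine ⟨M₁, ⟨hM₁m, fun N' hN' => ?_⟩, ?_⟩
        · rw [hM₁card, hn]
          exact hMs.2 N' hN'
        · rw [hv1]
          rintro (h | h)
          · exact hbM₀ h
          · rcases h with h | h
            · exact hwb h.symm
            · exact hyb (Set.mem_singleton_iff.1 h).symm
  · -- easy direction
    rintro w (hw | hwb)
    · obtain ⟨M, hMmax, hwM⟩ := hw
      have hMcard : M.edgeSet.ncard = n := le_antisymm (hMs.2 M hMmax.1) (hMmax.2 Ms hMs.1)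
      have hbM : b ∈ M.verts := by
        by_contra h
        exact hbD ⟨M, hMmax, h⟩
      obtain ⟨q, hbq⟩ := (mem_verts_iff hMmax.1).1 hbM
      obtain ⟨W, hWm, hWv, hWe⟩ := key4 (M.deleteVerts {b, q})
        (deletePair_matching hMmax.1 hbq) (by rw [deletePair_verts]; simp)
      have hWcard : W.edgeSet.ncard + 1 = n := by
        rw [hWe, deletePair_edgeSet hMmax.1 hbq, ← hMcard]
        exact Set.ncard_diff_singleton_add_one hbq M.edgeSet.toFinite
      refine ⟨W, ⟨hWm, fun W' hW' => ?_⟩, ?_⟩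
      · have := key3 W' hW'
        omega
      · rw [hWv, deletePair_verts]
        rintro ⟨h, -⟩
        exact hwM h
    · obtain ⟨Mr, hMr⟩ := exists_maximum_matching (G := rem G {b})
      rw [Set.mem_singleton_iff.1 hwb]
      exact ⟨Mr, hMr, key1 Mr hMr.1⟩

lemma DB_disjoint {x : V} (hD : x ∈ DSet G) : x ∉ BSet G := fun hB => hB.1 hD

lemma stab_multi : ∀ s : Set V, s.Finite → s ⊆ BSet G → DSet (rem G s) = DSet G ∪ s := by
  intro s hfin
  refine Set.Finite.induction_on
    (motive := fun s _ => s ⊆ BSet G → DSet (rem G s) = DSet G ∪ s) s hfin ?_ ?_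
  · intro _
    rw [rem_empty, Set.union_empty]
  · intro a s ha hsfin IH hsub
    have hsB : s ⊆ BSet G := fun x hx => hsub (Set.mem_insert_of_mem a hx)
    have haB : a ∈ BSet G := hsub (Set.mem_insert a s)
    have hGs : DSet (rem G s) = DSet G ∪ s := IH hsB
    have haB' : a ∈ BSet (rem G s) := by
      refine ⟨?_, ?_⟩
      · rw [hGs]
        rintro (h | h)
        · exact haB.1 h
        · exact ha h
      · obtain ⟨d, hdD, had⟩ := haB.2
        refine ⟨d, ?_, ?_⟩
        · rw [hGs]
          exact Or.inl hdD
        · exact ⟨had, fun h => ha h, fun h => DB_disjoint hdD (hsB h)⟩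
    have h1 := stab_single (G := rem G s) a haB'
    rw [rem_rem] at h1
    have h2 : s ∪ {a} = insert a s := by
      rw [Set.union_singleton]
    rw [h2] at h1
    rw [h1, hGs, Set.union_assoc, h2]

end Stab

section Main
variable [Fintype V] {G : SimpleGraph V}

lemma mem_D_of_adj {w p : V} (hw : w ∈ DSet G) (h : G.Adj w p) (hpB : p ∉ BSet G) :
    p ∈ DSet G := by
  by_contra hpD
  exact hpB ⟨hpD, w, hw, h.symm⟩

end Main
end GEProof

open GEProof in
theorem stmt10 {V : Type*} [Fintype V] (G : SimpleGraph V) :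
    ∀ c : (G.induce (DSet G)).ConnectedComponent,
      IsFactorCritical ((G.induce (DSet G)).induce c.supp) := by
  classical
  intro c v
  have hDG'' : DSet (rem G (BSet G)) = DSet G ∪ BSet G :=
    stab_multi (BSet G) (Set.toFinite _) subset_rfl
  have hDsub : DSet G ⊆ DSet (rem G (BSet G)) := by
    rw [hDG'']
    exact Set.subset_union_left
  have huD : (v.1.1 : V) ∈ DSet G := v.1.2
  have husupp : v.1 ∈ c.supp := v.2
  obtain ⟨Mu, hMumax, huMu⟩ := hDsub huD
  let f : (G.induce (DSet G)) →g ((rem G (BSet G)).induce (DSet (rem G (BSet G)))) :=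
    ⟨fun x => ⟨x.1, hDsub x.2⟩, fun {a b} h => ⟨h, DB_disjoint a.2, DB_disjoint b.2⟩⟩
  -- coverage claim
  have cover : ∀ w (hw : w ∈ DSet G), (⟨w, hw⟩ : ↥(DSet G)) ∈ c.supp → w ≠ v.1.1 →
      ∃ p, ∃ hp : p ∈ DSet G, (⟨p, hp⟩ : ↥(DSet G)) ∈ c.supp ∧ Mu.Adj w p ∧ p ≠ v.1.1 := by
    intro w hw hwsupp hwu
    have hreach : (G.induce (DSet G)).Reachable ⟨w, hw⟩ ⟨v.1.1, huD⟩ := by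
      apply SimpleGraph.ConnectedComponent.exact
      rw [SimpleGraph.ConnectedComponent.mem_supp_iff] at hwsupp husupp
      rw [hwsupp]
      exact husupp.symm
    have hwMu : w ∈ Mu.verts := by
      by_contra hwMu
      exact claimA' hMumax (hDsub hw) (hDsub huD) hwMu huMu hwu (hreach.map f)
    obtain ⟨p, hp⟩ := (mem_verts_iff hMumax.1).1 hwMu
    have hadj'' : (rem G (BSet G)).Adj w p := Mu.adj_sub hp
    have hGwp : G.Adj w p := hadj''.1
    have hpD : p ∈ DSet G := mem_D_of_adj hw hGwp hadj''.2.2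
    have hpsupp : (⟨p, hpD⟩ : ↥(DSet G)) ∈ c.supp := by
      rw [SimpleGraph.ConnectedComponent.mem_supp_iff]
      rw [SimpleGraph.ConnectedComponent.mem_supp_iff] at hwsupp
      rw [← hwsupp]
      apply SimpleGraph.ConnectedComponent.sound
      have h' : (G.induce (DSet G)).Adj ⟨p, hpD⟩ ⟨w, hw⟩ := hGwp.symm
      exact h'.reachable
    have hpu : p ≠ v.1.1 := by
      intro h
      exact huMu (h ▸ Mu.edge_vert hp.symm)
    exact ⟨p, hpD, hpsupp, hp, hpu⟩
  -- construct the perfect matching of the component minus v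
  refine ⟨⟨Set.univ, fun x y => Mu.Adj x.1.1.1 y.1.1.1, ?_, fun _ => Set.mem_univ _, ?_⟩,
    ?_, fun _ => Set.mem_univ _⟩
  · intro x y h
    exact (Mu.adj_sub h).1
  · constructor
    intro x y h
    exact Mu.adj_symm h
  · intro x _
    have hxv : x.1 ≠ v := x.2
    have hwD : (x.1.1.1 : V) ∈ DSet G := x.1.1.2
    have hwsupp : x.1.1 ∈ c.supp := x.1.2
    have hwu : x.1.1.1 ≠ v.1.1 := by
      intro h
      exact hxv (Subtype.ext (Subtype.ext h))
    obtain ⟨p, hpD, hpsupp, hMuwp, hpu⟩ := cover x.1.1.1 hwD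
      hwsupp hwu
    have hyv : (⟨⟨p, hpD⟩, hpsupp⟩ : ↥c.supp) ∈ ({v}ᶜ : Set ↥c.supp) := by
      intro hmem
      exact hpu (congrArg (fun z : ↥c.supp => z.1.1) hmem)
    refine ⟨⟨⟨⟨p, hpD⟩, hpsupp⟩, hyv⟩, hMuwp, ?_⟩
    intro y' hy'
    have h1 : y'.1.1.1 = p := matching_unique hMumax.1 hy' hMuwp
    exact Subtype.ext (Subtype.ext (Subtype.ext h1))
end

section
/- Let D(G) be the set of vertices missed by some maximum matching of G, B(G) the set of vertices outside D(G) adjacent to D(G), and C(G) the remaining vertices. Then the subgraph of G induced by C(G) has a perfect matching. -/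
open Polynomial SimpleGraph

open SimpleGraph

set_option linter.unusedSectionVars false

namespace GEaux

variable {V : Type*} [Fintype V] {G : SimpleGraph V}

/-- matching of `G` contained in the vertex set `s` -/
def MIn (G : SimpleGraph V) (s : Set V) (M : G.Subgraph) : Prop :=
  M.IsMatching ∧ M.verts ⊆ s

/-- maximum matching within `s` (maximality measured by number of covered vertices) -/
def MaxIn (G : SimpleGraph V) (s : Set V) (M : G.Subgraph) : Prop :=
  MIn G s M ∧ ∀ N, MIn G s N → N.verts.ncard ≤ M.verts.ncard

def Ds (G : SimpleGraph V) (s : Set V) : Set V :=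
  {v | v ∈ s ∧ ∃ M, MaxIn G s M ∧ v ∉ M.verts}

def Bs (G : SimpleGraph V) (s : Set V) : Set V :=
  {v | v ∈ s ∧ v ∉ Ds G s ∧ ∃ u ∈ Ds G s, G.Adj v u}

def Cs (G : SimpleGraph V) (s : Set V) : Set V := s \ (Ds G s ∪ Bs G s)

lemma Ds_subset (G : SimpleGraph V) (s : Set V) : Ds G s ⊆ s := fun _ h => h.1

lemma exists_maxIn (G : SimpleGraph V) (s : Set V) : ∃ M, MaxIn G s M := by
  set S : Set ℕ := {n | ∃ M, MIn G s M ∧ M.verts.ncard = n} with hS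
  have hne : S.Nonempty := by
    refine ⟨0, ⊥, ⟨?_, ?_⟩, ?_⟩
    · intro v hv
      simp [Subgraph.verts_bot] at hv
    · simp [Subgraph.verts_bot]
    · simp [Subgraph.verts_bot]
  have hbdd : BddAbove S := by
    refine ⟨Fintype.card V, ?_⟩
    rintro n ⟨M, _, rfl⟩
    calc M.verts.ncard ≤ (Set.univ : Set V).ncard := Set.ncard_le_ncard (Set.subset_univ _)
    _ = Fintype.card V := by rw [Set.ncard_univ, Nat.card_eq_fintype_card]
  obtain ⟨M, hM, hMcard⟩ := Nat.sSup_mem hne hbdd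
  refine ⟨M, hM, fun N hN => ?_⟩
  rw [hMcard]
  exact le_csSup hbdd ⟨N, hN, rfl⟩

lemma maxIn_of_le {s : Set V} {M N : G.Subgraph} (hM : MaxIn G s M) (hN : MIn G s N)
    (h : M.verts.ncard ≤ N.verts.ncard) : MaxIn G s N :=
  ⟨hN, fun P hP => (hM.2 P hP).trans h⟩

lemma mem_verts_of_not_mem_Ds {s : Set V} {M : G.Subgraph} {v : V} (hM : MaxIn G s M)
    (hv : v ∈ s) (hvD : v ∉ Ds G s) : v ∈ M.verts := by
  by_contra h
  exact hvD ⟨hv, M, hM, h⟩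

lemma deletePair_isMatching {M : G.Subgraph} (hM : M.IsMatching) {u w : V} (huw : M.Adj u w) :
    (M.deleteVerts {u, w}).IsMatching := by
  intro v hv
  rw [Subgraph.deleteVerts_verts] at hv
  obtain ⟨hvM, hvuw⟩ := hv
  obtain ⟨p, hp, hpu⟩ := hM hvM
  have hu : u ∈ M.verts := M.edge_vert huw
  have hw : w ∈ M.verts := M.edge_vert huw.symm
  obtain ⟨pu, hpu', hpuu⟩ := hM hu
  obtain ⟨pw, hpw', hpww⟩ := hM hw
  have hpuw : pu = w := (hpuu w huw).symm
  have hpwu : pw = u := (hpww u huw.symm).symm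
  have hpne : p ∉ ({u, w} : Set V) := by
    intro hmem
    rcases hmem with h | h
    · subst h
      have : v = pu := hpuu v hp.symm
      exact hvuw (by simp [this, hpuw])
    · subst h
      have : v = pw := hpww v hp.symm
      exact hvuw (by simp [this, hpwu])
  refine ⟨p, ?_, ?_⟩
  · exact Subgraph.deleteVerts_adj.mpr ⟨hvM, hvuw, M.edge_vert hp.symm, hpne, hp⟩
  · intro y hy
    exact hpu y (Subgraph.deleteVerts_adj.mp hy).2.2.2.2
lemma matching_ncard_aux : ∀ (n : ℕ) (M : G.Subgraph), M.IsMatching → M.verts.ncard = n →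
    M.verts.ncard = 2 * M.edgeSet.ncard := by
  intro n
  induction n using Nat.strong_induction_on with
  | _ n ih =>
    intro M hM hn
    rcases Set.eq_empty_or_nonempty M.verts with he | ⟨v, hv⟩
    · have hE : M.edgeSet = ∅ := by
        ext e
        induction e with
        | _ a b =>
          simp only [Subgraph.mem_edgeSet, Set.mem_empty_iff_false, iff_false]
          intro h
          exact absurd (M.edge_vert h) (by simp [he])
      simp [he, hE]
    · obtain ⟨w, hw, hwu⟩ := hM hv
      have hvw : v ≠ w := (M.adj_sub hw).ne
      have hwv : w ∈ M.verts := M.edge_vert hw.symm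
      have hsub : ({v, w} : Set V) ⊆ M.verts := by
        rintro x (rfl | rfl) <;> assumption
      set M' := M.deleteVerts {v, w} with hM'def
      have hM' : M'.IsMatching := deletePair_isMatching hM hw
      have hverts : M'.verts = M.verts \ {v, w} := Subgraph.deleteVerts_verts
      have hvcard : M'.verts.ncard = n - 2 := by
        rw [hverts, Set.ncard_diff hsub, Set.ncard_pair hvw, hn]
      have hn2 : 2 ≤ n := by
        rw [← hn, ← Set.ncard_pair hvw]
        exact Set.ncard_le_ncard hsub
      -- unique partner facts
      obtain ⟨pv, hpv, hpvu⟩ := hM hv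
      obtain ⟨pw, hpw, hpwu⟩ := hM hwv
      have hpveq : pv = w := (hpvu w hw).symm
      have hpweq : pw = v := (hpwu v hw.symm).symm
      have hedge : M'.edgeSet = M.edgeSet \ {s(v, w)} := by
        ext e
        induction e with
        | _ a b =>
          simp only [Subgraph.mem_edgeSet, Set.mem_diff, Set.mem_singleton_iff]
          constructor
          · intro h
            obtain ⟨haM, hane, hbM, hbne, hab⟩ := Subgraph.deleteVerts_adj.mp h
            refine ⟨hab, ?_⟩
            intro hcontra
            rw [Sym2.eq_iff] at hcontra
            rcases hcontra with ⟨rfl, rfl⟩ | ⟨rfl, rfl⟩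
            · exact hane (by simp)
            · exact hane (by simp)
          · rintro ⟨hab, hne⟩
            refine Subgraph.deleteVerts_adj.mpr ⟨M.edge_vert hab, ?_, M.edge_vert hab.symm, ?_, hab⟩
            · rintro (rfl | rfl)
              · exact hne (by rw [Sym2.eq_iff]; left; exact ⟨rfl, (hpvu b hab).trans hpveq⟩)
              · exact hne (by rw [Sym2.eq_iff]; right; exact ⟨rfl, (hpwu b hab).trans hpweq⟩)
            · rintro (rfl | rfl)
              · exact hne (by rw [Sym2.eq_iff]; right; exact ⟨(hpvu a hab.symm).trans hpveq, rfl⟩)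
              · exact hne (by rw [Sym2.eq_iff]; left; exact ⟨(hpwu a hab.symm).trans hpweq, rfl⟩)
      have hmem : s(v, w) ∈ M.edgeSet := Subgraph.mem_edgeSet.mpr hw
      have hEcard : M'.edgeSet.ncard = M.edgeSet.ncard - 1 := by
        rw [hedge, Set.ncard_diff (by simpa using hmem), Set.ncard_singleton]
      have hEpos : 1 ≤ M.edgeSet.ncard := by
        rw [Nat.one_le_iff_ne_zero, Ne, Set.ncard_eq_zero]
        intro h
        exact absurd hmem (by simp [h])
      have hrec := ih (n - 2) (by omega) M' hM' hvcard
      rw [hvcard, hEcard] at hrec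
      rw [hn]
      omega

lemma matching_ncard {M : G.Subgraph} (hM : M.IsMatching) :
    M.verts.ncard = 2 * M.edgeSet.ncard :=
  matching_ncard_aux M.verts.ncard M hM rfl

lemma matching_verts_even {M : G.Subgraph} (hM : M.IsMatching) : Even M.verts.ncard :=
  ⟨M.edgeSet.ncard, by rw [matching_ncard hM]; ring⟩

/-- add an edge whose endpoints are uncovered -/
lemma addEdge_isMatching {M : G.Subgraph} (hM : M.IsMatching) {u d : V} (h : G.Adj u d)
    (hu : u ∉ M.verts) (hd : d ∉ M.verts) :
    (M ⊔ G.subgraphOfAdj h).IsMatching ∧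
      (M ⊔ G.subgraphOfAdj h).verts.ncard = M.verts.ncard + 2 := by
  have hdisj : Disjoint M.support (G.subgraphOfAdj h).support := by
    rw [hM.support_eq_verts, (Subgraph.IsMatching.subgraphOfAdj h).support_eq_verts,
      subgraphOfAdj_verts]
    rw [Set.disjoint_right]
    rintro x (rfl | rfl) <;> assumption
  refine ⟨hM.sup (Subgraph.IsMatching.subgraphOfAdj h) hdisj, ?_⟩
  rw [Subgraph.verts_sup, subgraphOfAdj_verts,
    Set.ncard_union_eq (by rw [Set.disjoint_right]; rintro x (rfl | rfl) <;> assumption),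
    Set.ncard_pair h.ne]
/-- Swap two matchings on a set `K` that is closed under the symmetric difference. -/
def swapM (M N : G.Subgraph) (K : Set V) : G.Subgraph where
  verts := (M.verts \ K) ∪ (N.verts ∩ K)
  Adj a b := (a ∈ K ∧ b ∈ K ∧ N.Adj a b) ∨ (a ∉ K ∧ b ∉ K ∧ M.Adj a b) ∨
    (¬(a ∈ K ↔ b ∈ K) ∧ M.Adj a b ∧ N.Adj a b)
  adj_sub := by
    rintro v w (⟨_, _, h⟩ | ⟨_, _, h⟩ | ⟨_, h, _⟩)
    · exact N.adj_sub h
    · exact M.adj_sub h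
    · exact M.adj_sub h
  edge_vert := by
    rintro v w (⟨h1, _, h⟩ | ⟨h1, _, h⟩ | ⟨h1, h, h'⟩)
    · exact Or.inr ⟨N.edge_vert h, h1⟩
    · exact Or.inl ⟨M.edge_vert h, h1⟩
    · by_cases hv : v ∈ K
      · exact Or.inr ⟨N.edge_vert h', hv⟩
      · exact Or.inl ⟨M.edge_vert h, hv⟩
  symm := by
    refine ⟨?_⟩
    rintro v w (⟨h1, h2, h⟩ | ⟨h1, h2, h⟩ | ⟨h1, h, h'⟩)
    · exact Or.inl ⟨h2, h1, h.symm⟩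
    · exact Or.inr (Or.inl ⟨h2, h1, h.symm⟩)
    · exact Or.inr (Or.inr ⟨fun hiff => h1 hiff.symm, h.symm, h'.symm⟩)

lemma swapM_verts (M N : G.Subgraph) (K : Set V) :
    (swapM M N K).verts = (M.verts \ K) ∪ (N.verts ∩ K) := rfl

/-- The closure condition: membership in `K` propagates along edges in exactly one of M, N. -/
def SwapClosed (M N : G.Subgraph) (K : Set V) : Prop :=
  ∀ ⦃a b : V⦄, a ∈ K → ¬(M.Adj a b ↔ N.Adj a b) → b ∈ K

lemma swapClosed_symm {M N : G.Subgraph} {K : Set V} (h : SwapClosed M N K) :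
    SwapClosed N M K := fun a b ha hne => h ha (fun hiff => hne hiff.symm)

lemma swapM_isMatching {M N : G.Subgraph} {K : Set V} (hM : M.IsMatching) (hN : N.IsMatching)
    (hK : SwapClosed M N K) : (swapM M N K).IsMatching := by
  intro v hv
  rcases hv with ⟨hvM, hvK⟩ | ⟨hvN, hvK⟩
  · -- v ∈ M.verts, v ∉ K : partner via M
    obtain ⟨p, hp, hpu⟩ := hM hvM
    refine ⟨p, ?_, ?_⟩
    · by_cases hpK : p ∈ K
      · -- crossing edge: must be in N too
        have hNadj : N.Adj p v := by
          by_contra hc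
          exact hvK (hK hpK (by simp [hp.symm, hc]))
        exact Or.inr (Or.inr ⟨by simp [hvK, hpK], hp, hNadj.symm⟩)
      · exact Or.inr (Or.inl ⟨hvK, hpK, hp⟩)
    · rintro y (⟨hy, _, _⟩ | ⟨_, _, hy⟩ | ⟨_, hy, _⟩)
      · exact absurd hy hvK
      · exact hpu y hy
      · exact hpu y hy
  · -- v ∈ N.verts, v ∈ K : partner via N
    obtain ⟨p, hp, hpu⟩ := hN hvN
    refine ⟨p, ?_, ?_⟩
    · by_cases hpK : p ∈ K
      · exact Or.inl ⟨hvK, hpK, hp⟩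
      · have hMadj : M.Adj v p := by
          by_contra hc
          exact hpK (hK hvK (by simp [hp, hc]))
        exact Or.inr (Or.inr ⟨by simp [hvK, hpK], hMadj, hp⟩)
    · rintro y (⟨_, _, hy⟩ | ⟨hy, _, _⟩ | ⟨_, _, hy⟩)
      · exact hpu y hy
      · exact absurd hvK hy
      · exact hpu y hy

lemma swapM_verts_ncard (M N : G.Subgraph) (K : Set V) :
    (swapM M N K).verts.ncard = (M.verts.ncard - (M.verts ∩ K).ncard) + (N.verts ∩ K).ncard ∧
    (M.verts ∩ K).ncard ≤ M.verts.ncard := by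
  constructor
  · rw [swapM_verts, Set.ncard_union_eq (by
      rw [Set.disjoint_left]; rintro x ⟨_, hx⟩ ⟨_, hx'⟩; exact hx hx')]
    congr 1
    have : M.verts \ K = M.verts \ (M.verts ∩ K) := by
      ext x; simp only [Set.mem_diff, Set.mem_inter_iff]; tauto
    rw [this, Set.ncard_diff Set.inter_subset_left]
  · exact Set.ncard_le_ncard Set.inter_subset_left
lemma cross_lemma {F : SimpleGraph V} {S : Set V} {z x : V} (q : F.Walk z x)
    (hz : z ∉ S) (hx : x ∈ S) : ∃ a b, F.Adj a b ∧ a ∉ S ∧ b ∈ S := by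
  induction q with
  | nil => exact absurd hx hz
  | @cons u v w h q ih =>
    by_cases hv : v ∈ S
    · exact ⟨u, v, h, hz, hv⟩
    · exact ih hv hx

lemma two_le_ncard {S : Set V} {a b : V} (ha : a ∈ S) (hb : b ∈ S) (hab : a ≠ b) :
    2 ≤ S.ncard := by
  have : ({a, b} : Set V) ⊆ S := by rintro x (rfl | rfl) <;> assumption
  calc 2 = ({a, b} : Set V).ncard := (Set.ncard_pair hab).symm
  _ ≤ S.ncard := Set.ncard_le_ncard this

lemma three_le_ncard {S : Set V} {a b c : V} (ha : a ∈ S) (hb : b ∈ S) (hc : c ∈ S)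
    (hab : a ≠ b) (hac : a ≠ c) (hbc : b ≠ c) : 3 ≤ S.ncard := by
  have hsub : ({a, b, c} : Set V) ⊆ S := by rintro x (rfl | rfl | rfl) <;> assumption
  have h3 : ({a, b, c} : Set V).ncard = 3 := by
    rw [Set.ncard_insert_of_notMem (by simp [hab, hac]), Set.ncard_pair hbc]
  calc 3 = ({a, b, c} : Set V).ncard := h3.symm
  _ ≤ S.ncard := Set.ncard_le_ncard hsub

/-- key walk lemma: an interior vertex of a path has two distinct neighbors on the path. -/
lemma interior_two_nbrs {F : SimpleGraph V} {x y : V} {p : F.Walk x y} (hp : p.IsPath)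
    {w : V} (hw : w ∈ p.support) (hwx : w ≠ x) (hwy : w ≠ y) :
    ∃ a b, a ≠ b ∧ F.Adj w a ∧ F.Adj w b ∧ a ∈ p.support ∧ b ∈ p.support := by
  classical
  set q1 := p.takeUntil w hw with hq1
  set q2 := p.dropUntil w hw with hq2
  have hspec : q1.append q2 = p := p.take_spec hw
  have hnd : (q1.support ++ q2.support.tail).Nodup := by
    rw [← Walk.support_append, hspec]
    exact hp.support_nodup
  have hq1nil : ¬ q1.Nil := Walk.not_nil_of_ne (Ne.symm hwx)
  have hq2nil : ¬ q2.Nil := Walk.not_nil_of_ne hwy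
  have hrnil : ¬ q1.reverse.Nil := Walk.not_nil_of_ne hwx
  set a := q1.reverse.getVert 1 with ha
  have hadj_a : F.Adj w a := q1.reverse.adj_snd hrnil
  have haq1 : a ∈ q1.support := by
    have : a ∈ q1.reverse.support := by
      rw [Walk.mem_support_iff_exists_getVert]
      refine ⟨1, rfl, ?_⟩
      rw [Walk.length_reverse]
      rw [Walk.not_nil_iff_lt_length] at hq1nil
      omega
    rwa [Walk.support_reverse, List.mem_reverse] at this
  set b := q2.getVert 1 with hb
  have hadj_b : F.Adj w b := q2.adj_snd hq2nil
  have hbq2 : b ∈ q2.support.tail := by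
    rw [← Walk.support_tail_of_not_nil q2 hq2nil]
    exact q2.tail.start_mem_support
  have hab : a ≠ b := by
    intro h
    exact (List.disjoint_of_nodup_append hnd) haq1 (h ▸ hbq2)
  have hmem : ∀ c, c ∈ q1.support ∨ c ∈ q2.support.tail → c ∈ p.support := by
    intro c hc
    rw [← hspec, Walk.support_append, List.mem_append]
    exact hc
  exact ⟨a, b, hab, hadj_a, hadj_b, hmem a (Or.inl haq1), hmem b (Or.inr hbq2)⟩

lemma three_leaves {F : SimpleGraph V} (hdeg : ∀ t : V, (F.neighborSet t).ncard ≤ 2)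
    {x y z : V} (hxy : x ≠ y) (hxz : x ≠ z) (hyz : y ≠ z)
    (hx : (F.neighborSet x).ncard = 1) (hy : (F.neighborSet y).ncard = 1)
    (hz : (F.neighborSet z).ncard = 1)
    (hrxy : F.Reachable x y) (hrxz : F.Reachable x z) : False := by
  classical
  obtain ⟨w0⟩ := hrxy
  set p := (w0.toPath : F.Path x y).1 with hpdef
  have hp : p.IsPath := w0.toPath.2
  -- z is not on the path
  have hzsupp : z ∉ p.support := by
    intro hzs
    obtain ⟨a, b, hab, haadj, hbadj, _, _⟩ :=
      interior_two_nbrs hp hzs (Ne.symm hxz) (Ne.symm hyz)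
    have := two_le_ncard (show a ∈ F.neighborSet z from haadj)
      (show b ∈ F.neighborSet z from hbadj) hab
    omega
  -- crossing edge from z's side to the path
  obtain ⟨wz⟩ := hrxz
  obtain ⟨a, b, hadj, haS, hbS⟩ :=
    cross_lemma (S := {t | t ∈ p.support}) wz.reverse hzsupp p.start_mem_support
  by_cases hbx : b = x
  · subst hbx
    have hnnil : ¬ p.Nil := Walk.not_nil_of_ne hxy
    have hc : F.Adj b (p.getVert 1) := p.adj_snd hnnil
    have hcS : p.getVert 1 ∈ p.support := by
      rw [Walk.mem_support_iff_exists_getVert]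
      refine ⟨1, rfl, ?_⟩
      rw [Walk.not_nil_iff_lt_length] at hnnil
      omega
    have hne : a ≠ p.getVert 1 := fun h => haS (h ▸ hcS)
    have := two_le_ncard (show a ∈ F.neighborSet b from hadj.symm)
      (show p.getVert 1 ∈ F.neighborSet b from hc) hne
    omega
  by_cases hby : b = y
  · subst hby
    have hnnil : ¬ p.reverse.Nil := Walk.not_nil_of_ne (Ne.symm hxy)
    have hc : F.Adj b (p.reverse.getVert 1) := p.reverse.adj_snd hnnil
    have hcS : p.reverse.getVert 1 ∈ p.support := by
      have : p.reverse.getVert 1 ∈ p.reverse.support := by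
        rw [Walk.mem_support_iff_exists_getVert]
        refine ⟨1, rfl, ?_⟩
        rw [Walk.not_nil_iff_lt_length] at hnnil
        omega
      rwa [Walk.support_reverse, List.mem_reverse] at this
    have hne : a ≠ p.reverse.getVert 1 := fun h => haS (h ▸ hcS)
    have := two_le_ncard (show a ∈ F.neighborSet b from hadj.symm)
      (show p.reverse.getVert 1 ∈ F.neighborSet b from hc) hne
    omega
  · obtain ⟨c, d, hcd, hcadj, hdadj, hcS, hdS⟩ := interior_two_nbrs hp hbS hbx hby
    have hac : a ≠ c := fun h => haS (h ▸ hcS)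
    have had : a ≠ d := fun h => haS (h ▸ hdS)
    have := three_le_ncard (show a ∈ F.neighborSet b from hadj.symm)
      (show c ∈ F.neighborSet b from hcadj) (show d ∈ F.neighborSet b from hdadj)
      hac had hcd
    have := hdeg b
    omega
open scoped symmDiff

lemma symmdiff_adj (M N : G.Subgraph) (a b : V) :
    (M.spanningCoe ∆ N.spanningCoe).Adj a b ↔ ¬(M.Adj a b ↔ N.Adj a b) := by
  simp only [symmDiff_def, SimpleGraph.sup_adj, SimpleGraph.sdiff_adj,
    Subgraph.spanningCoe_adj]
  tauto

lemma matching_nbr_eq {M : G.Subgraph} (hM : M.IsMatching) {x p : V} (hp : M.Adj x p)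
    (hpu : ∀ y, M.Adj x y → y = p) : M.neighborSet x = {p} := by
  ext y
  simp only [Subgraph.mem_neighborSet, Set.mem_singleton_iff]
  exact ⟨fun h => hpu y h, fun h => h ▸ hp⟩

lemma matching_nbr_ncard_le {M : G.Subgraph} (hM : M.IsMatching) (x : V) :
    (M.neighborSet x).ncard ≤ 1 := by
  by_cases hx : x ∈ M.verts
  · obtain ⟨p, hp, hpu⟩ := hM hx
    rw [matching_nbr_eq hM hp hpu, Set.ncard_singleton]
  · have : M.neighborSet x = ∅ := by
      ext y
      simp only [Subgraph.mem_neighborSet, Set.mem_empty_iff_false, iff_false]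
      exact fun h => hx (M.edge_vert h)
    rw [this]
    simp

lemma symmdiff_deg_le_two {M N : G.Subgraph} (hM : M.IsMatching) (hN : N.IsMatching) (t : V) :
    ((M.spanningCoe ∆ N.spanningCoe).neighborSet t).ncard ≤ 2 := by
  have hsub : (M.spanningCoe ∆ N.spanningCoe).neighborSet t ⊆
      M.neighborSet t ∪ N.neighborSet t := by
    intro y hy
    rw [SimpleGraph.mem_neighborSet, symmdiff_adj] at hy
    by_cases h : M.Adj t y
    · exact Or.inl h
    · refine Or.inr ?_
      by_contra h'
      exact hy (iff_of_false h h')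
  calc ((M.spanningCoe ∆ N.spanningCoe).neighborSet t).ncard
      ≤ (M.neighborSet t ∪ N.neighborSet t).ncard := Set.ncard_le_ncard hsub
    _ ≤ (M.neighborSet t).ncard + (N.neighborSet t).ncard := Set.ncard_union_le _ _
    _ ≤ 2 := by
        have := matching_nbr_ncard_le hM t
        have := matching_nbr_ncard_le hN t
        omega

lemma symmdiff_deg_one {M N : G.Subgraph} (hM : M.IsMatching) {x : V}
    (hx : x ∈ M.verts) (hx' : x ∉ N.verts) :
    ((M.spanningCoe ∆ N.spanningCoe).neighborSet x).ncard = 1 := by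
  obtain ⟨p, hp, hpu⟩ := hM hx
  have : (M.spanningCoe ∆ N.spanningCoe).neighborSet x = {p} := by
    ext y
    simp only [SimpleGraph.mem_neighborSet, symmdiff_adj, Set.mem_singleton_iff]
    have hNy : ¬ N.Adj x y := fun h => hx' (N.edge_vert h)
    constructor
    · intro h
      by_cases hMy : M.Adj x y
      · exact hpu y hMy
      · exact absurd (iff_of_false hMy hNy) h
    · rintro rfl
      rw [iff_comm, iff_false_left hNy]
      exact fun h => h hp
  rw [this, Set.ncard_singleton]

/-- The stability lemma: deleting a vertex of `B` does not change `D`. -/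
lemma stability {s : Set V} {u : V} (hu : u ∈ Bs G s) : Ds G (s \ {u}) = Ds G s := by
  classical
  obtain ⟨hus, huD, d, hdD, hadj⟩ := hu
  obtain ⟨Ms, hMs⟩ := exists_maxIn G s
  obtain ⟨Ms', hMs'⟩ := exists_maxIn G (s \ {u})
  have huMs : u ∈ Ms.verts := mem_verts_of_not_mem_Ds hMs hus huD
  -- νs' = νs - 2
  obtain ⟨w, hw, _⟩ := hMs.1.1 huMs
  have hwne : u ≠ w := (Ms.adj_sub hw).ne
  have hMd : (Ms.deleteVerts {u, w}).IsMatching := deletePair_isMatching hMs.1.1 hw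
  have hMdIn : MIn G (s \ {u}) (Ms.deleteVerts {u, w}) := by
    refine ⟨hMd, ?_⟩
    rw [Subgraph.deleteVerts_verts]
    intro x hx
    refine ⟨hMs.1.2 hx.1, ?_⟩
    intro h
    rw [Set.mem_singleton_iff] at h
    exact hx.2 (by simp [h])
  have hsubuw : ({u, w} : Set V) ⊆ Ms.verts := by
    rintro x (rfl | rfl)
    · exact huMs
    · exact Ms.edge_vert hw.symm
  have hMdcard : (Ms.deleteVerts {u, w}).verts.ncard = Ms.verts.ncard - 2 := by
    rw [Subgraph.deleteVerts_verts, Set.ncard_diff hsubuw, Set.ncard_pair hwne]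
  have h2le : 2 ≤ Ms.verts.ncard := by
    rw [← Set.ncard_pair hwne]
    exact Set.ncard_le_ncard hsubuw
  have hlow : Ms.verts.ncard - 2 ≤ Ms'.verts.ncard := hMdcard ▸ hMs'.2 _ hMdIn
  have hups : Ms'.verts.ncard < Ms.verts.ncard := by
    rcases lt_or_ge Ms'.verts.ncard Ms.verts.ncard with h | h
    · exact h
    · exfalso
      have hIn : MIn G s Ms' := ⟨hMs'.1.1, hMs'.1.2.trans Set.diff_subset⟩
      have : MaxIn G s Ms' := maxIn_of_le hMs hIn h
      exact huD ⟨hus, Ms', this, fun hmem => (hMs'.1.2 hmem).2 rfl⟩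
  have heven : Even (Ms.verts.ncard) := matching_verts_even hMs.1.1
  have heven' : Even (Ms'.verts.ncard) := matching_verts_even hMs'.1.1
  have hnu' : Ms'.verts.ncard = Ms.verts.ncard - 2 := by
    obtain ⟨k, hk⟩ := heven
    obtain ⟨k', hk'⟩ := heven'
    omega
  ext v
  simp only [Ds, Set.mem_setOf_eq]
  constructor
  · -- Ds s' ⊆ Ds s
    rintro ⟨hvs', N, hNmax, hvN⟩
    have hvs : v ∈ s := hvs'.1
    have hvu : v ≠ u := hvs'.2
    refine ⟨hvs, ?_⟩
    by_contra hvD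
    push_neg at hvD
    have hvD' : v ∉ Ds G s := fun ⟨_, M, hM, hvM⟩ => hvM (hvD M hM)
    have hvd : v ≠ d := by
      rintro rfl
      obtain ⟨_, M, hM, hvM⟩ := hdD
      exact hvM (hvD M hM)
    have huN : u ∉ N.verts := fun h => (hNmax.1.2 h).2 rfl
    have hNcard : N.verts.ncard = Ms.verts.ncard - 2 := by
      have h1 : N.verts.ncard ≤ Ms'.verts.ncard := hMs'.2 _ hNmax.1
      have h2 : Ms'.verts.ncard ≤ N.verts.ncard := hNmax.2 _ hMs'.1
      omega
    have hNs : N.verts ⊆ s := hNmax.1.2.trans Set.diff_subset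
    have hdu : d ≠ u := fun h => huD (h ▸ hdD)
    by_cases hdN : d ∉ N.verts
    · -- add the edge u-d
      obtain ⟨hmatch, hcard⟩ := addEdge_isMatching hNmax.1.1 hadj huN hdN
      have hIn : MIn G s (N ⊔ G.subgraphOfAdj hadj) := by
        refine ⟨hmatch, ?_⟩
        rw [Subgraph.verts_sup, subgraphOfAdj_verts]
        rintro x (hx | rfl | rfl)
        · exact hNs hx
        · exact hus
        · exact hdD.1
      have hMax : MaxIn G s (N ⊔ G.subgraphOfAdj hadj) :=
        maxIn_of_le hMs hIn (by omega)
      have hvnot : v ∉ (N ⊔ G.subgraphOfAdj hadj).verts := by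
        rw [Subgraph.verts_sup, subgraphOfAdj_verts]
        rintro (hx | rfl | rfl)
        · exact hvN hx
        · exact hvu rfl
        · exact hvd rfl
      exact hvnot (hvD _ hMax)
    · push_neg at hdN
      -- the hard case
      obtain ⟨hds, M, hMmax, hdM⟩ := hdD
      have hvM : v ∈ M.verts := mem_verts_of_not_mem_Ds hMmax hvs hvD'
      have huM : u ∈ M.verts := mem_verts_of_not_mem_Ds hMmax hus huD
      have hvN' : v ∉ N.verts := hvN
      set F := M.spanningCoe ∆ N.spanningCoe with hF
      set K := {x | F.Reachable v x} with hK
      have hKcl : SwapClosed M N K := by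
        intro a b ha hne
        exact Reachable.trans (show F.Reachable v a from ha)
          ((symmdiff_adj M N a b).mpr hne).reachable
      have hvK : v ∈ K := show F.Reachable v v from Reachable.refl v
      have hMcard : M.verts.ncard = Ms.verts.ncard := le_antisymm (hMs.2 _ hMmax.1) (hMmax.2 _ hMs.1)
      set a := (M.verts ∩ K).ncard with hadef
      set b := (N.verts ∩ K).ncard with hbdef
      -- the swap M→N on K
      have hAmatch : (swapM M N K).IsMatching := swapM_isMatching hMmax.1.1 hNmax.1.1 hKcl
      obtain ⟨hAcard, haM⟩ := swapM_verts_ncard M N K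
      have hAIn : MIn G s (swapM M N K) := by
        refine ⟨hAmatch, ?_⟩
        rw [swapM_verts]
        rintro x (⟨hx, _⟩ | ⟨hx, _⟩)
        · exact hMmax.1.2 hx
        · exact hNs hx
      have hvA : v ∉ (swapM M N K).verts := by
        rw [swapM_verts]
        rintro (⟨_, hx⟩ | ⟨hx, _⟩)
        · exact hx hvK
        · exact hvN hx
      by_cases hba : a ≤ b
      · have : Ms.verts.ncard ≤ (swapM M N K).verts.ncard := by omega
        exact hvA (hvD _ (maxIn_of_le hMs hAIn this))
      · push_neg at hba
        -- swap N→M on K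
        have hBmatch : (swapM N M K).IsMatching :=
          swapM_isMatching hNmax.1.1 hMmax.1.1 (swapClosed_symm hKcl)
        obtain ⟨hBcard, hbN⟩ := swapM_verts_ncard N M K
        have hBIn : MIn G s (swapM N M K) := by
          refine ⟨hBmatch, ?_⟩
          rw [swapM_verts]
          rintro x (⟨hx, _⟩ | ⟨hx, _⟩)
          · exact hNs hx
          · exact hMmax.1.2 hx
        have hBle : (swapM N M K).verts.ncard ≤ Ms.verts.ncard := hMs.2 _ hBIn
        have hab2 : a = b + 2 := by
          have heA : Even ((swapM M N K).verts.ncard) := matching_verts_even hAmatch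
          have heB : Even ((swapM N M K).verts.ncard) := matching_verts_even hBmatch
          obtain ⟨k1, hk1⟩ := heA
          obtain ⟨k2, hk2⟩ := heB
          obtain ⟨k3, hk3⟩ := heven
          omega
        have hBmax : MaxIn G s (swapM N M K) := maxIn_of_le hMs hBIn (by omega)
        -- u must lie in K
        have huK : u ∈ K := by
          by_contra huK
          have : u ∉ (swapM N M K).verts := by
            rw [swapM_verts]
            rintro (⟨hx, _⟩ | ⟨_, hx⟩)
            · exact huN hx
            · exact huK hx
          exact huD ⟨hus, _, hBmax, this⟩
        -- d cannot lie in K: otherwise three leaves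
        have hdK : d ∉ K := by
          intro hdK
          have hdM' : d ∉ M.verts := hdM
          have huN' : u ∉ N.verts := huN
          have hvu' : v ≠ u := hvu
          have hdeg : ∀ t : V, (F.neighborSet t).ncard ≤ 2 :=
            symmdiff_deg_le_two hMmax.1.1 hNmax.1.1
          have h1 : (F.neighborSet v).ncard = 1 := symmdiff_deg_one hMmax.1.1 hvM hvN'
          have h2 : (F.neighborSet u).ncard = 1 := symmdiff_deg_one hMmax.1.1 huM huN'
          have h3 : (F.neighborSet d).ncard = 1 := by
            have := symmdiff_deg_one hNmax.1.1 hdN hdM'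
            rwa [symmDiff_comm] at this
          exact three_leaves hdeg hvu hvd (Ne.symm hdu) h1 h2 h3
            (show F.Reachable v u from huK) (show F.Reachable v d from hdK)
        -- now add the edge u-d to the swap M→N
        have huA : u ∉ (swapM M N K).verts := by
          rw [swapM_verts]
          rintro (⟨_, hx⟩ | ⟨hx, _⟩)
          · exact hx huK
          · exact huN hx
        have hdA : d ∉ (swapM M N K).verts := by
          rw [swapM_verts]
          rintro (⟨hx, _⟩ | ⟨_, hx⟩)
          · exact hdM hx
          · exact hdK hx
        obtain ⟨hmatch2, hcard2⟩ := addEdge_isMatching hAmatch hadj.symm hdA huA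
        have hIn2 : MIn G s (swapM M N K ⊔ G.subgraphOfAdj hadj.symm) := by
          refine ⟨hmatch2, ?_⟩
          rw [Subgraph.verts_sup, subgraphOfAdj_verts]
          rintro x (hx | rfl | rfl)
          · exact hAIn.2 hx
          · exact hds
          · exact hus
        have hMax2 : MaxIn G s (swapM M N K ⊔ G.subgraphOfAdj hadj.symm) :=
          maxIn_of_le hMs hIn2 (by omega)
        have hvnot2 : v ∉ (swapM M N K ⊔ G.subgraphOfAdj hadj.symm).verts := by
          rw [Subgraph.verts_sup, subgraphOfAdj_verts]
          rintro (hx | rfl | rfl)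
          · exact hvA hx
          · exact hvd rfl
          · exact hvu rfl
        exact hvnot2 (hvD _ hMax2)
  · -- Ds s ⊆ Ds s'
    rintro ⟨hvs, M, hMmax, hvM⟩
    have hvu : v ≠ u := by
      rintro rfl
      exact huD ⟨hvs, M, hMmax, hvM⟩
    have huM : u ∈ M.verts := mem_verts_of_not_mem_Ds hMmax hus huD
    obtain ⟨w', hw', _⟩ := hMmax.1.1 huM
    have hw'ne : u ≠ w' := (M.adj_sub hw').ne
    have hMd2 : (M.deleteVerts {u, w'}).IsMatching := deletePair_isMatching hMmax.1.1 hw'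
    have hIn : MIn G (s \ {u}) (M.deleteVerts {u, w'}) := by
      refine ⟨hMd2, ?_⟩
      rw [Subgraph.deleteVerts_verts]
      intro x hx
      refine ⟨hMmax.1.2 hx.1, ?_⟩
      intro h
      rw [Set.mem_singleton_iff] at h
      exact hx.2 (by simp [h])
    have hsub2 : ({u, w'} : Set V) ⊆ M.verts := by
      rintro x (rfl | rfl)
      · exact huM
      · exact M.edge_vert hw'.symm
    have hcard2 : (M.deleteVerts {u, w'}).verts.ncard = Ms.verts.ncard - 2 := by
      rw [Subgraph.deleteVerts_verts, Set.ncard_diff hsub2, Set.ncard_pair hw'ne,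
        le_antisymm (hMs.2 _ hMmax.1) (hMmax.2 _ hMs.1)]
    have hmax2 : MaxIn G (s \ {u}) (M.deleteVerts {u, w'}) :=
      maxIn_of_le hMs' hIn (by omega)
    refine ⟨⟨hvs, hvu⟩, M.deleteVerts {u, w'}, hmax2, ?_⟩
    rw [Subgraph.deleteVerts_verts]
    rintro ⟨hx, _⟩
    exact hvM hx
lemma Bs_stability {s : Set V} {u : V} (hu : u ∈ Bs G s) :
    Bs G (s \ {u}) = Bs G s \ {u} := by
  have hD := stability hu
  ext x
  simp only [Bs, Set.mem_setOf_eq, Set.mem_diff, Set.mem_singleton_iff, hD]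
  constructor
  · rintro ⟨⟨hxs, hxu⟩, hxD, w, hwD, hadj⟩
    exact ⟨⟨hxs, hxD, w, hwD, hadj⟩, hxu⟩
  · rintro ⟨⟨hxs, hxD, w, hwD, hadj⟩, hxu⟩
    exact ⟨⟨hxs, hxu⟩, hxD, w, hwD, hadj⟩

lemma Cs_stability {s : Set V} {u : V} (hu : u ∈ Bs G s) :
    Cs G (s \ {u}) = Cs G s := by
  have hD := stability hu
  have hB := Bs_stability hu
  ext x
  simp only [Cs, Set.mem_diff, Set.mem_union, hD, hB, Set.mem_singleton_iff]
  constructor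
  · rintro ⟨⟨hxs, hxu⟩, hx⟩
    exact ⟨hxs, fun h => hx (by rcases h with h | h; exacts [Or.inl h, Or.inr ⟨h, hxu⟩])⟩
  · rintro ⟨hxs, hx⟩
    have hxu : x ≠ u := by
      rintro rfl
      exact hx (Or.inr hu)
    exact ⟨⟨hxs, hxu⟩, fun h => hx (by rcases h with h | ⟨h, _⟩; exacts [Or.inl h, Or.inr h])⟩

/-- Base case: when `Bs` is empty, a maximum matching restricted to `Cs` covers `Cs`. -/
lemma base_case {s : Set V} (hB : Bs G s = ∅) :
    ∃ M : G.Subgraph, M.IsMatching ∧ M.verts = Cs G s ∧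
      ∀ a b, M.Adj a b → a ∈ Cs G s ∧ b ∈ Cs G s := by
  obtain ⟨Ms, hMs⟩ := exists_maxIn G s
  -- every vertex of Cs is covered and its partner is in Cs
  have hkey : ∀ c ∈ Cs G s, ∀ w, Ms.Adj c w → w ∈ Cs G s := by
    intro c hc w hw
    have hws : w ∈ s := hMs.1.2 (Ms.edge_vert hw.symm)
    have hcD : c ∉ Ds G s := fun h => hc.2 (Or.inl h)
    by_cases hwD : w ∈ Ds G s
    · exact absurd (show c ∈ Bs G s from ⟨hc.1, hcD, w, hwD, Ms.adj_sub hw⟩) (by simp [hB])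
    · by_cases hwB : w ∈ Bs G s
      · exact absurd hwB (by simp [hB])
      · exact ⟨hws, fun h => by rcases h with h | h; exacts [hwD h, hwB h]⟩
  have hcov : ∀ c ∈ Cs G s, c ∈ Ms.verts := by
    intro c hc
    exact mem_verts_of_not_mem_Ds hMs hc.1 (fun h => hc.2 (Or.inl h))
  refine ⟨{
    verts := Cs G s
    Adj := fun a b => Ms.Adj a b ∧ a ∈ Cs G s ∧ b ∈ Cs G s
    adj_sub := fun h => Ms.adj_sub h.1
    edge_vert := fun h => h.2.1
    symm := ⟨fun a b ⟨h, ha, hb⟩ => ⟨h.symm, hb, ha⟩⟩ }, ?_, rfl, fun a b h => h.2⟩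
  intro v hv
  obtain ⟨p, hp, hpu⟩ := hMs.1.1 (hcov v hv)
  refine ⟨p, ⟨hp, hv, hkey v hv p hp⟩, ?_⟩
  intro y hy
  exact hpu y hy.1

/-- Main lemma by induction on the size of `Bs`. -/
lemma main_lemma (G : SimpleGraph V) (s : Set V) :
    ∃ M : G.Subgraph, M.IsMatching ∧ M.verts = Cs G s ∧
      ∀ a b, M.Adj a b → a ∈ Cs G s ∧ b ∈ Cs G s := by
  suffices H : ∀ (n : ℕ) (s : Set V), (Bs G s).ncard = n →
      ∃ M : G.Subgraph, M.IsMatching ∧ M.verts = Cs G s ∧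
        ∀ a b, M.Adj a b → a ∈ Cs G s ∧ b ∈ Cs G s from H _ s rfl
  intro n
  induction n with
  | zero =>
    intro s hs
    exact base_case ((Set.ncard_eq_zero (Set.toFinite _)).mp hs)
  | succ n ih =>
    intro s hs
    have hne : (Bs G s).Nonempty := Set.nonempty_of_ncard_ne_zero (by omega)
    obtain ⟨u, hu⟩ := hne
    have hcard : (Bs G (s \ {u})).ncard = n := by
      rw [Bs_stability hu, Set.ncard_diff_singleton_of_mem hu, hs]
      omega
    obtain ⟨M, h1, h2, h3⟩ := ih (s \ {u}) hcard
    rw [Cs_stability hu] at h2 h3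
    exact ⟨M, h1, h2, h3⟩
end GEaux

section Final

open GEaux

variable {V : Type*} [Fintype V] {G : SimpleGraph V}

lemma maxIn_univ_iff (M : G.Subgraph) : MaxIn G Set.univ M ↔ IsMaximumMatching M := by
  constructor
  · rintro ⟨⟨hM, _⟩, hmax⟩
    refine ⟨hM, fun N hN => ?_⟩
    have := hmax N ⟨hN, Set.subset_univ _⟩
    have h1 := matching_ncard hM
    have h2 := matching_ncard hN
    omega
  · rintro ⟨hM, hmax⟩
    refine ⟨⟨hM, Set.subset_univ _⟩, fun N ⟨hN, _⟩ => ?_⟩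
    have := hmax N hN
    have h1 := matching_ncard hM
    have h2 := matching_ncard hN
    omega

lemma Ds_univ_eq : Ds G Set.univ = DSet G := by
  ext v
  simp only [Ds, DSet, Set.mem_setOf_eq, Set.mem_univ, true_and]
  constructor
  · rintro ⟨M, hM, hv⟩
    exact ⟨M, (maxIn_univ_iff M).mp hM, hv⟩
  · rintro ⟨M, hM, hv⟩
    exact ⟨M, (maxIn_univ_iff M).mpr hM, hv⟩

lemma Bs_univ_eq : Bs G Set.univ = BSet G := by
  ext v
  simp only [Bs, BSet, Set.mem_setOf_eq, Set.mem_univ, true_and, Ds_univ_eq]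

lemma Cs_univ_eq : Cs G Set.univ = CSet G := by
  ext v
  simp only [Cs, CSet, Set.mem_diff, Set.mem_univ, true_and, Set.mem_compl_iff,
    Set.mem_union, Ds_univ_eq, Bs_univ_eq]

end Final

theorem stmt11 {V : Type*} [Fintype V] (G : SimpleGraph V) :
    ∃ M : (G.induce (CSet G)).Subgraph, M.IsPerfectMatching := by
  classical
  obtain ⟨M, hM, hverts, hedges⟩ := GEaux.main_lemma G Set.univ
  rw [Cs_univ_eq] at hverts hedges
  refine ⟨{
    verts := Set.univ
    Adj := fun x y => M.Adj x.1 y.1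
    adj_sub := by
      intro x y h
      exact M.adj_sub h
    edge_vert := fun _ => Set.mem_univ _
    symm := ⟨fun x y h => h.symm⟩ }, ?_, fun _ => Set.mem_univ _⟩
  intro x _
  have hx : x.1 ∈ M.verts := by rw [hverts]; exact x.2
  obtain ⟨p, hp, hpu⟩ := hM hx
  have hpC : p ∈ CSet G := (hedges x.1 p hp).2
  refine ⟨⟨p, hpC⟩, hp, ?_⟩
  intro y hy
  exact Subtype.ext (hpu y.1 hy)
end

section
/- Let G be a nontrivial connected graph. The line graph L(G) contains a perfect matching if and only if G has an even number of edges. -/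
open Polynomial SimpleGraph

section AuxPairing


/-- Pair up the elements of an even-cardinality finset by a fixed-point-free involution. -/
lemma exists_pairing {α : Type*} [DecidableEq α] :
    ∀ (n : ℕ) (S : Finset α), S.card = n → Even n →
    ∃ g : α → α, (∀ i, i ∉ S → g i = i) ∧ (∀ i ∈ S, g i ∈ S) ∧
      (∀ i ∈ S, g (g i) = i) ∧ (∀ i ∈ S, g i ≠ i) := by
  intro n
  induction n using Nat.strong_induction_on with
  | _ n ih =>
    intro S hcard heven
    rcases Nat.eq_zero_or_pos n with h0 | hpos
    · subst h0
      refine ⟨id, fun _ _ => rfl, ?_, ?_, ?_⟩ <;>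
        simp_all [Finset.card_eq_zero.mp hcard]
    · have h2 : 2 ≤ n := by
        rcases heven with ⟨k, hk⟩; omega
      have h1 : 1 < S.card := by omega
      obtain ⟨a, ha, b, hb, hab⟩ := Finset.one_lt_card.mp h1
      set S' := (S.erase a).erase b with hS'
      have hcS' : S'.card = n - 2 := by
        rw [hS', Finset.card_erase_of_mem (Finset.mem_erase.mpr ⟨Ne.symm hab, hb⟩),
          Finset.card_erase_of_mem ha, hcard]
        omega
      obtain ⟨g₀, hg0out, hg0mem, hg0inv, hg0ne⟩ := ih (n - 2) (by omega) S' hcS'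
        (by rcases heven with ⟨k, hk⟩; exact ⟨k - 1, by omega⟩)
      have haS' : a ∉ S' := by simp [hS']
      have hbS' : b ∉ S' := by simp [hS']
      refine ⟨fun i => if i = a then b else if i = b then a else g₀ i, ?_, ?_, ?_, ?_⟩
      · intro i hi
        have hia : i ≠ a := fun h => hi (h ▸ ha)
        have hib : i ≠ b := fun h => hi (h ▸ hb)
        simp only [hia, hib, if_false]
        exact hg0out i (fun h => hi (Finset.mem_of_mem_erase (Finset.mem_of_mem_erase h)))
      · intro i hi
        by_cases hia : i = a
        · simp [hia, hab, hb]
        by_cases hib : i = b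
        · simp [hib, Ne.symm hab, hab, ha]
        · simp only [hia, hib, if_false]
          have : i ∈ S' := by simp [hS', hia, hib, hi]
          exact Finset.mem_of_mem_erase (Finset.mem_of_mem_erase (hg0mem i this))
      · intro i hi
        by_cases hia : i = a
        · simp [hia, hab, Ne.symm hab]
        by_cases hib : i = b
        · simp [hib, hab, Ne.symm hab]
        · have hiS' : i ∈ S' := by simp [hS', hia, hib, hi]
          have h1 : g₀ i ∈ S' := hg0mem i hiS'
          have h2 : g₀ i ≠ a := fun h => haS' (h ▸ h1)
          have h3 : g₀ i ≠ b := fun h => hbS' (h ▸ h1)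
          simp only [hia, hib, h2, h3, if_false]
          exact hg0inv i hiS'
      · intro i hi
        by_cases hia : i = a
        · simp [hia, Ne.symm hab]
        by_cases hib : i = b
        · simp [hib, hab, Ne.symm hab]
        · have hiS' : i ∈ S' := by simp [hS', hia, hib, hi]
          simp only [hia, hib, if_false]
          exact hg0ne i hiS'

lemma exists_walk_avoid {V : Type*} [DecidableEq V] (G : SimpleGraph V) {r u w : V}
    (hmax : ∀ x, G.Reachable r x → G.dist r x ≤ G.dist r u)
    (hw : G.Reachable r w) (hwu : w ≠ u) :
    ∃ p : G.Walk r w, u ∉ p.support := by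
  obtain ⟨p, hp⟩ := hw.exists_walk_length_eq_dist
  refine ⟨p, fun hu => ?_⟩
  have hspec := p.take_spec hu
  have hlen : (p.takeUntil u hu).length + (p.dropUntil u hu).length = p.length := by
    conv_rhs => rw [← hspec]
    rw [SimpleGraph.Walk.length_append]
  have h1 : G.dist r u ≤ (p.takeUntil u hu).length := SimpleGraph.dist_le _
  have h2 : (p.dropUntil u hu).length ≠ 0 := fun h =>
    hwu (SimpleGraph.Walk.eq_of_length_eq_zero h).symm
  have h3 : G.dist r w ≤ G.dist r u := hmax w hw
  omega

lemma reachable_delete {V : Type*} [DecidableEq V] (G : SimpleGraph V) {r u w : V}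
    (hmax : ∀ x, G.Reachable r x → G.dist r x ≤ G.dist r u)
    (hw : G.Reachable r w) (hwu : w ≠ u) :
    (G.deleteEdges (G.incidenceSet u)).Reachable r w := by
  obtain ⟨p, hsup⟩ := exists_walk_avoid G hmax hw hwu
  refine ⟨p.transfer _ fun e he => ?_⟩
  rw [SimpleGraph.edgeSet_deleteEdges]
  refine ⟨p.edges_subset_edgeSet he, fun hinc => ?_⟩
  have hue : u ∈ e := hinc.2
  obtain ⟨x, rfl⟩ := Sym2.mem_iff_exists.mp hue
  exact hsup (p.fst_mem_support_of_mem_edges he)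


open scoped Classical in
noncomputable def itemsOf {V : Type*} [Fintype V] (G : SimpleGraph V) (P : Finset V) :
    Finset (Sym2 V) :=
  G.edgeFinset ∪ P.image Sym2.diag

lemma mem_itemsOf {V : Type*} [Fintype V] {G : SimpleGraph V} {P : Finset V} {i : Sym2 V} :
    i ∈ itemsOf G P ↔ i ∈ G.edgeSet ∨ ∃ p ∈ P, i = Sym2.diag p := by
  classical
  simp only [itemsOf, Finset.mem_union, Finset.mem_image, Set.mem_toFinset,
    SimpleGraph.mem_edgeFinset]
  constructor
  · rintro (h | ⟨p, hp, rfl⟩)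
    · exact Or.inl h
    · exact Or.inr ⟨p, hp, rfl⟩
  · rintro (h | ⟨p, hp, rfl⟩)
    · exact Or.inl h
    · exact Or.inr ⟨p, hp, rfl⟩

def GoodPairing {V : Type*} (S : Finset (Sym2 V)) (r : V) (f : Sym2 V → Sym2 V) : Prop :=
  (∀ i ∈ S, f i ∈ S) ∧ (∀ i ∈ S, f (f i) = i) ∧
  (∀ i ∈ S, f i ≠ i → ∃ x, x ∈ i ∧ x ∈ f i) ∧
  (∀ i ∈ S, f i = i → r ∈ i) ∧
  (Even S.card → ∀ i ∈ S, f i ≠ i)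

lemma mem_diag_iff {α : Type*} {x p : α} : x ∈ Sym2.diag p ↔ x = p := by
  simp [Sym2.diag, Sym2.mem_iff]

lemma ne_diag_of_mem_edgeSet {V : Type*} {G : SimpleGraph V} {i : Sym2 V} (h : i ∈ G.edgeSet)
    (p : V) : i ≠ Sym2.diag p := fun he =>
  G.not_isDiag_of_mem_edgeSet h (he ▸ Sym2.diag_isDiag p)

lemma exists_adj_of_reachable_ne {V : Type*} {G : SimpleGraph V} {r u : V}
    (h : G.Reachable r u) (hne : u ≠ r) : ∃ v, G.Adj u v := by
  obtain ⟨p⟩ := h.symm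
  cases p with
  | nil => exact absurd rfl hne
  | cons h q => exact ⟨_, h⟩

lemma pairing_base {V : Type*} [Fintype V] (G : SimpleGraph V) (hE : G.edgeSet = ∅) (r : V)
    (P : Finset V) (hP : ∀ p ∈ P, G.Reachable r p) :
    ∃ f : Sym2 V → Sym2 V, GoodPairing (itemsOf G P) r f := by
  have hbot : G = ⊥ := SimpleGraph.edgeSet_eq_empty.mp hE
  have hsub : ∀ i ∈ itemsOf G P, i = Sym2.diag r := by
    intro i hi
    rcases mem_itemsOf.mp hi with h | ⟨p, hp, rfl⟩
    · rw [hE] at h; exact absurd h (Set.notMem_empty _)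
    · have : p = r := by
        have := hP p hp
        rw [hbot, SimpleGraph.reachable_bot] at this
        exact this.symm
      rw [this]
  refine ⟨id, fun i hi => hi, fun i _ => rfl, fun i _ h => absurd rfl h, ?_, ?_⟩
  · intro i hi _
    rw [hsub i hi]; exact mem_diag_iff.mpr rfl
  · intro heven i hi
    have h1 : itemsOf G P = {Sym2.diag r} := by
      apply Finset.eq_singleton_iff_nonempty_unique_mem.mpr ⟨⟨i, hi⟩, hsub⟩
    rw [h1] at heven
    simp at heven

section
variable {V : Type*} [Fintype V]

open scoped Classical in
lemma main_pairing :
    ∀ (n : ℕ) (G : SimpleGraph V), G.edgeFinset.card ≤ n →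
    ∀ (r : V) (P : Finset V),
    (∀ w, (∃ x, G.Adj w x) → G.Reachable r w) →
    (∀ p ∈ P, G.Reachable r p) →
    ∃ f : Sym2 V → Sym2 V, GoodPairing (itemsOf G P) r f := by
  intro n
  induction n with
  | zero =>
    intro G hcard r P hreach hP
    have hE : G.edgeSet = ∅ := by
      have h1 : G.edgeFinset = ∅ := Finset.card_eq_zero.mp (Nat.le_zero.mp hcard)
      rw [SimpleGraph.edgeFinset_eq_empty] at h1
      rw [h1, SimpleGraph.edgeSet_bot]
    exact pairing_base G hE r P hP
  | succ n ih =>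
    intro G hcard r P hreach hP
    by_cases hE : G.edgeSet = ∅
    · exact pairing_base G hE r P hP
    obtain ⟨a, b, hadj⟩ : ∃ a b, G.Adj a b := by
      by_contra h
      push_neg at h
      exact hE (by rw [SimpleGraph.edgeSet_eq_empty]; ext x y; simp [h x y])
    -- pick u at maximal distance from r
    obtain ⟨u, huR, hmaxaux⟩ := Finset.exists_max_image
      (Finset.univ.filter (fun v => G.Reachable r v)) (fun v => G.dist r v)
      ⟨r, Finset.mem_filter.mpr ⟨Finset.mem_univ r, SimpleGraph.Reachable.refl r⟩⟩
    have hruR : G.Reachable r u := by simpa using huR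
    have hmax : ∀ x, G.Reachable r x → G.dist r x ≤ G.dist r u := fun x hx =>
      hmaxaux x (by simpa using hx)
    obtain ⟨c, hcr, hcReach⟩ : ∃ c, c ≠ r ∧ G.Reachable r c := by
      by_cases h : a = r
      · exact ⟨b, h ▸ hadj.ne', hreach b ⟨a, hadj.symm⟩⟩
      · exact ⟨a, h, hreach a ⟨b, hadj⟩⟩
    have hdistpos : 0 < G.dist r u :=
      lt_of_lt_of_le (hcReach.pos_dist_of_ne (fun h => hcr h.symm)) (hmax c hcReach)
    have hur : u ≠ r := by
      intro h; rw [h] at hdistpos; simp [SimpleGraph.dist_self] at hdistpos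
    obtain ⟨v, huv⟩ := exists_adj_of_reachable_ne hruR hur
    -- the reduced graph
    set G' := G.deleteEdges (G.incidenceSet u) with hG'
    have hG'edgeSet : ∀ i, i ∈ G'.edgeSet ↔ i ∈ G.edgeSet ∧ u ∉ i := by
      intro i
      rw [hG', SimpleGraph.edgeSet_deleteEdges]
      simp only [Set.mem_diff, SimpleGraph.incidenceSet, Set.mem_sep_iff]
      tauto
    have hsubE : G'.edgeFinset ⊆ G.edgeFinset := by
      intro i hi
      rw [SimpleGraph.mem_edgeFinset] at *
      exact ((hG'edgeSet i).mp hi).1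
    have hcard' : G'.edgeFinset.card ≤ n := by
      have hss : G'.edgeFinset ⊂ G.edgeFinset := by
        rw [Finset.ssubset_iff_of_subset hsubE]
        refine ⟨s(u, v), ?_, ?_⟩
        · rw [SimpleGraph.mem_edgeFinset]; exact huv
        · rw [SimpleGraph.mem_edgeFinset, hG'edgeSet]
          rintro ⟨-, h⟩; exact h (Sym2.mem_mk_left u v)
      have := Finset.card_lt_card hss
      omega
    have hreach' : ∀ w, G.Reachable r w → w ≠ u → G'.Reachable r w := fun w hw hwu =>
      reachable_delete G hmax hw hwu
    have hreachG' : ∀ w, (∃ x, G'.Adj w x) → G'.Reachable r w := by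
      rintro w ⟨x, hwx⟩
      rw [hG', SimpleGraph.deleteEdges_adj] at hwx
      have hwu : w ≠ u := by
        rintro rfl
        exact hwx.2 ⟨hwx.1, Sym2.mem_mk_left _ _⟩
      exact hreach' w (hreach w ⟨x, hwx.1⟩) hwu
    -- the items at u
    set A : Finset (Sym2 V) := (itemsOf G P).filter (fun i => u ∈ i) with hA
    have hAmem : ∀ i, i ∈ A ↔ i ∈ itemsOf G P ∧ u ∈ i := by
      intro i; simp [hA]
    have hAu : ∀ i ∈ A, u ∈ i := fun i hi => ((hAmem i).mp hi).2
    have hAS : A ⊆ itemsOf G P := Finset.filter_subset _ _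
    by_cases hApar : Even A.card
    · -- even case: pair A internally, recurse on G' with pendings P.erase u
      have key : ∀ i, i ∈ itemsOf G' (P.erase u) ↔ i ∈ itemsOf G P ∧ i ∉ A := by
        intro i
        simp only [mem_itemsOf, hAmem]
        constructor
        · rintro (h | ⟨p, hp, rfl⟩)
          · rw [hG'edgeSet] at h
            exact ⟨Or.inl h.1, fun hc => h.2 hc.2⟩
          · rw [Finset.mem_erase] at hp
            refine ⟨Or.inr ⟨p, hp.2, rfl⟩, fun hc => hp.1 (mem_diag_iff.mp hc.2).symm⟩
        · rintro ⟨h1, h2⟩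
          rcases h1 with h | ⟨p, hp, rfl⟩
          · exact Or.inl ((hG'edgeSet i).mpr ⟨h, fun hc => h2 ⟨Or.inl h, hc⟩⟩)
          · refine Or.inr ⟨p, Finset.mem_erase.mpr ⟨?_, hp⟩, rfl⟩
            rintro rfl
            exact h2 ⟨Or.inr ⟨p, hp, rfl⟩, mem_diag_iff.mpr rfl⟩
      have hP' : ∀ p ∈ P.erase u, G'.Reachable r p := by
        intro p hp
        rw [Finset.mem_erase] at hp
        exact hreach' p (hP p hp.2) hp.1
      obtain ⟨f', hm', hinv', hcompat', hfix', heven'⟩ := ih G' (by convert hcard') r (P.erase u) hreachG' hP'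
      obtain ⟨g, hgout, hgmem, hginv, hgne⟩ := exists_pairing A.card A rfl hApar
      have hS'card : (itemsOf G' (P.erase u)).card + A.card = (itemsOf G P).card := by
        have : itemsOf G' (P.erase u) = itemsOf G P \ A :=
          Finset.ext fun i => by rw [key i, Finset.mem_sdiff]
        rw [this]
        exact Finset.card_sdiff_add_card_eq_card hAS
      set F : Sym2 V → Sym2 V := fun i => if i ∈ A then g i else f' i with hFdef
      have hF : ∀ j, F j = if j ∈ A then g j else f' j := fun _ => rfl
      refine ⟨F, ?_, ?_, ?_, ?_, ?_⟩
      · intro i hi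
        by_cases hiA : i ∈ A
        · rw [hF i, if_pos hiA]; exact hAS (hgmem i hiA)
        · rw [hF i, if_neg hiA]
          have := hm' i ((key i).mpr ⟨hi, hiA⟩)
          exact ((key _).mp this).1
      · intro i hi
        by_cases hiA : i ∈ A
        · rw [hF i, if_pos hiA, hF (g i), if_pos (hgmem i hiA)]; exact hginv i hiA
        · have hiS' : i ∈ itemsOf G' (P.erase u) := (key i).mpr ⟨hi, hiA⟩
          have hfi := hm' i hiS'
          rw [hF i, if_neg hiA, hF (f' i), if_neg ((key _).mp hfi).2]
          exact hinv' i hiS'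
      · intro i hi hne
        by_cases hiA : i ∈ A
        · rw [hF i, if_pos hiA]
          exact ⟨u, hAu i hiA, hAu _ (hgmem i hiA)⟩
        · have hiS' : i ∈ itemsOf G' (P.erase u) := (key i).mpr ⟨hi, hiA⟩
          rw [hF i, if_neg hiA] at hne ⊢
          exact hcompat' i hiS' hne
      · intro i hi hfixed
        by_cases hiA : i ∈ A
        · rw [hF i, if_pos hiA] at hfixed
          exact absurd hfixed (hgne i hiA)
        · have hiS' : i ∈ itemsOf G' (P.erase u) := (key i).mpr ⟨hi, hiA⟩
          rw [hF i, if_neg hiA] at hfixed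
          exact hfix' i hiS' hfixed
      · intro heven i hi
        by_cases hiA : i ∈ A
        · rw [hF i, if_pos hiA]; exact hgne i hiA
        · have hiS' : i ∈ itemsOf G' (P.erase u) := (key i).mpr ⟨hi, hiA⟩
          rw [hF i, if_neg hiA]
          refine heven' ?_ i hiS'
          rw [Nat.even_iff] at *
          omega
    · -- odd case: |A| is odd
      have he₀E : s(u, v) ∈ G.edgeSet := (SimpleGraph.mem_edgeSet G).mpr huv
      set e₀ : Sym2 V := s(u, v) with he₀def
      have he₀S : e₀ ∈ itemsOf G P := mem_itemsOf.mpr (Or.inl he₀E)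
      have hue₀ : u ∈ e₀ := Sym2.mem_mk_left u v
      have hve₀ : v ∈ e₀ := Sym2.mem_mk_right u v
      have he₀A : e₀ ∈ A := (hAmem _).mpr ⟨he₀S, hue₀⟩
      have hvu : v ≠ u := huv.ne'
      have hA'par : Even ((A.erase e₀).card) := by
        have h1 := Finset.card_erase_of_mem he₀A
        have h2 : 0 < A.card := Finset.card_pos.mpr ⟨e₀, he₀A⟩
        rw [Nat.even_iff] at hApar ⊢
        omega
      obtain ⟨g, hgout, hgmem, hginv, hgne⟩ := exists_pairing _ (A.erase e₀) rfl hA'par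
      have hgA : ∀ i ∈ A.erase e₀, g i ∈ A := fun i hi => Finset.mem_of_mem_erase (hgmem i hi)
      have hvr : G.Reachable r v := hreach v ⟨u, huv.symm⟩
      have hv' : G'.Reachable r v := hreach' v hvr hvu
      have hdiagvA : Sym2.diag v ∉ A := fun h => hvu (mem_diag_iff.mp (hAu _ h)).symm
      have he₀diag : e₀ ≠ Sym2.diag v := ne_diag_of_mem_edgeSet he₀E v
      have hA2 : ¬ (A.card % 2 = 0) := by rw [← Nat.even_iff]; exact hApar
      by_cases hvP : v ∈ P
      · -- subcase: there is already a pending at v; pair e₀ with it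
        set P' := (P.erase u).erase v with hP'def
        have key : ∀ i, i ∈ itemsOf G' P' ↔
            i ∈ itemsOf G P ∧ i ∉ A ∧ i ≠ Sym2.diag v := by
          intro i
          simp only [mem_itemsOf, hAmem, hP'def, Finset.mem_erase]
          constructor
          · rintro (h | ⟨p, ⟨hpv, hpu, hpP⟩, rfl⟩)
            · rw [hG'edgeSet] at h
              exact ⟨Or.inl h.1, fun hc => h.2 hc.2, ne_diag_of_mem_edgeSet h.1 v⟩
            · exact ⟨Or.inr ⟨p, hpP, rfl⟩, fun hc => hpu (mem_diag_iff.mp hc.2).symm,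
                fun hc => hpv (Sym2.diag_injective hc)⟩
          · rintro ⟨h1, h2, h3⟩
            rcases h1 with h | ⟨p, hp, rfl⟩
            · exact Or.inl ((hG'edgeSet i).mpr ⟨h, fun hui => h2 ⟨Or.inl h, hui⟩⟩)
            · refine Or.inr ⟨p, ⟨fun hc => h3 (by rw [hc]), ?_, hp⟩, rfl⟩
              rintro rfl
              exact h2 ⟨Or.inr ⟨p, hp, rfl⟩, mem_diag_iff.mpr rfl⟩
        have hP'reach : ∀ p ∈ P', G'.Reachable r p := by
          intro p hp
          rw [hP'def, Finset.mem_erase, Finset.mem_erase] at hp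
          exact hreach' p (hP p hp.2.2) hp.2.1
        obtain ⟨f', hm', hinv', hcompat', hfix', heven'⟩ := ih G' (by convert hcard') r P' hreachG' hP'reach
        have hdvS : Sym2.diag v ∈ itemsOf G P := mem_itemsOf.mpr (Or.inr ⟨v, hvP, rfl⟩)
        have hdvS' : Sym2.diag v ∉ itemsOf G' P' := fun h => ((key _).mp h).2.2 rfl
        have he₀S' : e₀ ∉ itemsOf G' P' := fun h => ((key _).mp h).2.1 he₀A
        have hcard2 : (itemsOf G' P').card + 1 + A.card = (itemsOf G P).card := by
          have h1 : itemsOf G' P' = (itemsOf G P \ A).erase (Sym2.diag v) :=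
            Finset.ext fun i => by
              rw [key i, Finset.mem_erase, Finset.mem_sdiff]
              exact ⟨fun ⟨a, b, c⟩ => ⟨c, a, b⟩, fun ⟨c, a, b⟩ => ⟨a, b, c⟩⟩
          have hdv2 : Sym2.diag v ∈ itemsOf G P \ A := Finset.mem_sdiff.mpr ⟨hdvS, hdiagvA⟩
          have h2 := Finset.card_erase_of_mem hdv2
          have h3 := Finset.card_sdiff_add_card_eq_card hAS
          have h4 : 0 < (itemsOf G P \ A).card := Finset.card_pos.mpr ⟨_, hdv2⟩
          rw [h1]
          omega
        set F : Sym2 V → Sym2 V := fun i =>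
          if i = e₀ then Sym2.diag v else if i = Sym2.diag v then e₀
          else if i ∈ A then g i else f' i with hFdef
        have hF : ∀ j, F j = if j = e₀ then Sym2.diag v else if j = Sym2.diag v then e₀
            else if j ∈ A then g j else f' j := fun _ => rfl
        have hFe₀ : F e₀ = Sym2.diag v := by rw [hF, if_pos rfl]
        have hFdv : F (Sym2.diag v) = e₀ := by
          rw [hF, if_neg (Ne.symm he₀diag), if_pos rfl]
        have hFA : ∀ i ∈ A.erase e₀, F i = g i := by
          intro i hi
          rw [Finset.mem_erase] at hi
          have hidv : i ≠ Sym2.diag v := fun h => hdiagvA (h ▸ hi.2)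
          rw [hF, if_neg hi.1, if_neg hidv, if_pos hi.2]
        have hFS' : ∀ i ∈ itemsOf G' P', F i = f' i := by
          intro i hi
          obtain ⟨-, hiA, hidv⟩ := (key i).mp hi
          have hie : i ≠ e₀ := fun h => hiA (h ▸ he₀A)
          rw [hF, if_neg hie, if_neg hidv, if_neg hiA]
        have hcases : ∀ i ∈ itemsOf G P, i = e₀ ∨ i = Sym2.diag v ∨ i ∈ A.erase e₀ ∨
            i ∈ itemsOf G' P' := by
          intro i hi
          by_cases h1 : i = e₀
          · exact Or.inl h1
          by_cases h2 : i = Sym2.diag v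
          · exact Or.inr (Or.inl h2)
          by_cases h3 : i ∈ A
          · exact Or.inr (Or.inr (Or.inl (Finset.mem_erase.mpr ⟨h1, h3⟩)))
          · exact Or.inr (Or.inr (Or.inr ((key i).mpr ⟨hi, h3, h2⟩)))
        refine ⟨F, ?_, ?_, ?_, ?_, ?_⟩
        · intro i hi
          rcases hcases i hi with rfl | rfl | h | h
          · rw [hFe₀]; exact hdvS
          · rw [hFdv]; exact he₀S
          · rw [hFA i h]; exact hAS (hgA i h)
          · rw [hFS' i h]; exact ((key _).mp (hm' i h)).1
        · intro i hi
          rcases hcases i hi with rfl | rfl | h | h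
          · rw [hFe₀, hFdv]
          · rw [hFdv, hFe₀]
          · rw [hFA i h, hFA _ (hgmem i h)]; exact hginv i h
          · rw [hFS' i h, hFS' _ (hm' i h)]; exact hinv' i h
        · intro i hi hne
          rcases hcases i hi with rfl | rfl | h | h
          · rw [hFe₀]; exact ⟨v, hve₀, mem_diag_iff.mpr rfl⟩
          · rw [hFdv]; exact ⟨v, mem_diag_iff.mpr rfl, hve₀⟩
          · rw [hFA i h]
            exact ⟨u, hAu i (Finset.mem_of_mem_erase h), hAu _ (hgA i h)⟩
          · rw [hFS' i h] at hne ⊢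
            exact hcompat' i h hne
        · intro i hi hfixed
          rcases hcases i hi with rfl | rfl | h | h
          · rw [hFe₀] at hfixed; exact absurd hfixed.symm he₀diag
          · rw [hFdv] at hfixed; exact absurd hfixed he₀diag
          · rw [hFA i h] at hfixed; exact absurd hfixed (hgne i h)
          · rw [hFS' i h] at hfixed; exact hfix' i h hfixed
        · intro heven i hi
          have hevenS' : Even ((itemsOf G' P').card) := by
            rw [Nat.even_iff] at heven ⊢
            omega
          rcases hcases i hi with rfl | rfl | h | h
          · rw [hFe₀]; exact Ne.symm he₀diag
          · rw [hFdv]; exact he₀diag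
          · rw [hFA i h]; exact hgne i h
          · rw [hFS' i h]; exact heven' hevenS' i h
      · -- subcase: no pending at v yet; push the leftover edge e₀ as a new pending at v
        set P' := insert v (P.erase u) with hP'def
        have key : ∀ i, i ∈ itemsOf G' P' ↔
            (i ∈ itemsOf G P ∧ i ∉ A) ∨ i = Sym2.diag v := by
          intro i
          simp only [mem_itemsOf, hAmem, hP'def, Finset.mem_insert, Finset.mem_erase]
          constructor
          · rintro (h | ⟨p, hp, rfl⟩)
            · rw [hG'edgeSet] at h
              exact Or.inl ⟨Or.inl h.1, fun hc => h.2 hc.2⟩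
            · rcases hp with rfl | ⟨hpu, hpP⟩
              · exact Or.inr rfl
              · exact Or.inl ⟨Or.inr ⟨p, hpP, rfl⟩,
                  fun hc => hpu (mem_diag_iff.mp hc.2).symm⟩
          · rintro (⟨h1, h2⟩ | rfl)
            · rcases h1 with h | ⟨p, hp, rfl⟩
              · exact Or.inl ((hG'edgeSet i).mpr ⟨h, fun hui => h2 ⟨Or.inl h, hui⟩⟩)
              · refine Or.inr ⟨p, Or.inr ⟨?_, hp⟩, rfl⟩
                rintro rfl
                exact h2 ⟨Or.inr ⟨p, hp, rfl⟩, mem_diag_iff.mpr rfl⟩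
            · exact Or.inr ⟨v, Or.inl rfl, rfl⟩
        have hP'reach : ∀ p ∈ P', G'.Reachable r p := by
          intro p hp
          rw [hP'def, Finset.mem_insert, Finset.mem_erase] at hp
          rcases hp with rfl | ⟨hpu, hpP⟩
          · exact hv'
          · exact hreach' p (hP p hpP) hpu
        obtain ⟨f', hm', hinv', hcompat', hfix', heven'⟩ := ih G' (by convert hcard') r P' hreachG' hP'reach
        have hdvS : Sym2.diag v ∉ itemsOf G P := by
          intro h
          rcases mem_itemsOf.mp h with h | ⟨p, hp, heq⟩
          · exact G.not_isDiag_of_mem_edgeSet h (Sym2.diag_isDiag v)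
          · exact hvP ((Sym2.diag_injective heq.symm) ▸ hp)
        have hdvS' : Sym2.diag v ∈ itemsOf G' P' := (key _).mpr (Or.inr rfl)
        have hS'S : ∀ i, i ∈ itemsOf G' P' → i ≠ Sym2.diag v →
            i ∈ itemsOf G P ∧ i ∉ A := fun i hi hne =>
          ((key i).mp hi).resolve_right hne
        have he₀S' : e₀ ∉ itemsOf G' P' := by
          intro h
          rcases (key _).mp h with ⟨-, hA⟩ | heq
          · exact hA he₀A
          · exact he₀diag heq
        have hne_dv : ∀ i, i ∈ itemsOf G P → i ≠ Sym2.diag v := fun i hi h => hdvS (h ▸ hi)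
        have hcard2 : (itemsOf G' P').card + A.card = (itemsOf G P).card + 1 := by
          have h1 : itemsOf G' P' = insert (Sym2.diag v) (itemsOf G P \ A) :=
            Finset.ext fun i => by
              rw [key i, Finset.mem_insert, Finset.mem_sdiff]
              exact ⟨fun h => h.symm.imp id id, fun h => h.symm.imp id id⟩
          have hdv2 : Sym2.diag v ∉ itemsOf G P \ A := fun h =>
            hdvS (Finset.mem_sdiff.mp h).1
          have h2 := Finset.card_insert_of_notMem hdv2
          have h3 := Finset.card_sdiff_add_card_eq_card hAS
          rw [h1]
          omega
        set F : Sym2 V → Sym2 V := fun i =>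
          if i ∈ A.erase e₀ then g i
          else if i = e₀ then
            (if f' (Sym2.diag v) = Sym2.diag v then e₀ else f' (Sym2.diag v))
          else if f' i = Sym2.diag v then e₀ else f' i with hFdef
        have hF : ∀ j, F j = if j ∈ A.erase e₀ then g j
            else if j = e₀ then
              (if f' (Sym2.diag v) = Sym2.diag v then e₀ else f' (Sym2.diag v))
            else if f' j = Sym2.diag v then e₀ else f' j := fun _ => rfl
        have he₀notA' : e₀ ∉ A.erase e₀ := Finset.notMem_erase _ _
        have hFe₀ : F e₀ = if f' (Sym2.diag v) = Sym2.diag v then e₀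
            else f' (Sym2.diag v) := by
          rw [hF, if_neg he₀notA', if_pos rfl]
        have hFA : ∀ i ∈ A.erase e₀, F i = g i := fun i hi => by rw [hF, if_pos hi]
        have hFS' : ∀ i, i ∈ itemsOf G' P' → i ≠ Sym2.diag v →
            F i = if f' i = Sym2.diag v then e₀ else f' i := by
          intro i hi hnedv
          obtain ⟨-, hiA⟩ := hS'S i hi hnedv
          have h1 : i ∉ A.erase e₀ := fun h => hiA (Finset.mem_of_mem_erase h)
          have h2 : i ≠ e₀ := fun h => hiA (h ▸ he₀A)
          rw [hF, if_neg h1, if_neg h2]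
        have hcases : ∀ i ∈ itemsOf G P, i = e₀ ∨ i ∈ A.erase e₀ ∨
            (i ∈ itemsOf G' P' ∧ i ≠ Sym2.diag v) := by
          intro i hi
          by_cases h1 : i = e₀
          · exact Or.inl h1
          by_cases h3 : i ∈ A
          · exact Or.inr (Or.inl (Finset.mem_erase.mpr ⟨h1, h3⟩))
          · exact Or.inr (Or.inr ⟨(key i).mpr (Or.inl ⟨hi, h3⟩), hne_dv i hi⟩)
        have hjS' := hm' _ hdvS'
        refine ⟨F, ?_, ?_, ?_, ?_, ?_⟩
        · intro i hi
          rcases hcases i hi with rfl | h | ⟨h, hnedv⟩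
          · rw [hFe₀]
            by_cases hjfix : f' (Sym2.diag v) = Sym2.diag v
            · rw [if_pos hjfix]; exact hi
            · rw [if_neg hjfix]; exact (hS'S _ hjS' hjfix).1
          · rw [hFA i h]; exact hAS (hgA i h)
          · rw [hFS' i h hnedv]
            by_cases hfi : f' i = Sym2.diag v
            · rw [if_pos hfi]; exact he₀S
            · rw [if_neg hfi]; exact (hS'S _ (hm' i h) hfi).1
        · intro i hi
          rcases hcases i hi with rfl | h | ⟨h, hnedv⟩
          · rw [hFe₀]
            by_cases hjfix : f' (Sym2.diag v) = Sym2.diag v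
            · rw [if_pos hjfix, hFe₀, if_pos hjfix]
            · rw [if_neg hjfix]
              have hj1 : f' (Sym2.diag v) ∈ itemsOf G' P' := hjS'
              rw [hFS' _ hj1 hjfix, if_pos (hinv' _ hdvS')]
          · rw [hFA i h, hFA _ (hgmem i h)]; exact hginv i h
          · rw [hFS' i h hnedv]
            by_cases hfi : f' i = Sym2.diag v
            · rw [if_pos hfi, hFe₀]
              have : f' (Sym2.diag v) = i := by rw [← hfi]; exact hinv' i h
              rw [if_neg (by rw [this]; exact hnedv), this]
            · rw [if_neg hfi, hFS' _ (hm' i h) hfi, if_neg (by rw [hinv' i h]; exact hnedv),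
                hinv' i h]
        · intro i hi hne
          rcases hcases i hi with rfl | h | ⟨h, hnedv⟩
          · rw [hFe₀] at hne ⊢
            by_cases hjfix : f' (Sym2.diag v) = Sym2.diag v
            · rw [if_pos hjfix] at hne; exact absurd rfl hne
            · rw [if_neg hjfix]
              obtain ⟨x, hx1, hx2⟩ := hcompat' _ hdvS' hjfix
              rw [mem_diag_iff] at hx1
              exact ⟨v, hve₀, hx1 ▸ hx2⟩
          · rw [hFA i h]
            exact ⟨u, hAu i (Finset.mem_of_mem_erase h), hAu _ (hgA i h)⟩
          · rw [hFS' i h hnedv] at hne ⊢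
            by_cases hfi : f' i = Sym2.diag v
            · rw [if_pos hfi]
              have hfine : f' i ≠ i := fun hc => hnedv (hc ▸ hfi.symm ▸ hfi)
              obtain ⟨x, hx1, hx2⟩ := hcompat' i h (by rw [hfi]; exact fun hc => hnedv hc.symm)
              rw [hfi, mem_diag_iff] at hx2
              exact ⟨v, hx2 ▸ hx1, hve₀⟩
            · rw [if_neg hfi] at hne ⊢
              exact hcompat' i h hne
        · intro i hi hfixed
          rcases hcases i hi with rfl | h | ⟨h, hnedv⟩
          · rw [hFe₀] at hfixed
            by_cases hjfix : f' (Sym2.diag v) = Sym2.diag v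
            · have := hfix' _ hdvS' hjfix
              rw [mem_diag_iff] at this
              rw [this]
              exact hve₀
            · rw [if_neg hjfix] at hfixed
              exact absurd (hfixed ▸ he₀A) ((hS'S _ hjS' hjfix).2)
          · rw [hFA i h] at hfixed; exact absurd hfixed (hgne i h)
          · rw [hFS' i h hnedv] at hfixed
            by_cases hfi : f' i = Sym2.diag v
            · rw [if_pos hfi] at hfixed
              exact absurd (hfixed ▸ he₀A) ((hS'S i h hnedv).2)
            · rw [if_neg hfi] at hfixed
              exact hfix' i h hfixed
        · intro heven i hi
          have hevenS' : Even ((itemsOf G' P').card) := by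
            rw [Nat.even_iff] at heven ⊢
            omega
          rcases hcases i hi with rfl | h | ⟨h, hnedv⟩
          · rw [hFe₀]
            have hjfix : f' (Sym2.diag v) ≠ Sym2.diag v := heven' hevenS' _ hdvS'
            rw [if_neg hjfix]
            intro hc
            exact (hS'S _ hjS' hjfix).2 (hc ▸ he₀A)
          · rw [hFA i h]; exact hgne i h
          · rw [hFS' i h hnedv]
            by_cases hfi : f' i = Sym2.diag v
            · rw [if_pos hfi]
              intro hc
              exact ((hS'S i h hnedv).2) (hc ▸ he₀A)
            · rw [if_neg hfi]
              exact heven' hevenS' i h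

end

end AuxPairing

theorem stmt13 {V : Type*} [Fintype V] (G : SimpleGraph V)
    (hnt : Nontrivial V) (hc : G.Connected) :
    (∃ M : (G.lineGraph).Subgraph, M.IsPerfectMatching) ↔ Even G.edgeSet.ncard := by
  classical
  have hncard : G.edgeSet.ncard = Fintype.card G.edgeSet := by
    rw [← Nat.card_coe_set_eq, Nat.card_eq_fintype_card]
  constructor
  · rintro ⟨M, hM⟩
    rw [hncard]
    exact hM.even_card
  · intro heven
    have : Nonempty V := hnt.to_nonempty
    obtain ⟨r⟩ := this
    have hreach : ∀ w, (∃ x : V, G.Adj w x) → G.Reachable r w := fun w _ =>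
      hc.preconnected r w
    obtain ⟨f, hm, hinv, hcompat, hfix, hevenf⟩ :=
      main_pairing (Fintype.card (Sym2 V)) G
        (le_trans (Finset.card_le_univ _) (le_of_eq Finset.card_univ)) r ∅ hreach (by simp)
    have hS : itemsOf G ∅ = G.edgeFinset := by
      simp [itemsOf]
    have hmemS : ∀ e : G.edgeSet, (e : Sym2 V) ∈ itemsOf G ∅ := fun e => by
      rw [hS, SimpleGraph.mem_edgeFinset]; exact e.2
    have hEcard : Even ((itemsOf G ∅).card) := by
      have h1 : (itemsOf G ∅).card = G.edgeSet.ncard := by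
        rw [hS, SimpleGraph.edgeFinset_card, ← Nat.card_eq_fintype_card,
          Nat.card_coe_set_eq]
      rw [h1]
      exact heven
    have hnofix : ∀ e : G.edgeSet, f ↑e ≠ ↑e := fun e => hevenf hEcard _ (hmemS e)
    have hfmem : ∀ e : G.edgeSet, f ↑e ∈ G.edgeSet := fun e => by
      have := hm _ (hmemS e)
      rw [hS, SimpleGraph.mem_edgeFinset] at this
      exact this
    refine ⟨⟨Set.univ, fun e₁ e₂ => f ↑e₁ = ↑e₂ ∨ f ↑e₂ = ↑e₁, ?_, ?_, ?_⟩, ?_, ?_⟩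
    · rintro e₁ e₂ (h | h)
      · refine SimpleGraph.lineGraph_adj_iff_exists.mpr ⟨?_, ?_⟩
        · rintro rfl
          exact hnofix e₁ h
        · obtain ⟨x, hx1, hx2⟩ := hcompat _ (hmemS e₁) (hnofix e₁)
          exact ⟨x, hx1, h ▸ hx2⟩
      · refine SimpleGraph.lineGraph_adj_iff_exists.mpr ⟨?_, ?_⟩
        · rintro rfl
          exact hnofix e₁ h
        · obtain ⟨x, hx1, hx2⟩ := hcompat _ (hmemS e₂) (hnofix e₂)
          exact ⟨x, h ▸ hx2, hx1⟩
    · intro e₁ e₂ _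
      exact Set.mem_univ _
    · constructor
      rintro e₁ e₂ (h | h)
      · exact Or.inr h
      · exact Or.inl h
    · intro v _
      refine ⟨⟨f ↑v, hfmem v⟩, Or.inl rfl, ?_⟩
      rintro y (hy | hy)
      · exact Subtype.ext hy.symm
      · refine Subtype.ext ?_
        show (y : Sym2 V) = f ↑v
        rw [← hinv _ (hmemS y), hy]
    · intro e
      exact Set.mem_univ e
end

section
/- The line graph L(G) of a nontrivial graph G has a perfect matching if and only if every connected component of L(G) has even order. -/
open Polynomial SimpleGraph

namespace LGPM
variable {V : Type*}

lemma exists_step {H : SimpleGraph V} {r x : V} (hr : H.Reachable x r) (hx : x ≠ r) :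
    ∃ y, H.Adj x y ∧ H.dist y r + 1 = H.dist x r := by
  obtain ⟨p, hp⟩ := hr.exists_walk_length_eq_dist
  cases p with
  | nil => exact absurd rfl hx
  | @cons _ y _ h q =>
    refine ⟨y, h, ?_⟩
    have h1 : H.dist y r ≤ q.length := dist_le q
    obtain ⟨q', hq'⟩ := ((h.symm.reachable).trans hr).exists_walk_length_eq_dist
    have h2 : H.dist x r ≤ q'.length + 1 := by simpa using dist_le (Walk.cons h q')
    simp only [Walk.length_cons] at hp
    omega

lemma engine {S F : Set (Sym2 V)} {r : V} {A : Set V}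
    (hstep : ∀ x, (fromEdgeSet S).Reachable x r → x ∉ A → x ≠ r →
      ∃ y, (fromEdgeSet S).Adj x y ∧
        (fromEdgeSet S).dist y r + 1 = (fromEdgeSet S).dist x r ∧ y ∉ A ∧ s(x, y) ∉ F) :
    ∀ x, (fromEdgeSet S).Reachable x r → x ∉ A → (fromEdgeSet (S \ F)).Reachable x r := by
  suffices h : ∀ n x, (fromEdgeSet S).dist x r = n → (fromEdgeSet S).Reachable x r → x ∉ A →
      (fromEdgeSet (S \ F)).Reachable x r by
    exact fun x hx hA => h _ x rfl hx hA
  intro n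
  induction n using Nat.strong_induction_on with
  | _ n ih =>
    intro x hd hr hA
    by_cases hx : x = r
    · subst hx; exact Reachable.refl _
    · obtain ⟨y, hadj, hdist, hyA, hF⟩ := hstep x hr hA hx
      obtain ⟨hmem, hne⟩ := (fromEdgeSet_adj _).mp hadj
      have hyr : (fromEdgeSet S).Reachable y r := (hadj.symm.reachable).trans hr
      have hadj' : (fromEdgeSet (S \ F)).Adj x y := (fromEdgeSet_adj _).mpr ⟨⟨hmem, hF⟩, hne⟩
      exact (hadj'.reachable).trans (ih _ (by omega) y rfl hyr hyA)

lemma walk_confined {H : SimpleGraph V} {a b : V} (ha : ∀ c, H.Adj a c → c = b)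
    (hb : ∀ c, H.Adj b c → c = a) {z w : V} (p : H.Walk z w) (hw : w = a) :
    z = a ∨ z = b := by
  induction p with
  | nil => exact Or.inl hw
  | @cons u v _ h q ih =>
    rcases ih hw with h' | h'
    · right; exact ha u (h' ▸ h.symm)
    · left; exact hb u (h' ▸ h.symm)

/-- The key lemma: a "connected" set of at least two edges contains two adjacent edges whose
removal keeps the rest connected. -/
lemma good_pair [Fintype V] {S : Set (Sym2 V)} (hdiag : ∀ e ∈ S, ¬ e.IsDiag)
    (hconn : ∀ x y e f, e ∈ S → f ∈ S → x ∈ e → y ∈ f → (fromEdgeSet S).Reachable x y)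
    (h2 : ∃ g₁ g₂, g₁ ∈ S ∧ g₂ ∈ S ∧ g₁ ≠ g₂) :
    ∃ e f, e ∈ S ∧ f ∈ S ∧ e ≠ f ∧ (∃ v, v ∈ e ∧ v ∈ f) ∧
      (∀ x y e' f', e' ∈ S \ {e, f} → f' ∈ S \ {e, f} → x ∈ e' → y ∈ f' →
        (fromEdgeSet (S \ {e, f})).Reachable x y) := by
  classical
  set H := fromEdgeSet S with hH
  obtain ⟨g₁, g₂, hg₁, hg₂, hgne⟩ := h2
  -- basic helpers
  have hedge_at : ∀ {x : V} {e' : Sym2 V}, e' ∈ S → x ∈ e' → ∃ z, e' = s(x, z) ∧ H.Adj x z := by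
    intro x e' he' hx
    obtain ⟨z, rfl⟩ := Sym2.mem_iff_exists.mp hx
    have hne : x ≠ z := fun h => hdiag _ he' (Sym2.mk_isDiag_iff.mpr h)
    exact ⟨z, rfl, (fromEdgeSet_adj _).mpr ⟨he', hne⟩⟩
  have hAdjS : ∀ {x y : V}, H.Adj x y → s(x, y) ∈ S ∧ x ≠ y := fun h => (fromEdgeSet_adj _).mp h
  set supp : Set V := {v | ∃ e ∈ S, v ∈ e} with hsupp
  have hsupp_of_adj : ∀ {x y : V}, H.Adj x y → x ∈ supp := by
    intro x y h
    exact ⟨s(x, y), (hAdjS h).1, Sym2.mem_mk_left x y⟩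
  have hreach : ∀ {x y : V}, x ∈ supp → y ∈ supp → H.Reachable x y := by
    rintro x y ⟨e, he, hx⟩ ⟨f, hf, hy⟩
    exact hconn x y e f he hf hx hy
  -- the root
  have hrsupp : g₁.out.1 ∈ supp := ⟨g₁, hg₁, Sym2.out_fst_mem g₁⟩
  set r := g₁.out.1 with hrdef
  -- the vertex of maximal distance
  obtain ⟨a, haSupp, hamax⟩ :=
    Set.exists_max_image supp (fun v => H.dist v r) (Set.toFinite _) ⟨r, hrsupp⟩
  set L := H.dist a r with hLdef
  -- L ≥ 1
  obtain ⟨r', hg₁eq, hrr'⟩ := hedge_at hg₁ (Sym2.out_fst_mem g₁)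
  have hL1 : 1 ≤ L := by
    have h1 : 0 < H.dist r' r :=
      (hreach (hsupp_of_adj hrr'.symm) hrsupp).pos_dist_of_ne (hAdjS hrr').2.symm
    have h2 := hamax r' (hsupp_of_adj hrr'.symm)
    omega
  have har : a ≠ r := by
    intro h; rw [h] at hLdef; simp [SimpleGraph.dist_self] at hLdef; omega
  have hdle : ∀ {x y : V}, H.Adj x y → H.Reachable y r → H.dist x r ≤ H.dist y r + 1 := by
    intro x y h hy
    obtain ⟨q, hq⟩ := hy.exists_walk_length_eq_dist
    have := dist_le (Walk.cons h q)
    simp only [Walk.length_cons] at this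
    omega
  have hdsupp : ∀ {x : V}, x ∈ supp → H.dist x r ≤ L := fun hx => hamax _ hx
  -- a has a neighbor
  obtain ⟨e₀, he₀, hae₀⟩ := id haSupp
  obtain ⟨b₀, -, hab₀⟩ := hedge_at he₀ hae₀
  by_cases hcase : ∃ b c, H.Adj a b ∧ H.Adj a c ∧ b ≠ c
  · -- Case 1 : a has two distinct neighbors
    obtain ⟨b, c, hab, hac, hbc⟩ := hcase
    refine ⟨s(a, b), s(a, c), (hAdjS hab).1, (hAdjS hac).1, ?_, ⟨a, by simp, by simp⟩, ?_⟩
    · exact fun h => hbc (Sym2.congr_right.mp h)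
    · set F : Set (Sym2 V) := {s(a, b), s(a, c)} with hF
      have hstep : ∀ x, H.Reachable x r → x ∉ ({a} : Set V) → x ≠ r →
          ∃ y, H.Adj x y ∧ H.dist y r + 1 = H.dist x r ∧ y ∉ ({a} : Set V) ∧ s(x, y) ∉ F := by
        intro x hxr hxA hxr'
        obtain ⟨y, hxy, hd⟩ := exists_step hxr hxr'
        have hxsupp := hsupp_of_adj hxy
        have hdx := hdsupp hxsupp
        have hya : y ≠ a := by
          intro h; rw [h] at hd; omega
        have hxa : x ≠ a := by simpa using hxA
        refine ⟨y, hxy, hd, by simpa using hya, ?_⟩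
        intro hmem
        have : a ∈ s(x, y) := by
          rcases hmem with h | h <;> rw [h] <;> simp
        simp only [Sym2.mem_iff] at this
        rcases this with h | h
        · exact hxa h.symm
        · exact hya h.symm
      have hfinal : ∀ x e', e' ∈ S \ F → x ∈ e' →
          (fromEdgeSet (S \ F)).Reachable x r := by
        intro x e' he' hx
        by_cases hxa : x = a
        · obtain ⟨z, hz, haz⟩ := hedge_at he'.1 hx
          have hza : z ≠ a := by rw [← hxa]; exact (hAdjS haz).2.symm
          have hadj' : (fromEdgeSet (S \ F)).Adj x z :=
            (fromEdgeSet_adj _).mpr ⟨hz ▸ he', (hAdjS haz).2⟩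
          exact hadj'.reachable.trans
            (engine hstep z (hreach (hsupp_of_adj haz.symm) hrsupp) (by simpa using hza))
        · exact engine hstep x (hreach ⟨e', he'.1, hx⟩ hrsupp) (by simpa using hxa)
      intro x y e' f' he' hf' hx hy
      exact (hfinal x e' he' hx).trans (hfinal y f' hf' hy).symm

  · -- Case 2 : a has a unique neighbor b
    push_neg at hcase
    set b := b₀ with hbdef
    have hab : H.Adj a b := hab₀
    have huniq : ∀ c, H.Adj a c → c = b := fun c h => hcase c b h hab
    have hanb : a ≠ b := (hAdjS hab).2
    -- dist b r = L - 1
    have hdb : H.dist b r + 1 = L := by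
      obtain ⟨y, hay, hd⟩ := exists_step (hreach haSupp hrsupp) har
      rw [huniq y hay] at hd
      rw [hLdef]
      exact hd
    -- b has a neighbor other than a
    have hcex : ∃ c, H.Adj b c ∧ c ≠ a := by
      by_contra hno
      push_neg at hno
      have hconf : ∀ (z : V) (p : H.Walk z a), z = a ∨ z = b :=
        fun z p => walk_confined huniq hno p rfl
      have hg : ∃ g, g ∈ S ∧ g ≠ s(a, b) := by
        by_cases h1 : g₁ = s(a, b)
        · exact ⟨g₂, hg₂, fun h => hgne (h1.trans h.symm)⟩
        · exact ⟨g₁, hg₁, h1⟩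
      obtain ⟨g, hgS, hgne'⟩ := hg
      obtain ⟨z2, hgeq, hz1z2⟩ := hedge_at hgS (Sym2.out_fst_mem g)
      have hz12 : g.out.1 ≠ z2 := (hAdjS hz1z2).2
      have hzout : g.out.1 ∉ ({a, b} : Set V) ∨ z2 ∉ ({a, b} : Set V) := by
        by_contra hcon
        push_neg at hcon
        obtain ⟨h1, h2⟩ := hcon
        simp only [Set.mem_insert_iff, Set.mem_singleton_iff] at h1 h2
        apply hgne'
        rw [hgeq]
        rcases h1 with h1 | h1 <;> rcases h2 with h2 | h2
        · exact absurd (h1.trans h2.symm) hz12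
        · rw [h1, h2]
        · rw [h1, h2]; exact Sym2.eq_swap
        · exact absurd (h1.trans h2.symm) hz12
      have hzsupp1 : g.out.1 ∈ supp := ⟨g, hgS, Sym2.out_fst_mem g⟩
      have hzsupp2 : z2 ∈ supp := ⟨g, hgS, by rw [hgeq]; exact Sym2.mem_mk_right _ _⟩
      rcases hzout with hz | hz
      · obtain ⟨p⟩ := hreach hzsupp1 haSupp
        rcases hconf _ p with rfl | rfl <;> simp [hbdef] at hz
      · obtain ⟨p⟩ := hreach hzsupp2 haSupp
        rcases hconf _ p with rfl | rfl <;> simp [hbdef] at hz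
    obtain ⟨c, hbc, hca⟩ := hcex
    have hcsupp : c ∈ supp := hsupp_of_adj hbc.symm
    have hdcL : H.dist c r ≤ L := hdsupp hcsupp
    have hdcge : H.dist b r ≤ H.dist c r + 1 := hdle hbc (hreach hcsupp hrsupp)
    by_cases hA2 : ∃ c', H.Adj b c' ∧ c' ≠ a ∧ H.dist c' r = L
    · -- Case 2a : b has a neighbor at distance L
      obtain ⟨c', hbc', hc'a, hdc'⟩ := hA2
      have hbnc' : b ≠ c' := (hAdjS hbc').2
      refine ⟨s(a, b), s(c', b), (hAdjS hab).1, (hAdjS hbc'.symm).1, ?_,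
        ⟨b, Sym2.mem_mk_right _ _, Sym2.mem_mk_right _ _⟩, ?_⟩
      · intro h
        rcases Sym2.eq_iff.mp h with ⟨h1, -⟩ | ⟨h1, h2⟩
        · exact hc'a h1.symm
        · exact hanb h1
      · set F : Set (Sym2 V) := {s(a, b), s(c', b)} with hF
        set A : Set V := {a, c'} with hA
        have hstep : ∀ x, H.Reachable x r → x ∉ A → x ≠ r →
            ∃ y, H.Adj x y ∧ H.dist y r + 1 = H.dist x r ∧ y ∉ A ∧ s(x, y) ∉ F := by
          intro x hxr hxA hxrne
          obtain ⟨y, hxy, hd⟩ := exists_step hxr hxrne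
          have hdx := hdsupp (hsupp_of_adj hxy)
          have hxa : x ≠ a := fun h => hxA (by rw [h, hA]; simp)
          have hxc' : x ≠ c' := fun h => hxA (by rw [h, hA]; simp)
          have hya : y ≠ a := by rintro rfl; omega
          have hyc' : y ≠ c' := by rintro rfl; omega
          refine ⟨y, hxy, hd, by simp [hA, hya, hyc'], ?_⟩
          intro hmem
          rcases hmem with h | h <;> rcases Sym2.eq_iff.mp h with ⟨h1, h2⟩ | ⟨h1, h2⟩
          · exact hxa h1
          · exact hya h2
          · exact hxc' h1
          · exact hyc' h2
        have hfinal : ∀ x e', e' ∈ S \ F → x ∈ e' →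
            (fromEdgeSet (S \ F)).Reachable x r := by
          intro x e' he' hx
          by_cases hxa : x = a
          · exfalso
            obtain ⟨z, hz, haz⟩ := hedge_at he'.1 hx
            have hzb : z = b := huniq z (hxa ▸ haz)
            exact he'.2 (by rw [hz, hxa, hzb, hF]; simp)
          · by_cases hxc : x = c'
            · obtain ⟨z, hz, hcz⟩ := hedge_at he'.1 hx
              have hzc' : z ≠ c' := by rw [← hxc]; exact (hAdjS hcz).2.symm
              have hza : z ≠ a := by
                rintro rfl
                exact hbnc' (huniq x (hcz.symm) ▸ hxc ▸ rfl)
              have hadj' : (fromEdgeSet (S \ F)).Adj x z :=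
                (fromEdgeSet_adj _).mpr ⟨hz ▸ he', (hAdjS hcz).2⟩
              exact hadj'.reachable.trans
                (engine hstep z (hreach (hsupp_of_adj hcz.symm) hrsupp)
                  (by simp [hA, hza, hzc']))
            · exact engine hstep x (hreach ⟨e', he'.1, hx⟩ hrsupp) (by simp [hA, hxa, hxc])
        intro x y e' f' he' hf' hx hy
        exact (hfinal x e' he' hx).trans (hfinal y f' hf' hy).symm
    · by_cases hB2 : ∃ c', H.Adj b c' ∧ c' ≠ a ∧ H.dist c' r + 1 = L
      · -- Case 2b : b has a neighbor at distance L - 1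
        obtain ⟨c', hbc', hc'a, hdc'⟩ := hB2
        refine ⟨s(a, b), s(b, c'), (hAdjS hab).1, (hAdjS hbc').1, ?_,
          ⟨b, Sym2.mem_mk_right _ _, Sym2.mem_mk_left _ _⟩, ?_⟩
        · intro h
          rcases Sym2.eq_iff.mp h with ⟨h1, h2⟩ | ⟨h1, h2⟩
          · exact hanb h1
          · exact hc'a h1.symm
        · set F : Set (Sym2 V) := {s(a, b), s(b, c')} with hF
          set A : Set V := {a} with hA
          have hstep : ∀ x, H.Reachable x r → x ∉ A → x ≠ r →
              ∃ y, H.Adj x y ∧ H.dist y r + 1 = H.dist x r ∧ y ∉ A ∧ s(x, y) ∉ F := by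
            intro x hxr hxA hxrne
            obtain ⟨y, hxy, hd⟩ := exists_step hxr hxrne
            have hdx := hdsupp (hsupp_of_adj hxy)
            have hxa : x ≠ a := fun h => hxA (by rw [h, hA]; simp)
            have hya : y ≠ a := by rintro rfl; omega
            refine ⟨y, hxy, hd, by simp [hA, hya], ?_⟩
            intro hmem
            rcases hmem with h | h <;> rcases Sym2.eq_iff.mp h with ⟨h1, h2⟩ | ⟨h1, h2⟩
            · exact hxa h1
            · exact hya h2
            · rw [h1, h2] at hd; omega
            · rw [h1, h2] at hd; omega
          have hfinal : ∀ x e', e' ∈ S \ F → x ∈ e' →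
              (fromEdgeSet (S \ F)).Reachable x r := by
            intro x e' he' hx
            by_cases hxa : x = a
            · exfalso
              obtain ⟨z, hz, haz⟩ := hedge_at he'.1 hx
              have hzb : z = b := huniq z (hxa ▸ haz)
              exact he'.2 (by rw [hz, hxa, hzb, hF]; simp)
            · exact engine hstep x (hreach ⟨e', he'.1, hx⟩ hrsupp) (by simp [hA, hxa])
          intro x y e' f' he' hf' hx hy
          exact (hfinal x e' he' hx).trans (hfinal y f' hf' hy).symm
      · -- Case 2c : all other neighbors of b are at distance L - 2
        push_neg at hA2 hB2
        have hdc : H.dist c r + 2 = L := by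
          have h1 := hA2 c hbc hca
          have h2 := hB2 c hbc hca
          omega
        have hL2 : 2 ≤ L := by omega
        have hbnc : b ≠ c := (hAdjS hbc).2
        by_cases hCex : ∃ c'', H.Adj b c'' ∧ c'' ≠ a ∧ c'' ≠ c
        · -- Case 2c-i : b has two neighbors at distance L - 2
          obtain ⟨c'', hbc'', hc''a, hc''c⟩ := hCex
          have hdc'' : H.dist c'' r + 2 = L := by
            have h1 := hA2 c'' hbc'' hc''a
            have h2 := hB2 c'' hbc'' hc''a
            have h3 := hdsupp (hsupp_of_adj hbc''.symm)
            have h4 := hdle hbc'' (hreach (hsupp_of_adj hbc''.symm) hrsupp)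
            omega
          refine ⟨s(a, b), s(b, c), (hAdjS hab).1, (hAdjS hbc).1, ?_,
            ⟨b, Sym2.mem_mk_right _ _, Sym2.mem_mk_left _ _⟩, ?_⟩
          · intro h
            rcases Sym2.eq_iff.mp h with ⟨h1, h2⟩ | ⟨h1, h2⟩
            · exact hanb h1
            · exact hca h1.symm
          · set F : Set (Sym2 V) := {s(a, b), s(b, c)} with hF
            set A : Set V := {a} with hA
            have hstep : ∀ x, H.Reachable x r → x ∉ A → x ≠ r →
                ∃ y, H.Adj x y ∧ H.dist y r + 1 = H.dist x r ∧ y ∉ A ∧ s(x, y) ∉ F := by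
              intro x hxr hxA hxrne
              by_cases hxb : x = b
              · refine ⟨c'', by rw [hxb]; exact hbc'', by rw [hxb]; omega,
                  by simp [hA, hc''a], ?_⟩
                intro hmem
                rcases hmem with h | h <;> rcases Sym2.eq_iff.mp h with ⟨h1, h2⟩ | ⟨h1, h2⟩
                · exact hanb (hxb ▸ h1.symm)
                · exact hc''a h2
                · exact hc''c h2
                · exact hbnc (hxb ▸ h1)
              · obtain ⟨y, hxy, hd⟩ := exists_step hxr hxrne
                have hdx := hdsupp (hsupp_of_adj hxy)
                have hxa : x ≠ a := fun h => hxA (by rw [h, hA]; simp)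
                have hya : y ≠ a := by rintro rfl; omega
                refine ⟨y, hxy, hd, by simp [hA, hya], ?_⟩
                intro hmem
                rcases hmem with h | h <;> rcases Sym2.eq_iff.mp h with ⟨h1, h2⟩ | ⟨h1, h2⟩
                · exact hxa h1
                · exact hya h2
                · exact hxb h1
                · rw [h1, h2] at hd; omega
            have hfinal : ∀ x e', e' ∈ S \ F → x ∈ e' →
                (fromEdgeSet (S \ F)).Reachable x r := by
              intro x e' he' hx
              by_cases hxa : x = a
              · exfalso
                obtain ⟨z, hz, haz⟩ := hedge_at he'.1 hx
                have hzb : z = b := huniq z (hxa ▸ haz)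
                exact he'.2 (by rw [hz, hxa, hzb, hF]; simp)
              · exact engine hstep x (hreach ⟨e', he'.1, hx⟩ hrsupp) (by simp [hA, hxa])
            intro x y e' f' he' hf' hx hy
            exact (hfinal x e' he' hx).trans (hfinal y f' hf' hy).symm
        · -- Case 2c-ii : b has exactly the neighbors a and c
          push_neg at hCex
          have huniqb : ∀ z, H.Adj b z → z = a ∨ z = c := by
            intro z hz
            by_cases h : z = a
            · exact Or.inl h
            · exact Or.inr (hCex z hz h)
          refine ⟨s(a, b), s(b, c), (hAdjS hab).1, (hAdjS hbc).1, ?_,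
            ⟨b, Sym2.mem_mk_right _ _, Sym2.mem_mk_left _ _⟩, ?_⟩
          · intro h
            rcases Sym2.eq_iff.mp h with ⟨h1, h2⟩ | ⟨h1, h2⟩
            · exact hanb h1
            · exact hca h1.symm
          · set F : Set (Sym2 V) := {s(a, b), s(b, c)} with hF
            set A : Set V := {a, b} with hA
            have hstep : ∀ x, H.Reachable x r → x ∉ A → x ≠ r →
                ∃ y, H.Adj x y ∧ H.dist y r + 1 = H.dist x r ∧ y ∉ A ∧ s(x, y) ∉ F := by
              intro x hxr hxA hxrne
              obtain ⟨y, hxy, hd⟩ := exists_step hxr hxrne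
              have hdx := hdsupp (hsupp_of_adj hxy)
              have hxa : x ≠ a := fun h => hxA (by rw [h, hA]; simp)
              have hxb : x ≠ b := fun h => hxA (by rw [h, hA]; simp)
              have hya : y ≠ a := by rintro rfl; omega
              have hyb : y ≠ b := by
                intro hyb'
                rcases huniqb x (by rw [← hyb']; exact hxy.symm) with h' | h'
                · exact hxa h'
                · rw [hyb', h'] at hd; omega
              refine ⟨y, hxy, hd, by simp [hA, hya, hyb], ?_⟩
              intro hmem
              rcases hmem with h | h <;> rcases Sym2.eq_iff.mp h with ⟨h1, h2⟩ | ⟨h1, h2⟩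
              · exact hxa h1
              · exact hya h2
              · exact hxb h1
              · exact hyb h2
            have hfinal : ∀ x e', e' ∈ S \ F → x ∈ e' →
                (fromEdgeSet (S \ F)).Reachable x r := by
              intro x e' he' hx
              by_cases hxa : x = a
              · exfalso
                obtain ⟨z, hz, haz⟩ := hedge_at he'.1 hx
                have hzb : z = b := huniq z (hxa ▸ haz)
                exact he'.2 (by rw [hz, hxa, hzb, hF]; simp)
              · by_cases hxb : x = b
                · exfalso
                  obtain ⟨z, hz, hbz⟩ := hedge_at he'.1 hx
                  rcases huniqb z (hxb ▸ hbz) with rfl | rfl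
                  · exact he'.2 (by rw [hz, hxb, hF]; simp [Sym2.eq_swap])
                  · exact he'.2 (by rw [hz, hxb, hF]; simp)
                · exact engine hstep x (hreach ⟨e', he'.1, hx⟩ hrsupp) (by simp [hA, hxa, hxb])
            intro x y e' f' he' hf' hx hy
            exact (hfinal x e' he' hx).trans (hfinal y f' hf' hy).symm


lemma sym2_eq_of_two_mem {e : Sym2 V} {x y : V} (hx : x ∈ e) (hy : y ∈ e) (hne : x ≠ y) :
    e = s(x, y) := by
  induction e with
  | _ a b =>
    rcases Sym2.mem_iff.mp hx with rfl | rfl <;> rcases Sym2.mem_iff.mp hy with rfl | rfl <;>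
      simp_all [Sym2.eq_swap]

lemma edge_reach {S : Set (Sym2 V)} {g : Sym2 V} (hg : g ∈ S) {x y : V} (hx : x ∈ g)
    (hy : y ∈ g) : (fromEdgeSet S).Reachable x y := by
  by_cases hxy : x = y
  · rw [hxy]
  · exact ((fromEdgeSet_adj _).mpr ⟨sym2_eq_of_two_mem hx hy hxy ▸ hg, hxy⟩).reachable

lemma walk_reach {G : SimpleGraph V} {S : Set (Sym2 V)} :
    ∀ {ee ff : G.edgeSet} (p : (G.lineGraph).Walk ee ff),
      (∀ g ∈ p.support, (g : Sym2 V) ∈ S) → ∀ x y, x ∈ (ee : Sym2 V) → y ∈ (ff : Sym2 V) →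
      (fromEdgeSet S).Reachable x y := by
  intro ee ff p
  induction p with
  | nil =>
    intro hsupp x y hx hy
    exact edge_reach (hsupp _ (Walk.start_mem_support _)) hx hy
  | @cons ee gg _ h q ih =>
    intro hsupp x y hx hy
    obtain ⟨-, w, hw1, hw2⟩ := lineGraph_adj_iff_exists.mp h
    have h1 : (fromEdgeSet S).Reachable x w :=
      edge_reach (hsupp _ (Walk.start_mem_support _)) hx hw1
    exact h1.trans (ih (fun g hg => hsupp g (by rw [Walk.support_cons]; exact List.mem_cons_of_mem _ hg)) w y hw2 hy)

lemma pair_up [Fintype V] (G : SimpleGraph V) :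
    ∀ (n : ℕ) (S : Set (Sym2 V)), S.ncard = n → Even n → S ⊆ G.edgeSet →
      (∀ x y e f, e ∈ S → f ∈ S → x ∈ e → y ∈ f → (fromEdgeSet S).Reachable x y) →
      ∃ M : Subgraph (G.lineGraph), M.IsMatching ∧
        M.verts = {e : G.edgeSet | (e : Sym2 V) ∈ S} := by
  intro n
  induction n using Nat.strong_induction_on with
  | _ n ih =>
    intro S hcard heven hsub hconn
    rcases Nat.eq_zero_or_pos n with rfl | hpos
    · have hS : S = ∅ := (Set.ncard_eq_zero (Set.toFinite S)).mp hcard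
      refine ⟨⊥, fun v hv => absurd hv (by simp), ?_⟩
      rw [hS]
      simp
    · have hn2 : 2 ≤ n := by obtain ⟨k, hk⟩ := heven; omega
      have h2 : ∃ g₁ g₂, g₁ ∈ S ∧ g₂ ∈ S ∧ g₁ ≠ g₂ := by
        have h1 : 1 < S.ncard := hcard ▸ hn2
        obtain ⟨a, b, ha, hb, hab⟩ := (Set.one_lt_ncard_iff (Set.toFinite S)).mp h1
        exact ⟨a, b, ha, hb, hab⟩
      have hdiag : ∀ e ∈ S, ¬ e.IsDiag := fun e he => G.not_isDiag_of_mem_edgeSet (hsub he)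
      obtain ⟨e, f, heS, hfS, hef, ⟨v, hve, hvf⟩, hconn'⟩ := good_pair hdiag hconn h2
      have hsub' : S \ {e, f} ⊆ G.edgeSet := fun g hg => hsub hg.1
      have hsubpair : ({e, f} : Set (Sym2 V)) ⊆ S := by
        rintro g (rfl | rfl)
        exacts [heS, hfS]
      have hcard' : (S \ {e, f}).ncard = n - 2 := by
        rw [Set.ncard_diff hsubpair, Set.ncard_pair hef, hcard]
      obtain ⟨M', hM'm, hM'v⟩ := ih (n - 2) (by omega) (S \ {e, f}) hcard'
        (by obtain ⟨k, hk⟩ := heven; exact ⟨k - 1, by omega⟩) hsub' hconn'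
      have hadj : (G.lineGraph).Adj ⟨e, hsub heS⟩ ⟨f, hsub hfS⟩ := by
        rw [lineGraph_adj_iff_exists]
        exact ⟨by simpa using hef, v, hve, hvf⟩
      have hNm := Subgraph.IsMatching.subgraphOfAdj hadj
      refine ⟨M' ⊔ (G.lineGraph).subgraphOfAdj hadj, Subgraph.IsMatching.sup hM'm hNm ?_, ?_⟩
      · rw [hM'm.support_eq_verts, hNm.support_eq_verts, hM'v, subgraphOfAdj_verts]
        rw [Set.disjoint_left]
        rintro g hg (rfl | rfl) <;> exact hg.2 (by simp)
      · rw [Subgraph.verts_sup, hM'v, subgraphOfAdj_verts]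
        ext g
        simp only [Set.mem_union, Set.mem_setOf_eq, Set.mem_diff, Set.mem_insert_iff,
          Set.mem_singleton_iff]
        constructor
        · rintro (⟨h1, -⟩ | rfl | rfl)
          · exact h1
          · exact heS
          · exact hfS
        · intro hgS
          by_cases hge : (g : Sym2 V) = e
          · right; left; exact Subtype.ext hge
          · by_cases hgf : (g : Sym2 V) = f
            · right; right; exact Subtype.ext hgf
            · left; exact ⟨hgS, by simp [hge, hgf]⟩

end LGPM

theorem stmt14 {V : Type*} [Fintype V] (G : SimpleGraph V) (hnt : Nontrivial V) :
    (∃ M : (G.lineGraph).Subgraph, M.IsPerfectMatching) ↔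
      ∀ c : (G.lineGraph).ConnectedComponent, Even c.supp.ncard := by
  classical
  constructor
  · rintro ⟨M, hM⟩ c
    haveI : Fintype G.edgeSet := Set.Finite.fintype (Set.toFinite _)
    have h := ConnectedComponent.even_card_of_isPerfectMatching c hM
    rwa [← Nat.card_eq_fintype_card, Nat.card_coe_set_eq] at h
  · intro hev
    have key : ∀ c : (G.lineGraph).ConnectedComponent,
        ∃ M : Subgraph (G.lineGraph), M.IsMatching ∧ M.verts = c.supp := by
      intro c
      set S : Set (Sym2 V) := Subtype.val '' c.supp with hSdef
      have hsub : S ⊆ G.edgeSet := by rintro g ⟨⟨g', hg'⟩, -, rfl⟩; exact hg'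
      have hcardS : S.ncard = c.supp.ncard := Set.ncard_image_of_injective _ Subtype.val_injective
      have hconn : ∀ x y e f, e ∈ S → f ∈ S → x ∈ e → y ∈ f →
          (fromEdgeSet S).Reachable x y := by
        rintro x y e f ⟨ee, hee, rfl⟩ ⟨ff, hff, rfl⟩ hx hy
        have hr : (G.lineGraph).Reachable ee ff := by
          rw [ConnectedComponent.mem_supp_iff] at hee hff
          exact ConnectedComponent.eq.mp (hee.trans hff.symm)
        obtain ⟨p⟩ := hr
        refine LGPM.walk_reach p ?_ x y hx hy
        intro g hg
        refine ⟨g, ?_, rfl⟩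
        rw [ConnectedComponent.mem_supp_iff]
        have hre : (G.lineGraph).Reachable ee g := (p.takeUntil g hg).reachable
        rw [ConnectedComponent.mem_supp_iff] at hee
        rw [← hee]
        exact ConnectedComponent.eq.mpr hre.symm
      obtain ⟨M, hMm, hMv⟩ := LGPM.pair_up G S.ncard S rfl (hcardS ▸ hev c) hsub hconn
      refine ⟨M, hMm, ?_⟩
      rw [hMv]
      ext g
      simp only [Set.mem_setOf_eq, hSdef]
      exact Subtype.val_injective.mem_set_image
    choose Mc hMc1 hMc2 using key
    refine ⟨⨆ c, Mc c, Subgraph.IsMatching.iSup hMc1 ?_, ?_⟩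
    · intro c c' hne
      rw [(hMc1 c).support_eq_verts, (hMc1 c').support_eq_verts, hMc2, hMc2]
      exact pairwise_disjoint_supp_connectedComponent _ hne
    · intro v
      rw [Subgraph.verts_iSup]
      exact Set.mem_iUnion.mpr ⟨(G.lineGraph).connectedComponentMk v,
        by rw [hMc2]; exact (ConnectedComponent.mem_supp_iff _ _).mpr rfl⟩
end

section
/- If G is a connected graph with at least 3 edges and an odd number of edges, then the line graph L(G) contains a near-perfect matching (a matching covering all but exactly one vertex of L(G)). -/
open Polynomial SimpleGraph

namespace NPM

open scoped Classical

variable {V : Type*}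

def Share (e f : Sym2 V) : Prop := ∃ v, v ∈ e ∧ v ∈ f

lemma Share.symm {e f : Sym2 V} (h : Share e f) : Share f e := by
  obtain ⟨v, h1, h2⟩ := h; exact ⟨v, h2, h1⟩

def ERel (s : Finset (Sym2 V)) (a b : Sym2 V) : Prop := a ∈ s ∧ b ∈ s ∧ Share a b

def EChain (s : Finset (Sym2 V)) : Sym2 V → Sym2 V → Prop := Relation.ReflTransGen (ERel s)

lemma EChain.symm {s : Finset (Sym2 V)} {a b : Sym2 V} (h : EChain s a b) : EChain s b a :=
  (@Relation.ReflTransGen.symmetric _ _ ⟨fun _ _ h' => ⟨h'.2.1, h'.1, h'.2.2.symm⟩⟩).symm _ _ h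

def Linked (s : Finset (Sym2 V)) : Prop := ∀ a ∈ s, ∀ b ∈ s, EChain s a b

lemma chain_filter {s : Finset (Sym2 V)} {x a b : Sym2 V}
    (hab : EChain s a b) (hxa : EChain s x a) :
    EChain (s.filter (EChain s x)) a b := by
  induction hab with
  | refl => exact .refl
  | @tail c d h1 h2 ih =>
      refine Relation.ReflTransGen.tail ih ⟨?_, ?_, h2.2.2⟩
      · exact Finset.mem_filter.mpr ⟨h2.1, hxa.trans h1⟩
      · exact Finset.mem_filter.mpr ⟨h2.2.1, (hxa.trans h1).tail h2⟩

lemma linked_filter {s : Finset (Sym2 V)} {x : Sym2 V} :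
    Linked (s.filter (EChain s x)) := by
  intro a ha b hb
  rw [Finset.mem_filter] at ha hb
  exact chain_filter (ha.2.symm.trans hb.2) ha.2

lemma chain_erase {s : Finset (Sym2 V)} {e f : Sym2 V}
    (h : EChain s f e) : f ≠ e →
    ∃ g ∈ s.erase e, EChain (s.erase e) f g ∧ Share g e := by
  induction h using Relation.ReflTransGen.head_induction_on with
  | refl => exact fun hne => absurd rfl hne
  | @head a c h1 h2 ih =>
      intro hne
      by_cases hc : c = e
      · exact ⟨a, Finset.mem_erase.mpr ⟨hne, h1.1⟩, .refl, hc ▸ h1.2.2⟩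
      · obtain ⟨g, hg, hchain, hsh⟩ := ih hc
        refine ⟨g, hg, Relation.ReflTransGen.head ⟨?_, ?_, h1.2.2⟩ hchain, hsh⟩
        · exact Finset.mem_erase.mpr ⟨hne, h1.1⟩
        · exact Finset.mem_erase.mpr ⟨hc, h1.2.1⟩

def IsPairing (π : Sym2 V → Sym2 V) (t : Finset (Sym2 V)) : Prop :=
  ∀ e ∈ t, π e ∈ t ∧ π (π e) = e ∧ π e ≠ e ∧ Share e (π e)

lemma isPairing_empty : IsPairing (id : Sym2 V → Sym2 V) ∅ := by
  intro e he; simp at he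

lemma isPairing_union {π₁ π₂ : Sym2 V → Sym2 V} {t₁ t₂ : Finset (Sym2 V)}
    (h₁ : IsPairing π₁ t₁) (h₂ : IsPairing π₂ t₂) (hd : Disjoint t₁ t₂) :
    IsPairing (fun x => if x ∈ t₁ then π₁ x else π₂ x) (t₁ ∪ t₂) := by
  intro e he
  rcases Finset.mem_union.mp he with h | h
  · have p := h₁ e h
    simp only [if_pos h, if_pos p.1]
    exact ⟨Finset.mem_union_left _ p.1, p.2.1, p.2.2⟩
  · have p := h₂ e h
    have he1 : e ∉ t₁ := Finset.disjoint_right.mp hd h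
    have hp1 : π₂ e ∉ t₁ := Finset.disjoint_right.mp hd p.1
    simp only [if_neg he1, if_neg hp1]
    exact ⟨Finset.mem_union_right _ p.1, p.2.1, p.2.2⟩

lemma isPairing_insertPair {π : Sym2 V → Sym2 V} {t : Finset (Sym2 V)} {e f : Sym2 V}
    (h : IsPairing π t) (he : e ∉ t) (hf : f ∉ t) (hef : e ≠ f) (hsh : Share e f) :
    IsPairing (fun x => if x = e then f else if x = f then e else π x) (insert e (insert f t)) := by
  intro x hx
  rcases Finset.mem_insert.mp hx with rfl | hx
  · refine ⟨?_, ?_, ?_, ?_⟩ <;> simp [hef, hef.symm, hsh]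
  · rcases Finset.mem_insert.mp hx with rfl | hx
    · refine ⟨?_, ?_, ?_, ?_⟩ <;> simp [hef, hef.symm, hsh.symm]
    · have hxe : x ≠ e := fun h' => he (h' ▸ hx)
      have hxf : x ≠ f := fun h' => hf (h' ▸ hx)
      have p := h x hx
      have h1 : π x ≠ e := fun h' => he (h' ▸ p.1)
      have h2 : π x ≠ f := fun h' => hf (h' ▸ p.1)
      simp only [if_neg hxe, if_neg hxf, if_neg h1, if_neg h2]
      exact ⟨Finset.mem_insert_of_mem (Finset.mem_insert_of_mem p.1), p.2.1, p.2.2⟩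


lemma key (n : ℕ) : ∀ s : Finset (Sym2 V), s.card = n → Linked s →
    (Even n → ∃ π, IsPairing π s) ∧
    (Odd n → ∀ r : V, (∃ e ∈ s, r ∈ e) →
      ∃ f, f ∈ s ∧ r ∈ f ∧ ∃ π, IsPairing π (s.erase f)) := by
  induction n using Nat.strong_induction_on with
  | _ n IH =>
  intro s hcard hlink
  rcases Nat.eq_zero_or_pos n with h0 | hpos
  · subst h0
    have hs : s = ∅ := Finset.card_eq_zero.mp hcard
    subst hs
    refine ⟨fun _ => ⟨id, isPairing_empty⟩, fun hodd => absurd hodd (by simp)⟩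
  have MAIN : ∀ e ∈ s, ∀ r, r ∈ e →
      (Even n → ∃ π, IsPairing π s) ∧
      (Odd n → ∃ f, f ∈ s ∧ r ∈ f ∧ ∃ π, IsPairing π (s.erase f)) := by
    intro e he r hre
    have hes' : e ∉ s.erase e := Finset.notMem_erase e s
    have hcard' : (s.erase e).card = n - 1 := by
      rw [Finset.card_erase_of_mem he, hcard]
    have hins : insert e (s.erase e) = s := Finset.insert_erase he
    set s' := s.erase e with hs'
    rcases Finset.eq_empty_or_nonempty s' with hemp | ⟨f₀, hf₀⟩
    · -- n = 1
      have hn1 : n = 1 := by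
        rw [hemp, Finset.card_empty] at hcard'; omega
      constructor
      · intro hev; rw [hn1] at hev; exact absurd hev (by decide)
      · intro _
        refine ⟨e, he, hre, id, ?_⟩
        rw [← hs', hemp]; exact isPairing_empty
    -- s' nonempty
    have factA : ∀ f ∈ s', ∃ g ∈ s', EChain s' f g ∧ Share g e := by
      intro f hf
      have hfs : f ∈ s := Finset.mem_of_mem_erase (hs' ▸ hf)
      have hfe : f ≠ e := (Finset.mem_erase.mp (hs' ▸ hf)).1
      rw [hs']
      exact chain_erase (hlink f hfs e he) hfe
    obtain ⟨g₁, hg₁, hchain₁, hshg₁⟩ := factA f₀ hf₀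
    obtain ⟨v₁, hv₁g₁, hv₁e⟩ := hshg₁
    set cl₁ := s'.filter (EChain s' f₀) with hcl₁def
    have hg₁cl : g₁ ∈ cl₁ := Finset.mem_filter.mpr ⟨hg₁, hchain₁⟩
    have hlink₁ : Linked cl₁ := linked_filter
    by_cases hcl : cl₁ = s'
    · -- one class
      have hlinks' : Linked s' := hcl ▸ hlink₁
      have hlt : n - 1 < n := by omega
      constructor
      · -- n even : pair inside s' leaving one edge at v₁, match with e
        intro hev
        have hodd' : Odd (n - 1) := by
          rw [Nat.even_iff] at hev; rw [Nat.odd_iff]; omega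
        obtain ⟨f₁, hf₁, hv₁f₁, π₁, hπ₁⟩ :=
          ((IH _ hlt) s' hcard' hlinks').2 hodd' v₁ ⟨g₁, hg₁, hv₁g₁⟩
        have he' : e ∉ s'.erase f₁ := fun h => hes' (Finset.mem_of_mem_erase h)
        have hf' : f₁ ∉ s'.erase f₁ := Finset.notMem_erase _ _
        have hef₁ : e ≠ f₁ := fun h => hes' (h ▸ hf₁)
        have := isPairing_insertPair hπ₁ he' hf' hef₁ ⟨v₁, hv₁e, hv₁f₁⟩
        rw [Finset.insert_erase hf₁, hins] at this
        exact ⟨_, this⟩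
      · -- n odd : leftover e
        intro hodd
        have hev' : Even (n - 1) := by
          rw [Nat.odd_iff] at hodd; rw [Nat.even_iff]; omega
        obtain ⟨π, hπ⟩ := ((IH _ hlt) s' hcard' hlinks').1 hev'
        exact ⟨e, he, hre, π, hπ⟩
    · -- two classes
      obtain ⟨h₀, hh₀s, hh₀cl⟩ : ∃ h₀ ∈ s', h₀ ∉ cl₁ := by
        by_contra hco
        push_neg at hco
        exact hcl (Finset.Subset.antisymm (Finset.filter_subset _ _) hco)
      obtain ⟨g₂, hg₂, hchain₂, hshg₂⟩ := factA h₀ hh₀s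
      obtain ⟨v₂, hv₂g₂, hv₂e⟩ := hshg₂
      set cl₂ := s'.filter (EChain s' h₀) with hcl₂def
      have hg₂cl : g₂ ∈ cl₂ := Finset.mem_filter.mpr ⟨hg₂, hchain₂⟩
      have hlink₂ : Linked cl₂ := linked_filter
      have hv12 : v₁ ≠ v₂ := by
        rintro rfl
        refine hh₀cl (Finset.mem_filter.mpr ⟨hh₀s, ?_⟩)
        exact (hchain₁.trans (Relation.ReflTransGen.single
          ⟨hg₁, hg₂, v₁, hv₁g₁, hv₂g₂⟩)).trans hchain₂.symm
      have hee : e = s(v₁, v₂) := (Sym2.mem_and_mem_iff hv12).mp ⟨hv₁e, hv₂e⟩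
      have hdisj : Disjoint cl₁ cl₂ := by
        rw [Finset.disjoint_left]
        intro x hx1 hx2
        rw [hcl₁def, Finset.mem_filter] at hx1
        rw [hcl₂def, Finset.mem_filter] at hx2
        exact hh₀cl (Finset.mem_filter.mpr ⟨hh₀s, (hx1.2.trans hx2.2.symm).trans .refl⟩)
      have hunion : cl₁ ∪ cl₂ = s' := by
        refine Finset.Subset.antisymm
          (Finset.union_subset (Finset.filter_subset _ _) (Finset.filter_subset _ _)) ?_
        intro f hf
        obtain ⟨g, hg, hchg, w, hwg, hwe⟩ := factA f hf
        rw [hee, Sym2.mem_iff] at hwe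
        rcases hwe with rfl | rfl
        · refine Finset.mem_union_left _ (Finset.mem_filter.mpr ⟨hf, ?_⟩)
          exact (hchain₁.trans (Relation.ReflTransGen.single
            ⟨hg₁, hg, w, hv₁g₁, hwg⟩)).trans hchg.symm
        · refine Finset.mem_union_right _ (Finset.mem_filter.mpr ⟨hf, ?_⟩)
          exact (hchain₂.trans (Relation.ReflTransGen.single
            ⟨hg₂, hg, w, hv₂g₂, hwg⟩)).trans hchg.symm
      -- symmetric helper
      have SYM : ∀ (c₁ c₂ : Finset (Sym2 V)) (w₁ w₂ : V) (k₁ k₂ : Sym2 V),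
          c₁ ∪ c₂ = s' → Disjoint c₁ c₂ → Linked c₁ → Linked c₂ →
          k₁ ∈ c₁ → w₁ ∈ k₁ → k₂ ∈ c₂ → w₂ ∈ k₂ → w₁ ∈ e → w₂ ∈ e →
          (Odd c₁.card → Even c₂.card → ∃ π, IsPairing π s) ∧
          (Odd c₁.card → Odd c₂.card →
            ∃ f, f ∈ s ∧ w₁ ∈ f ∧ ∃ π, IsPairing π (s.erase f)) := by
        intro c₁ c₂ w₁ w₂ k₁ k₂ hun hdis hl₁ hl₂ hk₁ hw₁ hk₂ hw₂ hw₁e hw₂e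
        have hc₁s : c₁ ⊆ s' := hun ▸ Finset.subset_union_left
        have hc₂s : c₂ ⊆ s' := hun ▸ Finset.subset_union_right
        have hcc : c₁.card + c₂.card = n - 1 := by
          rw [← Finset.card_union_of_disjoint hdis, hun, hcard']
        have hlt₁ : c₁.card < n := by
          have := Finset.card_le_card hc₁s; omega
        have hlt₂ : c₂.card < n := by
          have := Finset.card_le_card hc₂s; omega
        have hmem : ∀ x, x ∈ s ↔ x = e ∨ x ∈ c₁ ∨ x ∈ c₂ := by
          intro x
          rw [← hins, Finset.mem_insert, ← hun, Finset.mem_union]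
        have hdis' : ∀ x, x ∈ c₁ → x ∈ c₂ → False := fun x h1 h2 =>
          Finset.disjoint_left.mp hdis h1 h2
        have hec₁ : e ∉ c₁ := fun h => hes' (hc₁s h)
        have hec₂ : e ∉ c₂ := fun h => hes' (hc₂s h)
        constructor
        · -- c₁ odd, c₂ even
          intro ho₁ he₂
          obtain ⟨f₁, hf₁, hw₁f₁, π₁, hπ₁⟩ :=
            ((IH _ hlt₁) c₁ rfl hl₁).2 ho₁ w₁ ⟨k₁, hk₁, hw₁⟩
          obtain ⟨π₂, hπ₂⟩ := ((IH _ hlt₂) c₂ rfl hl₂).1 he₂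
          have hd2 : Disjoint (c₁.erase f₁) c₂ :=
            Finset.disjoint_of_subset_left (Finset.erase_subset _ _) hdis
          have hu := isPairing_union hπ₁ hπ₂ hd2
          have hf₁c₂ : f₁ ∉ c₂ := fun h => hdis' _ hf₁ h
          have hf₁u : f₁ ∉ c₁.erase f₁ ∪ c₂ := fun h =>
            (Finset.mem_union.mp h).elim (Finset.notMem_erase _ _) hf₁c₂
          have heu : e ∉ c₁.erase f₁ ∪ c₂ := fun h =>
            (Finset.mem_union.mp h).elim
              (fun h' => hec₁ (Finset.mem_of_mem_erase h')) hec₂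
          have hef₁ : e ≠ f₁ := fun h => hec₁ (h ▸ hf₁)
          have := isPairing_insertPair hu heu hf₁u hef₁ ⟨w₁, hw₁e, hw₁f₁⟩
          have hEq : insert e (insert f₁ (c₁.erase f₁ ∪ c₂)) = s := by
            rw [← Finset.insert_union, Finset.insert_erase hf₁, hun, hins]
          rw [hEq] at this
          exact ⟨_, this⟩
        · -- both odd
          intro ho₁ ho₂
          obtain ⟨f₁, hf₁, hw₁f₁, π₁, hπ₁⟩ :=
            ((IH _ hlt₁) c₁ rfl hl₁).2 ho₁ w₁ ⟨k₁, hk₁, hw₁⟩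
          obtain ⟨f₂, hf₂, hw₂f₂, π₂, hπ₂⟩ :=
            ((IH _ hlt₂) c₂ rfl hl₂).2 ho₂ w₂ ⟨k₂, hk₂, hw₂⟩
          have hd2 : Disjoint (c₁.erase f₁) (c₂.erase f₂) :=
            Finset.disjoint_of_subset_left (Finset.erase_subset _ _)
              (Finset.disjoint_of_subset_right (Finset.erase_subset _ _) hdis)
          have hu := isPairing_union hπ₁ hπ₂ hd2
          have hf₂u : f₂ ∉ c₁.erase f₁ ∪ c₂.erase f₂ := fun h =>
            (Finset.mem_union.mp h).elim
              (fun h' => hdis' _ (Finset.mem_of_mem_erase h') hf₂)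
              (Finset.notMem_erase _ _)
          have heu : e ∉ c₁.erase f₁ ∪ c₂.erase f₂ := fun h =>
            (Finset.mem_union.mp h).elim
              (fun h' => hec₁ (Finset.mem_of_mem_erase h'))
              (fun h' => hec₂ (Finset.mem_of_mem_erase h'))
          have hef₂ : e ≠ f₂ := fun h => hec₂ (h ▸ hf₂)
          have hP := isPairing_insertPair hu heu hf₂u hef₂ ⟨w₂, hw₂e, hw₂f₂⟩
          have hef₁ : e ≠ f₁ := fun h => hec₁ (h ▸ hf₁)
          have hf₁₂ : f₁ ≠ f₂ := fun h => hdis' _ hf₁ (h ▸ hf₂)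
          have hf₂c₁ : f₂ ∉ c₁ := fun h => hdis' _ h hf₂
          have hEq : insert e (insert f₂ (c₁.erase f₁ ∪ c₂.erase f₂)) = s.erase f₁ := by
            ext x
            simp only [Finset.mem_insert, Finset.mem_union, Finset.mem_erase, hmem]
            constructor
            · rintro (rfl | rfl | ⟨hx1, hx2⟩ | ⟨hx1, hx2⟩)
              · exact ⟨hef₁, Or.inl rfl⟩
              · exact ⟨hf₁₂.symm, Or.inr (Or.inr hf₂)⟩
              · exact ⟨hx1, Or.inr (Or.inl hx2)⟩
              · exact ⟨fun h => hdis' _ (h ▸ hf₁) hx2, Or.inr (Or.inr hx2)⟩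
            · rintro ⟨hx1, rfl | hx2 | hx2⟩
              · exact Or.inl rfl
              · exact Or.inr (Or.inr (Or.inl ⟨hx1, hx2⟩))
              · by_cases hxf₂ : x = f₂
                · exact Or.inr (Or.inl hxf₂)
                · exact Or.inr (Or.inr (Or.inr ⟨hxf₂, hx2⟩))
          rw [hEq] at hP
          refine ⟨f₁, ?_, hw₁f₁, _, hP⟩
          exact Finset.mem_of_mem_erase (hs' ▸ hc₁s hf₁)
      constructor
      · -- n even
        intro hev
        have hpar : Odd cl₁.card ∧ Even cl₂.card ∨ Even cl₁.card ∧ Odd cl₂.card := by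
          have hcc : cl₁.card + cl₂.card = n - 1 := by
            rw [← Finset.card_union_of_disjoint hdisj, hunion, hcard']
          rw [Nat.even_iff] at hev
          rcases Nat.even_or_odd cl₁.card with h | h <;>
            [right; left] <;>
            refine ⟨h, ?_⟩ <;>
            first
              | (rw [Nat.odd_iff]; rw [Nat.even_iff] at h; omega)
              | (rw [Nat.even_iff]; rw [Nat.odd_iff] at h; omega)
        rcases hpar with ⟨h1, h2⟩ | ⟨h1, h2⟩
        · exact (SYM cl₁ cl₂ v₁ v₂ g₁ g₂ hunion hdisj hlink₁ hlink₂
            hg₁cl hv₁g₁ hg₂cl hv₂g₂ hv₁e hv₂e).1 h1 h2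
        · exact (SYM cl₂ cl₁ v₂ v₁ g₂ g₁ (by rw [Finset.union_comm]; exact hunion : cl₂ ∪ cl₁ = s') hdisj.symm
            hlink₂ hlink₁ hg₂cl hv₂g₂ hg₁cl hv₁g₁ hv₂e hv₁e).1 h2 h1
      · -- n odd
        intro hodd
        have hcc : cl₁.card + cl₂.card = n - 1 := by
          rw [← Finset.card_union_of_disjoint hdisj, hunion, hcard']
        rcases Nat.even_or_odd cl₁.card with h1 | h1
        · -- both even
          have h2 : Even cl₂.card := by
            rw [Nat.odd_iff] at hodd; rw [Nat.even_iff] at h1 ⊢; omega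
          have hlt₁ : cl₁.card < n := by
            have := Finset.card_le_card (hunion ▸ Finset.subset_union_left : cl₁ ⊆ s')
            rw [hcard'] at this; omega
          have hlt₂ : cl₂.card < n := by
            have := Finset.card_le_card (hunion ▸ Finset.subset_union_right : cl₂ ⊆ s')
            rw [hcard'] at this; omega
          obtain ⟨π₁, hπ₁⟩ := ((IH _ hlt₁) cl₁ rfl hlink₁).1 h1
          obtain ⟨π₂, hπ₂⟩ := ((IH _ hlt₂) cl₂ rfl hlink₂).1 h2
          have hu := isPairing_union hπ₁ hπ₂ hdisj
          rw [hunion] at hu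
          exact ⟨e, he, hre, _, hu⟩
        · have h2 : Odd cl₂.card := by
            rw [Nat.odd_iff] at hodd h1 ⊢; omega
          have hrv : r = v₁ ∨ r = v₂ := by
            rw [hee, Sym2.mem_iff] at hre; exact hre
          rcases hrv with rfl | rfl
          · exact (SYM cl₁ cl₂ r v₂ g₁ g₂ hunion hdisj hlink₁ hlink₂
              hg₁cl hv₁g₁ hg₂cl hv₂g₂ hv₁e hv₂e).2 h1 h2
          · exact (SYM cl₂ cl₁ r v₁ g₂ g₁ (by rw [Finset.union_comm]; exact hunion : cl₂ ∪ cl₁ = s') hdisj.symm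
              hlink₂ hlink₁ hg₂cl hv₂g₂ hg₁cl hv₁g₁ hv₂e hv₁e).2 h2 h1
  refine ⟨?_, ?_⟩
  · intro hev
    obtain ⟨e, he⟩ := Finset.card_pos.mp (hcard ▸ hpos)
    exact (MAIN e he e.out.1 (Sym2.out_fst_mem e)).1 hev
  · rintro hodd r ⟨e, he, hre⟩
    exact (MAIN e he r hre).2 hodd


lemma walk_chain {G : SimpleGraph V} {s : Finset (Sym2 V)}
    (hs : ∀ x, x ∈ s ↔ x ∈ G.edgeSet) {u w : V} (p : G.Walk u w) :
    ∀ {e f : Sym2 V}, e ∈ s → f ∈ s → u ∈ e → w ∈ f → EChain s e f := by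
  induction p with
  | nil =>
      intro e f he hf hu hw
      exact Relation.ReflTransGen.single ⟨he, hf, _, hu, hw⟩
  | @cons a b c h p ih =>
      intro e f he hf hu hw
      have hg : s(a, b) ∈ s := (hs _).mpr (G.mem_edgeSet.mpr h)
      exact Relation.ReflTransGen.head ⟨he, hg, a, hu, by simp⟩
        (ih hg hf (by simp) hw)

lemma linked_of_connected {G : SimpleGraph V} (hc : G.Connected) {s : Finset (Sym2 V)}
    (hs : ∀ x, x ∈ s ↔ x ∈ G.edgeSet) : Linked s := by
  intro a ha b hb
  induction a using Sym2.ind with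
  | _ u₁ u₂ =>
  induction b using Sym2.ind with
  | _ w₁ w₂ =>
  obtain ⟨p⟩ := hc.preconnected u₁ w₁
  exact walk_chain hs p ha hb (by simp) (by simp)

end NPM

theorem stmt15 {V : Type*} [Fintype V] (G : SimpleGraph V) (hc : G.Connected)
    (h3 : 3 ≤ G.edgeSet.ncard) (hodd : Odd G.edgeSet.ncard) :
    ∃ M : (G.lineGraph).Subgraph, M.IsMatching ∧ (M.verts)ᶜ.ncard = 1 := by
  classical
  have hfin : G.edgeSet.Finite := Set.toFinite _
  set s : Finset (Sym2 V) := hfin.toFinset with hsdef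
  have hmem : ∀ x, x ∈ s ↔ x ∈ G.edgeSet := fun x => hfin.mem_toFinset
  have hlink : NPM.Linked s := NPM.linked_of_connected hc hmem
  have hcard : G.edgeSet.ncard = s.card := Set.ncard_eq_toFinset_card _ hfin
  have hodd' : Odd s.card := hcard ▸ hodd
  have hpos : 0 < s.card := by
    rw [← hcard]; omega
  obtain ⟨e₀, he₀⟩ := Finset.card_pos.mp hpos
  obtain ⟨f, hf, hrf, π, hπ⟩ :=
    (NPM.key s.card s rfl hlink).2 hodd' e₀.out.1 ⟨e₀, he₀, Sym2.out_fst_mem e₀⟩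
  have hfE : f ∈ G.edgeSet := (hmem f).mp hf
  set t := s.erase f with htdef
  have hsub : ∀ (x : G.edgeSet), (x : Sym2 V) ∈ s := fun x => (hmem _).mpr x.2
  refine ⟨⟨{x : G.edgeSet | (x : Sym2 V) ≠ f},
      fun a b => (a : Sym2 V) ∈ t ∧ (b : Sym2 V) ∈ t ∧ π (a : Sym2 V) = (b : Sym2 V),
      ?_, ?_, ?_⟩, ?_, ?_⟩
  · -- adj_sub
    rintro a b ⟨ha, hb, hab⟩
    have p := hπ _ ha
    refine SimpleGraph.lineGraph_adj_iff_exists.mpr ⟨?_, ?_⟩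
    · intro h
      exact p.2.2.1 (by rw [hab, h])
    · obtain ⟨v, hv1, hv2⟩ := p.2.2.2
      exact ⟨v, hv1, hab ▸ hv2⟩
  · -- edge_vert
    rintro a b ⟨ha, _, _⟩
    exact (Finset.mem_erase.mp ha).1
  · -- symm
    refine ⟨?_⟩
    rintro a b ⟨ha, hb, hab⟩
    refine ⟨hb, ha, ?_⟩
    have p := hπ _ ha
    rw [← hab, p.2.1]
  · -- matching
    intro a ha
    have hat : (a : Sym2 V) ∈ t := Finset.mem_erase.mpr ⟨ha, hsub a⟩
    have p := hπ _ hat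
    have hπE : π (a : Sym2 V) ∈ G.edgeSet :=
      (hmem _).mp (Finset.mem_of_mem_erase p.1)
    refine ⟨⟨π (a : Sym2 V), hπE⟩, ⟨hat, p.1, rfl⟩, ?_⟩
    rintro c ⟨_, _, hcc⟩
    exact Subtype.ext hcc.symm
  · -- complement count
    have : ({x : G.edgeSet | (x : Sym2 V) ≠ f} : Set G.edgeSet)ᶜ
        = {(⟨f, hfE⟩ : G.edgeSet)} := by
      ext x
      simp [Subtype.ext_iff]
    rw [this, Set.ncard_singleton]
end
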